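/- arXiv:2504.05798 — 12 statements merged into one kernel-verified Lean document; each statement's English description precedes it below -/
import Mathlib

section
/- Let E be a real normed vector space, h > 0, and let t_k = k·h for integers k. Let 0 ≤ k̲ < k̄ and let x* : [t_k̲, t_k̄] → E be p-times differentiable with 1 ≤ p ≤ k̄ − k̲, and set σ_p := sup_{t ∈ [t_k̲, t_k̄]} ‖(x*)^{(p)}(t)‖. Then for every integer k with k̲ + p ≤ k ≤ k̄, one has ‖x*(t_k) − Σ_{i=1}^{p} (−1)^{i−1} binom(p,i) x*(t_{k−i})‖ ≤ h^p · σ_p. -/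
section aux
variable {E : Type*} [NormedAddCommGroup E] [NormedSpace ℝ E]

/-- Iterated forward difference with step `h`. -/
def lagG (h : ℝ) (f : ℝ → E) : ℕ → ℝ → E
  | 0, t => f t
  | (m+1), t => lagG h f m (t + h) - lagG h f m t

lemma lagG_eq (h : ℝ) (f : ℝ → E) (m : ℕ) (t : ℝ) :
    lagG h f m t
      = ∑ j ∈ Finset.range (m+1),
          ((-1:ℝ)^m * (-1:ℝ)^j * (m.choose j : ℝ)) • f (t + j * h) := by
  induction m generalizing t with
  | zero => simp [lagG]
  | succ m ih =>
    have hA : ∀ j ∈ Finset.range (m+1),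
        ((-1:ℝ)^(m+1) * (-1:ℝ)^(j+1) * ((m+1).choose (j+1) : ℝ)) • f (t + (j+1 : ℕ) * h)
          = ((-1:ℝ)^m * (-1:ℝ)^j * (m.choose j : ℝ)) • f (t + h + j * h)
            - ((-1:ℝ)^m * (-1:ℝ)^(j+1) * (m.choose (j+1) : ℝ)) • f (t + (j+1 : ℕ) * h) := by
      intro j _
      have harg : t + h + (j:ℝ) * h = t + ((j:ℕ)+1 : ℕ) * h := by push_cast; ring
      rw [harg, ← sub_smul]
      congr 1
      push_cast [Nat.choose_succ_succ]
      ring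
    have e1 : lagG h f (m+1) t = lagG h f m (t + h) - lagG h f m t := rfl
    rw [e1, ih, ih,
      Finset.sum_range_succ' (fun j =>
        ((-1:ℝ)^(m+1) * (-1:ℝ)^j * ((m+1).choose j : ℝ)) • f (t + j * h)) (m+1),
      Finset.sum_range_succ' (fun j =>
        ((-1:ℝ)^m * (-1:ℝ)^j * (m.choose j : ℝ)) • f (t + j * h)) m,
      Finset.sum_congr rfl hA, Finset.sum_sub_distrib]
    have hz : ∑ j ∈ Finset.range (m+1),
        ((-1:ℝ)^m * (-1:ℝ)^(j+1) * (m.choose (j+1) : ℝ)) • f (t + (j+1 : ℕ) * h)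
        = ∑ j ∈ Finset.range m,
        ((-1:ℝ)^m * (-1:ℝ)^(j+1) * (m.choose (j+1) : ℝ)) • f (t + (j+1 : ℕ) * h) := by
      rw [Finset.sum_range_succ]
      simp [Nat.choose_succ_self]
    rw [hz]
    simp only [Nat.cast_zero, zero_mul, add_zero, Nat.choose_zero_right, Nat.cast_one,
      mul_one, pow_zero]
    rw [pow_succ, mul_neg_one, neg_smul]
    abel

lemma lagG_deriv (h : ℝ) (hh : 0 ≤ h) (a b : ℝ) (d : ℕ → ℝ → E) (i : ℕ)
    (hder : ∀ t ∈ Set.Icc a b, HasDerivWithinAt (d i) (d (i+1) t) (Set.Icc a b) t)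
    (m : ℕ) :
    ∀ t ∈ Set.Icc a (b - m * h),
      HasDerivWithinAt (lagG h (d i) m) (lagG h (d (i+1)) m t)
        (Set.Icc a (b - m * h)) t := by
  induction m with
  | zero =>
    intro t ht
    simpa [lagG] using hder t (by simpa using ht)
  | succ m ih =>
    intro t ht
    obtain ⟨ht1, ht2⟩ := ht
    have hsub : Set.Icc a (b - (m+1 : ℕ) * h) ⊆ Set.Icc a (b - m * h) := by
      apply Set.Icc_subset_Icc le_rfl
      push_cast; nlinarith
    have hcast : (m+1 : ℕ) * h = (m : ℝ) * h + h := by push_cast; ring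
    have h1 : HasDerivWithinAt (fun u => lagG h (d i) m (u + h))
        ((1:ℝ) • lagG h (d (i+1)) m (t + h)) (Set.Icc a (b - (m+1 : ℕ) * h)) t := by
      have hmem : t + h ∈ Set.Icc a (b - m * h) := by
        constructor <;> [linarith; · rw [hcast] at ht2; linarith]
      have houter := ih (t + h) hmem
      have hinner : HasDerivWithinAt (fun u : ℝ => u + h) 1
          (Set.Icc a (b - (m+1 : ℕ) * h)) t :=
        (hasDerivWithinAt_id t _).add_const h
      exact HasDerivWithinAt.scomp t houter hinner (by
        intro u hu
        simp only [Set.mem_Icc] at hu ⊢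
        rw [hcast] at hu
        exact ⟨by linarith [hu.1], by linarith [hu.2]⟩)
    have h2 := (ih t ⟨ht1, by rw [hcast] at ht2; linarith⟩).mono hsub
    have := (h1.sub h2)
    simp only [one_smul] at this
    exact this

lemma lagG_bound (h : ℝ) (hh : 0 < h) (a b : ℝ) (d : ℕ → ℝ → E) (p : ℕ)
    (hder : ∀ i < p, ∀ t ∈ Set.Icc a b,
      HasDerivWithinAt (d i) (d (i+1) t) (Set.Icc a b) t)
    (σp : ℝ) (hσ : ∀ t ∈ Set.Icc a b, ‖d p t‖ ≤ σp)
    (m : ℕ) (hm : m ≤ p) :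
    ∀ t ∈ Set.Icc a (b - m * h), ‖lagG h (d (p - m)) m t‖ ≤ h ^ m * σp := by
  induction m with
  | zero =>
    intro t ht
    simpa [lagG] using hσ t (by simpa using ht)
  | succ m ih =>
    intro t ht
    obtain ⟨ht1, ht2⟩ := ht
    have hm' : m ≤ p := Nat.le_of_succ_le hm
    have hi : p - (m+1) < p := by omega
    have hi1 : p - (m+1) + 1 = p - m := by omega
    have hcast : (m+1 : ℕ) * h = (m : ℝ) * h + h := by push_cast; ring
    have hsub : Set.Icc t (t + h) ⊆ Set.Icc a (b - m * h) := by
      apply Set.Icc_subset_Icc ht1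
      rw [hcast] at ht2; linarith
    have hderiv' : ∀ u ∈ Set.Icc t (t + h),
        HasDerivWithinAt (lagG h (d (p - (m+1))) m)
          (lagG h (d (p - m)) m u) (Set.Icc t (t + h)) u := by
      intro u hu
      have := (lagG_deriv h hh.le a b d (p - (m+1)) (hder _ hi) m u (hsub hu)).mono hsub
      rwa [hi1] at this
    have hbound : ∀ u ∈ Set.Icc t (t + h), ‖lagG h (d (p - m)) m u‖ ≤ h ^ m * σp := by
      intro u hu
      exact ih hm' u (hsub hu)
    have hmem1 : t ∈ Set.Icc t (t + h) := ⟨le_refl t, by linarith⟩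
    have hmem2 : t + h ∈ Set.Icc t (t + h) := ⟨by linarith, le_refl _⟩
    have := (convex_Icc t (t + h)).norm_image_sub_le_of_norm_hasDerivWithin_le
      hderiv' hbound hmem1 hmem2
    have e1 : lagG h (d (p - (m+1))) (m+1) t
        = lagG h (d (p - (m+1))) m (t + h) - lagG h (d (p - (m+1))) m t := rfl
    rw [e1]
    calc ‖lagG h (d (p - (m+1))) m (t + h) - lagG h (d (p - (m+1))) m t‖
        ≤ h ^ m * σp * ‖t + h - t‖ := this
      _ = h ^ (m+1) * σp := by
          rw [show t + h - t = h by ring, Real.norm_eq_abs, abs_of_pos hh]; ring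

end aux

/-- Lagrange-extrapolation error bound: if `x*` is `p`-times differentiable on
`[t_k̲, t_k̄]` with `p`-th derivative bounded by `σp`, then the extrapolation of
`x*(t_k)` from the `p` previous sample points has error at most `h^p · σp`. -/
theorem sharp_lagrange_extrapolation_error
    {E : Type*} [NormedAddCommGroup E] [NormedSpace ℝ E]
    (h : ℝ) (hh : 0 < h)
    (kl kb : ℤ) (hkl : 0 ≤ kl) (hklkb : kl < kb)
    (p : ℕ) (hp : 1 ≤ p) (hpk : (p : ℤ) ≤ kb - kl)
    (xs : ℝ → E) (d : ℕ → ℝ → E)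
    (hd0 : d 0 = xs)
    (hderiv : ∀ i < p, ∀ t ∈ Set.Icc ((kl : ℝ) * h) ((kb : ℝ) * h),
      HasDerivWithinAt (d i) (d (i + 1) t) (Set.Icc ((kl : ℝ) * h) ((kb : ℝ) * h)) t)
    (σp : ℝ)
    (hσ : ∀ t ∈ Set.Icc ((kl : ℝ) * h) ((kb : ℝ) * h), ‖d p t‖ ≤ σp)
    (k : ℤ) (hk1 : kl + p ≤ k) (hk2 : k ≤ kb) :
    ‖xs ((k : ℝ) * h) - ∑ i ∈ Finset.Icc 1 p,
        ((-1 : ℝ) ^ (i - 1) * (p.choose i : ℝ)) • xs (((k - i : ℤ) : ℝ) * h)‖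
      ≤ h ^ p * σp := by
  set t0 : ℝ := ((k : ℝ) - p) * h with ht0
  have ht0mem : t0 ∈ Set.Icc ((kl : ℝ) * h) ((kb : ℝ) * h - p * h) := by
    rw [ht0]
    constructor
    · apply mul_le_mul_of_nonneg_right _ hh.le
      have : (kl : ℝ) + p ≤ k := by exact_mod_cast hk1
      linarith
    · have hk2' : (k : ℝ) ≤ kb := by exact_mod_cast hk2
      nlinarith
  have hb := lagG_bound h hh ((kl : ℝ) * h) ((kb : ℝ) * h) d p hderiv σp hσ p le_rfl t0 ht0mem
  rw [Nat.sub_self, hd0, lagG_eq] at hb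
  -- rewrite the sum
  have key : xs ((k : ℝ) * h) - ∑ i ∈ Finset.Icc 1 p,
        ((-1 : ℝ) ^ (i - 1) * (p.choose i : ℝ)) • xs (((k - i : ℤ) : ℝ) * h)
      = ∑ j ∈ Finset.range (p+1),
          ((-1:ℝ)^p * (-1:ℝ)^j * (p.choose j : ℝ)) • xs (t0 + j * h) := by
    have refl := (Finset.sum_range_reflect (fun j =>
      ((-1:ℝ)^p * (-1:ℝ)^j * (p.choose j : ℝ)) • xs (t0 + j * h)) (p+1))
    rw [← refl]
    have hterm : ∀ j ∈ Finset.range (p+1),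
        ((-1:ℝ)^p * (-1:ℝ)^(p + 1 - 1 - j) * (p.choose (p + 1 - 1 - j) : ℝ))
            • xs (t0 + (p + 1 - 1 - j : ℕ) * h)
        = ((-1:ℝ)^j * (p.choose j : ℝ)) • xs (((k - j : ℤ) : ℝ) * h) := by
      intro j hj
      have hjp : j ≤ p := by simpa [Nat.lt_succ_iff] using hj
      have h1 : p + 1 - 1 - j = p - j := by omega
      rw [h1]
      have hsign : (-1:ℝ)^p * (-1:ℝ)^(p - j) = (-1:ℝ)^j := by
        rw [← pow_add]
        have : p + (p - j) = 2 * (p - j) + j + (j + (p - j) - p) := by omega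
        rw [this, pow_add, pow_add, pow_mul]
        have : j + (p - j) - p = 0 := by omega
        simp [this]
      have hch : (p.choose (p - j) : ℝ) = (p.choose j : ℝ) := by
        rw [Nat.choose_symm hjp]
      have harg : t0 + ((p - j : ℕ) : ℝ) * h = ((k - j : ℤ) : ℝ) * h := by
        rw [ht0]
        push_cast [Nat.cast_sub hjp]
        ring
      rw [hsign, hch, harg]
    rw [Finset.sum_congr rfl hterm, Finset.sum_range_succ' (fun j =>
      ((-1:ℝ)^j * (p.choose j : ℝ)) • xs (((k - j : ℤ) : ℝ) * h)) p]
    have hIcc : ∑ i ∈ Finset.Icc 1 p,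
        ((-1 : ℝ) ^ (i - 1) * (p.choose i : ℝ)) • xs (((k - i : ℤ) : ℝ) * h)
      = ∑ j ∈ Finset.range p,
        ((-1 : ℝ) ^ j * (p.choose (j+1) : ℝ)) • xs (((k - (j+1) : ℤ) : ℝ) * h) := by
      rw [← Finset.Ico_add_one_right_eq_Icc, Finset.sum_Ico_eq_sum_range]
      have hr : p + 1 - 1 = p := by omega
      rw [hr]
      apply Finset.sum_congr rfl
      intro j _
      have h1 : 1 + j - 1 = j := by omega
      have h2 : 1 + j = j + 1 := by omega
      rw [h1, h2]
      push_cast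
      ring_nf
    rw [hIcc]
    have hneg : ∀ j ∈ Finset.range p,
        ((-1:ℝ)^(j+1) * (p.choose (j+1) : ℝ)) • xs (((k - (j+1:ℕ) : ℤ) : ℝ) * h)
        = -(((-1 : ℝ) ^ j * (p.choose (j+1) : ℝ)) • xs (((k - (j+1) : ℤ) : ℝ) * h)) := by
      intro j _
      rw [← neg_smul]
      norm_num [pow_succ]
    rw [Finset.sum_congr rfl hneg, Finset.sum_neg_distrib]
    push_cast
    simp
    abel
  rw [key]
  exact hb
end

section
/- Let E be a real normed vector space (e.g., a Banach space), let p ≥ 1 be an integer, and let φ : ℝ → E be p-times continuously differentiable. Then ∫_{[0,1]^p} φ^{(p)}(s_1 + s_2 + ⋯ + s_p) ds = Σ_{i=0}^{p} (−1)^{p−i} binom(p,i) φ(i), where the integral is over the unit cube [0,1]^p with respect to Lebesgue measure. -/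
open MeasureTheory

lemma key_fd {E : Type*} [NormedAddCommGroup E] [NormedSpace ℝ E] [CompleteSpace E] :
    ∀ (p : ℕ) (ψ : ℝ → E), ContDiff ℝ (p : ℕ∞) ψ → ∀ x : ℝ,
    ∫ s : Fin p → ℝ in Set.Icc 0 1, iteratedDeriv p ψ (x + ∑ i, s i)
      = (fwdDiff (1:ℝ))^[p] ψ x := by
  intro p
  induction p with
  | zero =>
    intro ψ hψ x
    simp only [Finset.univ_eq_empty, Finset.sum_empty, iteratedDeriv_zero, add_zero,
      Function.iterate_zero, id]
    rw [setIntegral_const]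
    have : (volume (Set.Icc (0 : Fin 0 → ℝ) 1)).toReal = 1 := by
      simp [Real.volume_Icc_pi]
    rw [measureReal_def, this, one_smul]
  | succ p ih =>
    intro ψ hψ x
    have hψ1 : ContDiff ℝ ((p:ℕ∞)+1) ψ := by exact_mod_cast hψ
    have hdiff : Differentiable ℝ ψ := (contDiff_succ_iff_deriv.mp hψ1).1
    have hd : ContDiff ℝ (p : ℕ∞) (deriv ψ) := (contDiff_succ_iff_deriv.mp hψ1).2.2
    have hcd : Continuous (iteratedDeriv (p+1) ψ) :=
      hψ.continuous_iteratedDeriv _ (by exact_mod_cast le_refl _)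
    -- change variables
    have hmp := (volume_preserving_piFinSuccAbove (fun _ : Fin (p+1) => ℝ) 0).symm
    set e : ℝ × (Fin p → ℝ) ≃ᵐ (Fin (p+1) → ℝ) :=
      (MeasurableEquiv.piFinSuccAbove (fun _ => ℝ) 0).symm with he
    have hpre : e ⁻¹' (Set.Icc 0 1) = Set.Icc 0 1 ×ˢ Set.Icc 0 1 := by
      ext ⟨t, s⟩
      simp only [he, Set.mem_preimage, Set.mem_Icc, Set.mem_prod, Pi.le_def,
        MeasurableEquiv.piFinSuccAbove_symm_apply, Fin.insertNthEquiv, Equiv.coe_fn_mk,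
        Fin.insertNth_zero, Fin.forall_fin_succ, Fin.cons_zero, Fin.cons_succ]
      tauto
    rw [← hmp.setIntegral_preimage_emb (MeasurableEquiv.measurableEmbedding _)
      (fun y => iteratedDeriv (p+1) ψ (x + ∑ i, y i)) _, hpre]
    have hsum : ∀ (t : ℝ) (s : Fin p → ℝ), ∑ i, e (t, s) i = t + ∑ i, s i := by
      intro t s
      simp [he, MeasurableEquiv.piFinSuccAbove_symm_apply, Fin.insertNthEquiv,
        Fin.insertNth_zero, Fin.sum_cons]
    have hcd' : Continuous (iteratedDeriv p (deriv ψ)) :=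
      hd.continuous_iteratedDeriv _ (by exact_mod_cast le_refl _)
    have hfun : (fun z : ℝ × (Fin p → ℝ) => iteratedDeriv (p+1) ψ (x + ∑ i, e z i))
        = fun z => iteratedDeriv p (deriv ψ) ((x + z.1) + ∑ i, z.2 i) := by
      funext z
      obtain ⟨t, s⟩ := z
      rw [hsum, iteratedDeriv_succ']
      ring_nf
    rw [hfun]
    have hint : IntegrableOn (fun z : ℝ × (Fin p → ℝ) =>
        iteratedDeriv p (deriv ψ) ((x + z.1) + ∑ i, z.2 i)) (Set.Icc 0 1 ×ˢ Set.Icc 0 1) := by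
      rw [Set.Icc_prod_Icc]
      apply Continuous.integrableOn_Icc
      exact hcd'.comp (by fun_prop)
    rw [Measure.volume_eq_prod, setIntegral_prod _ hint]
    have hinner : ∀ t : ℝ, (∫ s : Fin p → ℝ in Set.Icc 0 1,
        iteratedDeriv p (deriv ψ) ((x + t) + ∑ i, s i)) = (fwdDiff (1:ℝ))^[p] (deriv ψ) (x + t) :=
      fun t => ih (deriv ψ) hd (x + t)
    simp only [hinner]
    have hdc : Continuous (deriv ψ) := hd.continuous
    have key1 : ∀ c : ℝ, (∫ t in Set.Icc (0:ℝ) 1, deriv ψ (c + t)) = ψ (c+1) - ψ c := by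
      intro c
      rw [MeasureTheory.integral_Icc_eq_integral_Ioc, ← intervalIntegral.integral_of_le zero_le_one,
        intervalIntegral.integral_comp_add_left (fun u => deriv ψ u) c,
        intervalIntegral.integral_deriv_eq_sub (fun u _ => hdiff.differentiableAt)
          (hdc.intervalIntegrable _ _)]
      rw [add_zero]
    rw [Function.iterate_succ_apply, fwdDiff_iter_eq_sum_shift]
    simp_rw [fwdDiff_iter_eq_sum_shift, ← Int.cast_smul_eq_zsmul ℝ, nsmul_eq_mul, mul_one]
    rw [integral_finset_sum]
    · refine Finset.sum_congr rfl fun k _ => ?_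
      rw [integral_smul]
      have h2 : (∫ t in Set.Icc (0:ℝ) 1, deriv ψ (x + t + (k:ℝ)))
          = ψ ((x + k) + 1) - ψ (x + k) := by
        rw [← key1 (x + k)]
        exact setIntegral_congr_fun measurableSet_Icc (fun t _ => by congr 1; ring)
      rw [h2]
      rfl
    · intro k _
      apply Continuous.integrableOn_Icc
      exact Continuous.smul continuous_const (hdc.comp (by continuity))

/-- The `p`-th forward finite difference of a `C^p` curve `φ` at the integer
points `0, 1, …, p` equals the integral of the `p`-th derivative over the unit
cube `[0,1]^p`. -/
theorem finite_difference_integral_identity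
    {E : Type*} [NormedAddCommGroup E] [NormedSpace ℝ E] [CompleteSpace E]
    (p : ℕ) (hp : 1 ≤ p) (φ : ℝ → E) (hφ : ContDiff ℝ (p : ℕ∞) φ) :
    ∫ s : Fin p → ℝ in Set.Icc 0 1, iteratedDeriv p φ (∑ i, s i)
      = ∑ i ∈ Finset.range (p + 1),
          ((-1 : ℝ) ^ (p - i) * (p.choose i : ℝ)) • φ (i : ℝ) := by
  have hkey := key_fd p φ hφ 0
  simp only [zero_add] at hkey
  rw [hkey, fwdDiff_iter_eq_sum_shift]
  simp [← Int.cast_smul_eq_zsmul ℝ]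
end

section
/- Let E be a real normed vector space, h > 0, t_k = k·h, 0 ≤ k̲ < k̄, and let x* : [t_k̲, t_k̄] → E be p-times differentiable with σ_p := sup_{t ∈ [t_k̲, t_k̄]} ‖(x*)^{(p)}(t)‖ < ∞. Then for all integers q and k with p ≤ q and k̲ + q ≤ k ≤ k̄, one has ‖Σ_{i=0}^{q} (−1)^i binom(q,i) x*(t_{k−i})‖ ≤ 2^{q−p} · σ_p · h^p. -/
open Finset Function fwdDiff

/-- The `p`-th forward difference of a curve whose `p`-th derivative (through the chain
`d 0, d 1, …, d p`) is bounded by `σ` is bounded by `σ * h ^ p`. -/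
lemma fwdDiff_iter_bound_of_deriv
    {E : Type*} [NormedAddCommGroup E] [NormedSpace ℝ E] (h : ℝ) (hh : 0 < h) :
    ∀ (p : ℕ) (d : ℕ → ℝ → E) (A B σ : ℝ),
      (∀ i < p, ∀ t ∈ Set.Icc A B, HasDerivWithinAt (d i) (d (i + 1) t) (Set.Icc A B) t) →
      (∀ t ∈ Set.Icc A B, ‖d p t‖ ≤ σ) →
      ∀ y, A ≤ y → y + p * h ≤ B → ‖(fwdDiff h)^[p] (d 0) y‖ ≤ σ * h ^ p := by
  intro p
  induction p with
  | zero =>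
    intro d A B σ _ hσ y hy1 hy2
    simpa using hσ y ⟨hy1, by simpa using hy2⟩
  | succ p IH =>
    intro d A B σ hderiv hσ y hy1 hy2
    -- the new family of first differences
    set e : ℕ → ℝ → E := fun i t => d i (t + h) - d i t with he
    have hmaps : Set.MapsTo (fun t : ℝ => t + h) (Set.Icc A (B - h)) (Set.Icc A B) := by
      intro t ht
      simp only [Set.mem_Icc] at ht ⊢
      constructor <;> linarith [ht.1, ht.2]
    have hsub : Set.Icc A (B - h) ⊆ Set.Icc A B := by
      intro t ht; exact ⟨ht.1, by linarith [ht.2]⟩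
    have hderiv' : ∀ i < p, ∀ t ∈ Set.Icc A (B - h),
        HasDerivWithinAt (e i) (e (i + 1) t) (Set.Icc A (B - h)) t := by
      intro i hi t ht
      have h1 : HasDerivWithinAt (fun t : ℝ => d i (t + h)) (d (i + 1) (t + h))
          (Set.Icc A (B - h)) t := by
        have := (hderiv i (by omega) (t + h) (hmaps ht)).scomp (x := t)
          (h := fun t : ℝ => t + h) ((hasDerivWithinAt_id t _).add_const h) hmaps
        simpa [Function.comp_def] using this
      have h2 : HasDerivWithinAt (d i) (d (i + 1) t) (Set.Icc A (B - h)) t :=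
        (hderiv i (by omega) t (hsub ht)).mono hsub
      exact h1.sub h2
    have hσ' : ∀ t ∈ Set.Icc A (B - h), ‖e p t‖ ≤ σ * h := by
      intro t ht
      have := Convex.norm_image_sub_le_of_norm_hasDerivWithin_le
        (f := d p) (f' := d (p + 1)) (s := Set.Icc A B)
        (hderiv p (by omega) ) hσ (convex_Icc A B) (hsub ht) (hmaps ht)
      simpa [abs_of_pos hh] using this
    have key := IH e A (B - h) (σ * h) hderiv' hσ' y hy1 (by push_cast at hy2 ⊢; linarith)
    have heq : (fwdDiff h)^[p] (e 0) y = (fwdDiff h)^[p + 1] (d 0) y := by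
      rw [Function.iterate_succ_apply]
      rfl
    rw [heq] at key
    calc ‖(fwdDiff h)^[p + 1] (d 0) y‖ ≤ σ * h * h ^ p := key
      _ = σ * h ^ (p + 1) := by ring

/-- Iterated forward differences of a bounded function are bounded by `2^r` times the bound. -/
lemma fwdDiff_iter_bound_of_bound
    {E : Type*} [NormedAddCommGroup E] [NormedSpace ℝ E] (h : ℝ) (hh : 0 < h) :
    ∀ (r : ℕ) (g : ℝ → E) (A B M : ℝ),
      (∀ t ∈ Set.Icc A B, ‖g t‖ ≤ M) →
      ∀ y, A ≤ y → y + r * h ≤ B → ‖(fwdDiff h)^[r] g y‖ ≤ 2 ^ r * M := by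
  intro r
  induction r with
  | zero =>
    intro g A B M hM y hy1 hy2
    simpa using hM y ⟨hy1, by simpa using hy2⟩
  | succ r IH =>
    intro g A B M hM y hy1 hy2
    have hM' : ∀ t ∈ Set.Icc A (B - h), ‖(fwdDiff h) g t‖ ≤ 2 * M := by
      intro t ht
      have h1 := hM (t + h) ⟨by linarith [ht.1], by linarith [ht.2]⟩
      have h2 := hM t ⟨ht.1, by linarith [ht.2]⟩
      calc ‖g (t + h) - g t‖ ≤ ‖g (t + h)‖ + ‖g t‖ := norm_sub_le _ _
        _ ≤ 2 * M := by linarith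
    have key := IH ((fwdDiff h) g) A (B - h) (2 * M) hM' y hy1 (by push_cast at hy2 ⊢; linarith)
    rw [← Function.iterate_succ_apply] at key
    calc ‖(fwdDiff h)^[r + 1] g y‖ ≤ 2 ^ r * (2 * M) := key
      _ = 2 ^ (r + 1) * M := by ring

/-- A `q`-th order finite difference of a curve whose `p`-th derivative is
bounded by `σp` (with `p ≤ q`) is bounded by `2^(q−p) · σp · h^p`. -/
theorem sharp_higher_finite_difference_bound
    {E : Type*} [NormedAddCommGroup E] [NormedSpace ℝ E]
    (h : ℝ) (hh : 0 < h)
    (kl kb : ℤ) (hkl : 0 ≤ kl) (hklkb : kl < kb)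
    (p : ℕ) (hp : 1 ≤ p)
    (xs : ℝ → E) (d : ℕ → ℝ → E)
    (hd0 : d 0 = xs)
    (hderiv : ∀ i < p, ∀ t ∈ Set.Icc ((kl : ℝ) * h) ((kb : ℝ) * h),
      HasDerivWithinAt (d i) (d (i + 1) t) (Set.Icc ((kl : ℝ) * h) ((kb : ℝ) * h)) t)
    (σp : ℝ)
    (hσ : ∀ t ∈ Set.Icc ((kl : ℝ) * h) ((kb : ℝ) * h), ‖d p t‖ ≤ σp)
    (q : ℕ) (hpq : p ≤ q)
    (k : ℤ) (hk1 : kl + q ≤ k) (hk2 : k ≤ kb) :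
    ‖∑ i ∈ Finset.range (q + 1),
        ((-1 : ℝ) ^ i * (q.choose i : ℝ)) • xs (((k - i : ℤ) : ℝ) * h)‖
      ≤ 2 ^ (q - p) * σp * h ^ p := by
  set A : ℝ := (kl : ℝ) * h with hA
  set B : ℝ := (kb : ℝ) * h with hB
  set y : ℝ := ((k : ℝ) - q) * h with hy
  -- the sum is the iterated forward difference at `y`
  have hsum : ∑ i ∈ Finset.range (q + 1),
      ((-1 : ℝ) ^ i * (q.choose i : ℝ)) • xs (((k - i : ℤ) : ℝ) * h)
      = (fwdDiff h)^[q] xs y := by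
    rw [fwdDiff_iter_eq_sum_shift, ← Finset.sum_range_reflect]
    apply Finset.sum_congr rfl
    intro i hi
    simp only [Finset.mem_range] at hi
    have hiq : i ≤ q := by omega
    have h1 : q + 1 - 1 - i = q - i := by omega
    have harg : (((k - (q - i : ℕ) : ℤ) : ℝ)) * h = y + i • h := by
      rw [hy, nsmul_eq_mul]
      push_cast [Nat.cast_sub hiq]
      ring
    rw [h1, harg, Nat.choose_symm hiq, ← Int.cast_smul_eq_zsmul ℝ]
    norm_num
  rw [hsum]
  -- the p-th difference is bounded on `[A, B - p*h]`
  have hpbound : ∀ t ∈ Set.Icc A (B - p * h), ‖(fwdDiff h)^[p] xs t‖ ≤ σp * h ^ p := by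
    intro t ht
    rw [← hd0]
    exact fwdDiff_iter_bound_of_deriv h hh p d A B σp hderiv hσ t ht.1 (by linarith [ht.2])
  -- whence the q-th difference bound
  obtain ⟨r, rfl⟩ : ∃ r, q = r + p := ⟨q - p, by omega⟩
  have hqp : (fwdDiff h)^[r + p] xs y = (fwdDiff h)^[r] ((fwdDiff h)^[p] xs) y :=
    Function.iterate_add_apply _ r p xs ▸ rfl
  rw [hqp, Nat.add_sub_cancel]
  have hy1 : A ≤ y := by
    rw [hA, hy]
    have : (kl : ℝ) ≤ (k : ℝ) - (r + p : ℕ) := by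
      have : (kl : ℝ) + (r + p : ℕ) ≤ k := by exact_mod_cast hk1
      linarith
    nlinarith
  have hy2 : y + (r : ℕ) * h ≤ B - p * h := by
    rw [hy, hB]
    have h2 : (k : ℝ) ≤ kb := by exact_mod_cast hk2
    push_cast
    nlinarith
  have := fwdDiff_iter_bound_of_bound h hh r ((fwdDiff h)^[p] xs) A (B - p * h)
    (σp * h ^ p) hpbound y hy1 hy2
  calc ‖(fwdDiff h)^[r] ((fwdDiff h)^[p] xs) y‖ ≤ 2 ^ r * (σp * h ^ p) := this
    _ = 2 ^ r * σp * h ^ p := by ring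
end

section
/- Let E be a real normed vector space, h > 0, t_k = k·h, and let integers k0 < k̄ be given. Let x* : ℝ → E be differentiable with ‖(x*)'(t)‖ ≤ σ1 for all t ∈ [t_{k0}, t_{k̄}]. Let v ≥ 0, r > 0, and γ ∈ [0,1) satisfy γ ≤ 1 − (v + σ1)h/r, and assume (v + σ1)h ≤ r. Let x̂_k, x_k ∈ E (for k0 ≤ k ≤ k̄) satisfy: (a) ‖x̂_k − x_{k−1}‖ ≤ v·h for all k0 + 1 ≤ k ≤ k̄ (acceptance condition); (b) for every k0 ≤ k ≤ k̄, if ‖x̂_k − x*(t_k)‖ ≤ r then ‖x_k − x*(t_k)‖ ≤ γ·‖x̂_k − x*(t_k)‖ (correction contraction); (c) ‖x̂_{k0} − x*(t_{k0})‖ ≤ r and ‖x_{k0} − x*(t_{k0})‖ ≤ r − (v + σ1)h. Define e_k := ‖x̂_k − x*(t_k)‖. Then e_k ≤ r for all k0 + 1 ≤ k ≤ k̄, and e_k ≤ (v + σ1)h/(1 − γ) + e_{k0}·γ^{k − k0} for all k0 ≤ k ≤ k̄. -/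
/-- Error recursion lemma for the SHARP algorithm: under the acceptance
condition and a `γ`-contractive correction step, the prediction tracking error
`e_k = ‖x̂_k − x*(t_k)‖` stays within `r` and satisfies
`e_k ≤ (v+σ1)h/(1−γ) + e_{k0}·γ^{k−k0}`. -/
theorem sharp_error_recursion
    {E : Type*} [NormedAddCommGroup E] [NormedSpace ℝ E]
    (h σ1 v r γ : ℝ) (hh : 0 < h) (hv : 0 ≤ v) (hr : 0 < r)
    (hγ0 : 0 ≤ γ) (hγ1 : γ < 1)
    (hγr : γ ≤ 1 - (v + σ1) * h / r) (hvr : (v + σ1) * h ≤ r)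
    (k0 kb : ℤ) (hk : k0 < kb)
    (xs : ℝ → E) (hdiff : Differentiable ℝ xs)
    (hd : ∀ t ∈ Set.Icc ((k0 : ℝ) * h) ((kb : ℝ) * h), ‖deriv xs t‖ ≤ σ1)
    (xhat xc : ℤ → E)
    (hacc : ∀ k : ℤ, k0 + 1 ≤ k → k ≤ kb → ‖xhat k - xc (k - 1)‖ ≤ v * h)
    (hcorr : ∀ k : ℤ, k0 ≤ k → k ≤ kb →
      ‖xhat k - xs ((k : ℝ) * h)‖ ≤ r →
      ‖xc k - xs ((k : ℝ) * h)‖ ≤ γ * ‖xhat k - xs ((k : ℝ) * h)‖)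
    (hinit1 : ‖xhat k0 - xs ((k0 : ℝ) * h)‖ ≤ r)
    (hinit2 : ‖xc k0 - xs ((k0 : ℝ) * h)‖ ≤ r - (v + σ1) * h) :
    (∀ k : ℤ, k0 + 1 ≤ k → k ≤ kb → ‖xhat k - xs ((k : ℝ) * h)‖ ≤ r) ∧
    (∀ k : ℤ, k0 ≤ k → k ≤ kb →
      ‖xhat k - xs ((k : ℝ) * h)‖
        ≤ (v + σ1) * h / (1 - γ)
          + ‖xhat k0 - xs ((k0 : ℝ) * h)‖ * γ ^ (k - k0).toNat) := by
  have hσ1 : 0 ≤ σ1 := by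
    have hmem : (k0 : ℝ) * h ∈ Set.Icc ((k0 : ℝ) * h) ((kb : ℝ) * h) := by
      constructor
      · exact le_rfl
      · exact mul_le_mul_of_nonneg_right (by exact_mod_cast hk.le) hh.le
    exact (norm_nonneg _).trans (hd _ hmem)
  have hvσ : 0 ≤ (v + σ1) * h := mul_nonneg (by linarith) hh.le
  have hγ1' : 0 < 1 - γ := by linarith
  set B : ℝ := (v + σ1) * h / (1 - γ) with hB
  have hBnn : 0 ≤ B := div_nonneg hvσ hγ1'.le
  clear_value B
  have hγrB : γ * r ≤ r - (v + σ1) * h := by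
    have := mul_le_mul_of_nonneg_right hγr hr.le
    have h2 : (1 - (v + σ1) * h / r) * r = r - (v + σ1) * h := by
      field_simp
    linarith [this, h2.symm ▸ this]
  -- MVT bound on consecutive samples
  have mvt : ∀ k : ℤ, k0 + 1 ≤ k → k ≤ kb →
      ‖xs ((k : ℝ) * h) - xs (((k : ℝ) - 1) * h)‖ ≤ σ1 * h := by
    intro k hk1 hk2
    have hsub : Set.Icc (((k : ℝ) - 1) * h) ((k : ℝ) * h)
        ⊆ Set.Icc ((k0 : ℝ) * h) ((kb : ℝ) * h) := by
      apply Set.Icc_subset_Icc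
      · apply mul_le_mul_of_nonneg_right _ hh.le
        have : (k0 : ℝ) ≤ (k : ℝ) - 1 := by
          have : (k0 : ℝ) + 1 ≤ (k : ℝ) := by exact_mod_cast hk1
          linarith
        exact this
      · exact mul_le_mul_of_nonneg_right (by exact_mod_cast hk2) hh.le
    have hle : ((k : ℝ) - 1) * h ≤ (k : ℝ) * h := by nlinarith
    have := Convex.norm_image_sub_le_of_norm_deriv_le
      (f := xs) (s := Set.Icc (((k : ℝ) - 1) * h) ((k : ℝ) * h))
      (fun x _ => hdiff x)
      (fun x hx => hd x (hsub hx))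
      (convex_Icc _ _)
      (Set.left_mem_Icc.mpr hle)
      (Set.right_mem_Icc.mpr hle)
    calc ‖xs ((k : ℝ) * h) - xs (((k : ℝ) - 1) * h)‖
        ≤ σ1 * ‖(k : ℝ) * h - ((k : ℝ) - 1) * h‖ := this
      _ = σ1 * h := by
          rw [show (k : ℝ) * h - ((k : ℝ) - 1) * h = h by ring,
            Real.norm_of_nonneg hh.le]
  -- Main invariant by induction
  have main : ∀ k : ℤ, k0 ≤ k → k ≤ kb →
      ‖xhat k - xs ((k : ℝ) * h)‖ ≤ r ∧
      ‖xc k - xs ((k : ℝ) * h)‖ ≤ r - (v + σ1) * h ∧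
      ‖xhat k - xs ((k : ℝ) * h)‖
        ≤ B + ‖xhat k0 - xs ((k0 : ℝ) * h)‖ * γ ^ (k - k0).toNat := by
    refine Int.le_induction ?_ ?_
    · intro _
      refine ⟨hinit1, hinit2, ?_⟩
      simp only [sub_self, Int.toNat_zero, pow_zero, mul_one]
      linarith
    · intro n hn ih hn1
      have hnkb : n ≤ kb := by omega
      obtain ⟨ihr, ihc, ihb⟩ := ih hnkb
      have hcontr : ‖xc n - xs ((n : ℝ) * h)‖ ≤ γ * ‖xhat n - xs ((n : ℝ) * h)‖ :=
        hcorr n hn hnkb ihr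
      have hacc' : ‖xhat (n + 1) - xc n‖ ≤ v * h := by
        have := hacc (n + 1) (by omega) hn1
        simpa using this
      have hmvt : ‖xs (((n : ℤ) + 1 : ℤ) * h : ℝ) - xs ((n : ℝ) * h)‖ ≤ σ1 * h := by
        have := mvt (n + 1) (by omega) hn1
        have hc : (((n : ℤ) + 1 : ℤ) : ℝ) - 1 = (n : ℝ) := by push_cast; ring
        rwa [hc] at this
      have tri : ‖xhat (n + 1) - xs (((n : ℤ) + 1 : ℤ) * h : ℝ)‖
          ≤ v * h + σ1 * h + ‖xc n - xs ((n : ℝ) * h)‖ := by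
        have key : xhat (n + 1) - xs ((((n : ℤ) + 1 : ℤ) : ℝ) * h)
            = (xhat (n + 1) - xc n) + (xc n - xs ((n : ℝ) * h))
              - (xs ((((n : ℤ) + 1 : ℤ) : ℝ) * h) - xs ((n : ℝ) * h)) := by
          abel
        rw [key]
        calc ‖_ - _‖ ≤ ‖(xhat (n + 1) - xc n) + (xc n - xs ((n : ℝ) * h))‖
              + ‖xs ((((n : ℤ) + 1 : ℤ) : ℝ) * h) - xs ((n : ℝ) * h)‖ := norm_sub_le _ _
          _ ≤ ‖xhat (n + 1) - xc n‖ + ‖xc n - xs ((n : ℝ) * h)‖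
              + ‖xs ((((n : ℤ) + 1 : ℤ) : ℝ) * h) - xs ((n : ℝ) * h)‖ := by
              gcongr; exact norm_add_le _ _
          _ ≤ v * h + ‖xc n - xs ((n : ℝ) * h)‖ + σ1 * h := by gcongr
          _ = v * h + σ1 * h + ‖xc n - xs ((n : ℝ) * h)‖ := by ring
      have her : ‖xhat (n + 1) - xs (((n : ℤ) + 1 : ℤ) * h : ℝ)‖ ≤ r := by
        have : v * h + σ1 * h = (v + σ1) * h := by ring
        linarith [tri]
      refine ⟨her, ?_, ?_⟩
      · have hc1 := hcorr (n + 1) (by omega) hn1 her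
        have : γ * ‖xhat (n + 1) - xs (((n : ℤ) + 1 : ℤ) * h : ℝ)‖ ≤ γ * r :=
          mul_le_mul_of_nonneg_left her hγ0
        linarith
      · have step : ‖xhat (n + 1) - xs (((n : ℤ) + 1 : ℤ) * h : ℝ)‖
            ≤ (v + σ1) * h + γ * ‖xhat n - xs ((n : ℝ) * h)‖ := by
          have : v * h + σ1 * h = (v + σ1) * h := by ring
          linarith [tri, hcontr]
        have hγmul : γ * ‖xhat n - xs ((n : ℝ) * h)‖
            ≤ γ * (B + ‖xhat k0 - xs ((k0 : ℝ) * h)‖ * γ ^ (n - k0).toNat) :=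
          mul_le_mul_of_nonneg_left ihb hγ0
        have hBeq : (v + σ1) * h + γ * B = B := by
          rw [hB]
          field_simp [hB]
          ring
        have hpow : (n + 1 - k0).toNat = (n - k0).toNat + 1 := by omega
        calc ‖xhat (n + 1) - xs (((n : ℤ) + 1 : ℤ) * h : ℝ)‖
            ≤ (v + σ1) * h + γ * (B + ‖xhat k0 - xs ((k0 : ℝ) * h)‖ * γ ^ (n - k0).toNat) := by
              linarith
          _ = B + ‖xhat k0 - xs ((k0 : ℝ) * h)‖ * γ ^ ((n - k0).toNat + 1) := by
              have expand : γ * (B + ‖xhat k0 - xs ((k0 : ℝ) * h)‖ * γ ^ (n - k0).toNat)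
                  = γ * B + ‖xhat k0 - xs ((k0 : ℝ) * h)‖ * γ ^ ((n - k0).toNat + 1) := by
                ring
              rw [expand, ← add_assoc, hBeq]
          _ = B + ‖xhat k0 - xs ((k0 : ℝ) * h)‖ * γ ^ (n + 1 - k0).toNat := by
              rw [hpow]
  exact ⟨fun k hk1 hk2 => (main k (by omega) hk2).1,
    fun k hk1 hk2 => (main k hk1 hk2).2.2⟩
end

section
/- In the setting of the previous error lemma — E a real normed vector space, h > 0, t_k = k·h, x* : ℝ → E differentiable with ‖(x*)'(t)‖ ≤ σ1 on [t_{k0}, t_{k̄}], v ≥ 0, r > 0, γ ∈ [0,1) with γ ≤ 1 − (v + σ1)h/r and (v+σ1)h ≤ r, sequences x̂_k, x_k satisfying the acceptance condition ‖x̂_k − x_{k−1}‖ ≤ vh for k0+1 ≤ k ≤ k̄, the correction contraction ‖x_k − x*(t_k)‖ ≤ γ‖x̂_k − x*(t_k)‖ whenever ‖x̂_k − x*(t_k)‖ ≤ r, and ‖x̂_{k0} − x*(t_{k0})‖ ≤ r, ‖x_{k0} − x*(t_{k0})‖ ≤ r − (v+σ1)h — assume additionally that p ≥ 2 and x* is p-times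 differentiable on [t_{k0}, t_{k̄}] with ‖(x*)^{(p)}(t)‖ ≤ σ_p there. Define the order-p prediction x̂_k^p := Σ_{i=1}^{p} (−1)^{i−1} binom(p,i) x_{k−i} and e_k := ‖x̂_k − x*(t_k)‖. Then for all k0 + p ≤ k ≤ k̄: ‖x̂_k^p − x_{k−1}‖ ≤ (2^p − 2)·γ·( (v + σ1)h/(1 − γ) + e_{k0}·γ^{k − k0 − p} ) + σ1·h + σ_p·h^p. In particular, if the right-hand side is at most v·h, the order-p prediction satisfies the acceptance condition ‖x̂_k^p − x_{k−1}‖ ≤ v·h. -/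
open fwdDiff Finset

/-- Bound on iterated backward differences of a function with bounded `n`-th derivative. -/
lemma fd_iter_bound {E : Type*} [NormedAddCommGroup E] [NormedSpace ℝ E]
    (b h : ℝ) (hh : 0 < h) :
    ∀ (n : ℕ) (a M : ℝ) (d : ℕ → ℝ → E),
    (∀ i < n, ∀ t ∈ Set.Icc a b, HasDerivWithinAt (d i) (d (i + 1) t) (Set.Icc a b) t) →
    (∀ t ∈ Set.Icc a b, ‖d n t‖ ≤ M) →
    ∀ t : ℝ, (∀ i : ℕ, i ≤ n → t - i * h ∈ Set.Icc a b) →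
    ‖(Δ_[-h])^[n] (d 0) t‖ ≤ M * h ^ n := by
  intro n
  induction n with
  | zero =>
    intro a M d _ hM t ht
    simpa using hM t (by simpa using ht 0 le_rfl)
  | succ n IH =>
    intro a M d hderiv hM t ht
    rw [Function.iterate_succ_apply]
    have hsub : Set.Icc (a + h) b ⊆ Set.Icc a b := Set.Icc_subset_Icc (by linarith) le_rfl
    have maps : Set.MapsTo (fun s : ℝ => s + -h) (Set.Icc (a + h) b) (Set.Icc a b) := by
      intro s hs
      simp only [Set.mem_Icc] at hs ⊢
      constructor <;> linarith [hs.1, hs.2]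
    have key := IH (a + h) (M * h) (fun i => Δ_[-h] (d i)) ?_ ?_ t ?_
    · calc ‖(Δ_[-h])^[n] ((fun i => Δ_[-h] (d i)) 0) t‖ ≤ M * h * h ^ n := key
        _ = M * h ^ (n + 1) := by rw [pow_succ]; ring
    · intro i hi t' ht'
      have inner : HasDerivWithinAt (fun s : ℝ => s + -h) 1 (Set.Icc (a + h) b) t' :=
        (hasDerivWithinAt_id _ _).add_const (-h)
      have outer := hderiv i (Nat.lt_succ_of_lt hi) (t' + -h) (maps ht')
      have h1 : HasDerivWithinAt (fun s => d i (s + -h)) (d (i + 1) (t' + -h))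
          (Set.Icc (a + h) b) t' := by
        have := outer.scomp t' inner maps; rw [one_smul] at this; exact this
      have h2 : HasDerivWithinAt (d i) (d (i + 1) t') (Set.Icc (a + h) b) t' :=
        (hderiv i (Nat.lt_succ_of_lt hi) t' (hsub ht')).mono hsub
      exact h1.sub h2
    · intro t' ht'
      have hmv := Convex.norm_image_sub_le_of_norm_hasDerivWithin_le
        (f := d n) (f' := fun s => d (n + 1) s)
        (fun x hx => hderiv n (Nat.lt_succ_self n) x hx) hM (convex_Icc a b)
        (hsub ht') (maps ht')
      have : ‖(t' + -h) - t'‖ = h := by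
        rw [Real.norm_eq_abs]
        rw [show (t' + -h) - t' = -h by ring, abs_neg, abs_of_pos hh]
      rw [this] at hmv
      simpa [fwdDiff] using hmv
    · intro i hi
      have h1 := ht (i + 1) (Nat.succ_le_succ hi)
      have h2 := ht i (le_trans hi (Nat.le_succ n))
      simp only [Set.mem_Icc] at h1 h2 ⊢
      push_cast at h1 h2 ⊢
      constructor <;> linarith [h1.1, h2.2]

/-- Alternating binomial sums are iterated backward differences. -/
lemma alt_sum_eq_fd {E : Type*} [NormedAddCommGroup E] [NormedSpace ℝ E]
    (h : ℝ) (n : ℕ) (f : ℝ → E) (t : ℝ) :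
    ∑ i ∈ Finset.range (n + 1), ((-1 : ℝ) ^ i * (n.choose i : ℝ)) • f (t - i * h)
      = ((-1 : ℝ) ^ n) • (Δ_[-h])^[n] f t := by
  rw [fwdDiff_iter_eq_sum_shift, Finset.smul_sum]
  apply Finset.sum_congr rfl
  intro i hi
  rw [Finset.mem_range, Nat.lt_succ_iff] at hi
  rw [← Int.cast_smul_eq_zsmul ℝ, smul_smul]
  have harg : t + i • (-h) = t - i * h := by
    rw [nsmul_eq_mul]; ring
  rw [harg]
  congr 1
  push_cast
  have h2 : ((-1 : ℝ) ^ (n - i)) * ((-1 : ℝ) ^ i) = (-1 : ℝ) ^ n := by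
    rw [← pow_add, Nat.sub_add_cancel hi]
  have h3 : ((-1 : ℝ) ^ (n - i)) * ((-1 : ℝ) ^ (n - i)) = 1 := by
    rw [← pow_add, ← two_mul, pow_mul]; norm_num
  linear_combination ((n.choose i : ℝ) * (-1 : ℝ) ^ (n - i)) * h2 - ((n.choose i : ℝ) * (-1 : ℝ) ^ i) * h3


set_option maxHeartbeats 1600000 in
/-- Bound on the step size of the order-`p` Lagrange-extrapolation prediction
of the SHARP algorithm; in particular, when the bound is at most `v·h`, the
order-`p` prediction satisfies the acceptance condition. -/
theorem sharp_acceptance_of_higher_order_prediction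
    {E : Type*} [NormedAddCommGroup E] [NormedSpace ℝ E]
    (h σ1 σp v r γ : ℝ) (hh : 0 < h) (hv : 0 ≤ v) (hr : 0 < r)
    (hγ0 : 0 ≤ γ) (hγ1 : γ < 1)
    (hγr : γ ≤ 1 - (v + σ1) * h / r) (hvr : (v + σ1) * h ≤ r)
    (p : ℕ) (hp : 2 ≤ p)
    (k0 kb : ℤ) (hk : k0 < kb)
    (xs : ℝ → E) (d : ℕ → ℝ → E) (hd0 : d 0 = xs)
    (hderiv : ∀ i < p, ∀ t ∈ Set.Icc ((k0 : ℝ) * h) ((kb : ℝ) * h),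
      HasDerivWithinAt (d i) (d (i + 1) t) (Set.Icc ((k0 : ℝ) * h) ((kb : ℝ) * h)) t)
    (hσ1 : ∀ t ∈ Set.Icc ((k0 : ℝ) * h) ((kb : ℝ) * h), ‖d 1 t‖ ≤ σ1)
    (hσp : ∀ t ∈ Set.Icc ((k0 : ℝ) * h) ((kb : ℝ) * h), ‖d p t‖ ≤ σp)
    (xhat xc : ℤ → E)
    (hacc : ∀ k : ℤ, k0 + 1 ≤ k → k ≤ kb → ‖xhat k - xc (k - 1)‖ ≤ v * h)
    (hcorr : ∀ k : ℤ, k0 ≤ k → k ≤ kb →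
      ‖xhat k - xs ((k : ℝ) * h)‖ ≤ r →
      ‖xc k - xs ((k : ℝ) * h)‖ ≤ γ * ‖xhat k - xs ((k : ℝ) * h)‖)
    (hinit1 : ‖xhat k0 - xs ((k0 : ℝ) * h)‖ ≤ r)
    (hinit2 : ‖xc k0 - xs ((k0 : ℝ) * h)‖ ≤ r - (v + σ1) * h)
    (k : ℤ) (hk1 : k0 + p ≤ k) (hk2 : k ≤ kb) :
    ‖(∑ i ∈ Finset.Icc 1 p,
        ((-1 : ℝ) ^ (i - 1) * (p.choose i : ℝ)) • xc (k - i)) - xc (k - 1)‖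
      ≤ (2 ^ p - 2) * γ *
          ((v + σ1) * h / (1 - γ)
            + ‖xhat k0 - xs ((k0 : ℝ) * h)‖ * γ ^ (k - k0 - p).toNat)
        + σ1 * h + σp * h ^ p ∧
    ((2 ^ p - 2) * γ *
          ((v + σ1) * h / (1 - γ)
            + ‖xhat k0 - xs ((k0 : ℝ) * h)‖ * γ ^ (k - k0 - p).toNat)
        + σ1 * h + σp * h ^ p ≤ v * h →
      ‖(∑ i ∈ Finset.Icc 1 p,
          ((-1 : ℝ) ^ (i - 1) * (p.choose i : ℝ)) • xc (k - i)) - xc (k - 1)‖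
        ≤ v * h) := by
  have hγpos : (0:ℝ) < 1 - γ := by linarith
  have hmem : ∀ j : ℤ, k0 ≤ j → j ≤ kb →
      (j : ℝ) * h ∈ Set.Icc ((k0 : ℝ) * h) ((kb : ℝ) * h) := by
    intro j h1 h2
    constructor
    · exact mul_le_mul_of_nonneg_right (by exact_mod_cast h1) hh.le
    · exact mul_le_mul_of_nonneg_right (by exact_mod_cast h2) hh.le
  have hσ1n : 0 ≤ σ1 := le_trans (norm_nonneg _) (hσ1 _ (hmem k0 le_rfl hk.le))
  have hσpn : 0 ≤ σp := le_trans (norm_nonneg _) (hσp _ (hmem k0 le_rfl hk.le))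
  set E0 := ‖xhat k0 - xs ((k0 : ℝ) * h)‖ with hE0def
  set S := (v + σ1) * h / (1 - γ) with hSdef
  set N := (k - k0 - p).toNat with hNdef
  have hvσ : 0 ≤ (v + σ1) * h := mul_nonneg (by linarith) hh.le
  have hSn : 0 ≤ S := div_nonneg hvσ hγpos.le
  have hSr : S ≤ r := by
    rw [hSdef, div_le_iff₀ hγpos]
    have h1 : (v + σ1) * h / r ≤ 1 - γ := by linarith
    calc (v + σ1) * h = ((v + σ1) * h / r) * r := by field_simp
      _ ≤ (1 - γ) * r := mul_le_mul_of_nonneg_right h1 hr.le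
      _ = r * (1 - γ) := mul_comm _ _
  have hSeq : S * (1 - γ) = (v + σ1) * h := by
    rw [hSdef]; field_simp
  have lip : ∀ s ∈ Set.Icc ((k0 : ℝ) * h) ((kb : ℝ) * h),
      ∀ t ∈ Set.Icc ((k0 : ℝ) * h) ((kb : ℝ) * h), ‖xs t - xs s‖ ≤ σ1 * ‖t - s‖ := by
    intro s hs t ht
    have := Convex.norm_image_sub_le_of_norm_hasDerivWithin_le
      (f := d 0) (f' := fun u => d 1 u)
      (fun x hx => hderiv 0 (by omega) x hx) hσ1 (convex_Icc _ _) hs ht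
    rwa [hd0] at this
  -- error recursion for the prediction error
  have errE : ∀ n : ℕ, k0 + (n : ℤ) ≤ kb →
      ‖xhat (k0 + n) - xs (((k0 + n : ℤ) : ℝ) * h)‖ ≤ S * (1 - γ ^ n) + γ ^ n * E0 := by
    intro n
    induction n with
    | zero => intro _; simp [hE0def]
    | succ n IH =>
      intro hle
      have hle' : k0 + (n : ℤ) ≤ kb := by push_cast at hle ⊢; omega
      have hE := IH hle'
      have hpow0 : (0:ℝ) ≤ γ ^ n := pow_nonneg hγ0 n
      have hpow1 : γ ^ n ≤ 1 := pow_le_one₀ hγ0 hγ1.le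
      have hEr : ‖xhat (k0 + n) - xs (((k0 + n : ℤ) : ℝ) * h)‖ ≤ r := by
        nlinarith [hinit1, hE]
      have hC := hcorr (k0 + n) (by omega) hle' hEr
      have hA := hacc (k0 + n + 1) (by omega) (by push_cast at hle ⊢; omega)
      rw [show k0 + (n : ℤ) + 1 - 1 = k0 + n by ring] at hA
      have hLip : ‖xs (((k0 + (n : ℤ) + 1 : ℤ) : ℝ) * h) - xs (((k0 + n : ℤ) : ℝ) * h)‖
          ≤ σ1 * h := by
        have hm1 := hmem (k0 + n) (by omega) hle'
        have hm2 := hmem (k0 + n + 1) (by omega) (by push_cast at hle ⊢; omega)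
        have := lip _ hm1 _ hm2
        have harg : ((k0 + (n : ℤ) + 1 : ℤ) : ℝ) * h - ((k0 + n : ℤ) : ℝ) * h = h := by
          push_cast; ring
        rwa [harg, Real.norm_eq_abs, abs_of_pos hh] at this
      have hcast : (k0 + ((n + 1 : ℕ) : ℤ)) = k0 + (n : ℤ) + 1 := by push_cast; ring
      rw [hcast]
      have decomp : xhat (k0 + (n : ℤ) + 1) - xs (((k0 + (n : ℤ) + 1 : ℤ) : ℝ) * h)
          = (xhat (k0 + (n : ℤ) + 1) - xc (k0 + n))
            + (xc (k0 + n) - xs (((k0 + n : ℤ) : ℝ) * h))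
            + (xs (((k0 + n : ℤ) : ℝ) * h) - xs (((k0 + (n : ℤ) + 1 : ℤ) : ℝ) * h)) := by
        abel
      calc ‖xhat (k0 + (n : ℤ) + 1) - xs (((k0 + (n : ℤ) + 1 : ℤ) : ℝ) * h)‖
          ≤ ‖xhat (k0 + (n : ℤ) + 1) - xc (k0 + n)‖
            + ‖xc (k0 + n) - xs (((k0 + n : ℤ) : ℝ) * h)‖
            + ‖xs (((k0 + n : ℤ) : ℝ) * h) - xs (((k0 + (n : ℤ) + 1 : ℤ) : ℝ) * h)‖ := by
            rw [decomp]
            exact (norm_add_le _ _).trans (add_le_add (norm_add_le _ _) le_rfl)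
        _ ≤ v * h + γ * (S * (1 - γ ^ n) + γ ^ n * E0) + σ1 * h := by
            have h1 := mul_le_mul_of_nonneg_left hE hγ0
            have h2 : ‖xs (((k0 + n : ℤ) : ℝ) * h) - xs (((k0 + (n : ℤ) + 1 : ℤ) : ℝ) * h)‖
                ≤ σ1 * h := by rwa [norm_sub_rev] at hLip
            have h3 := hC.trans h1
            linarith
        _ = S * (1 - γ ^ (n + 1)) + γ ^ (n + 1) * E0 := by
            rw [pow_succ]; linear_combination -hSeq
  -- corrected error bound
  have errC : ∀ j : ℤ, k0 ≤ j → j ≤ kb →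
      ‖xc j - xs ((j : ℝ) * h)‖ ≤ γ * (S + γ ^ (j - k0).toNat * E0) := by
    intro j h1 h2
    have hn : j = k0 + ((j - k0).toNat : ℤ) := by omega
    have hE := errE (j - k0).toNat (by omega)
    have hpow0 : (0:ℝ) ≤ γ ^ (j - k0).toNat := pow_nonneg hγ0 _
    have hpow1 : γ ^ (j - k0).toNat ≤ 1 := pow_le_one₀ hγ0 hγ1.le
    rw [← hn] at hE
    have hEr : ‖xhat j - xs ((j : ℝ) * h)‖ ≤ r := by
      nlinarith [hinit1, hE]
    have hC := hcorr j h1 h2 hEr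
    calc ‖xc j - xs ((j : ℝ) * h)‖ ≤ γ * ‖xhat j - xs ((j : ℝ) * h)‖ := hC
      _ ≤ γ * (S * (1 - γ ^ (j - k0).toNat) + γ ^ (j - k0).toNat * E0) :=
          mul_le_mul_of_nonneg_left hE hγ0
      _ ≤ γ * (S + γ ^ (j - k0).toNat * E0) :=
          mul_le_mul_of_nonneg_left (by nlinarith [mul_nonneg hSn hpow0]) hγ0
  -- uniform bound on the relevant corrected errors
  have hE0n : (0:ℝ) ≤ E0 := norm_nonneg _
  have hBn : (0:ℝ) ≤ S + γ ^ N * E0 := add_nonneg hSn (mul_nonneg (pow_nonneg hγ0 _) hE0n)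
  have hu : ∀ i : ℕ, 1 ≤ i → i ≤ p →
      ‖xc (k - i) - xs (((k - i : ℤ) : ℝ) * h)‖ ≤ γ * (S + γ ^ N * E0) := by
    intro i h1i hip
    have hj1 : k0 ≤ k - (i : ℤ) := by omega
    have hj2 : k - (i : ℤ) ≤ kb := by omega
    refine (errC (k - i) hj1 hj2).trans (mul_le_mul_of_nonneg_left ?_ hγ0)
    have hNle : N ≤ (k - (i : ℤ) - k0).toNat := by omega
    have := pow_le_pow_of_le_one hγ0 hγ1.le hNle
    have := mul_le_mul_of_nonneg_right this hE0n
    linarith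
  -- bound on the p-th finite difference of xs
  have hΔ : ‖∑ i ∈ Finset.range (p + 1),
      ((-1 : ℝ) ^ i * (p.choose i : ℝ)) • xs (((k - i : ℤ) : ℝ) * h)‖ ≤ σp * h ^ p := by
    have hconv : ∑ i ∈ Finset.range (p + 1),
        ((-1 : ℝ) ^ i * (p.choose i : ℝ)) • xs (((k - i : ℤ) : ℝ) * h)
        = ∑ i ∈ Finset.range (p + 1),
        ((-1 : ℝ) ^ i * (p.choose i : ℝ)) • (d 0) ((k : ℝ) * h - i * h) := by
      refine Finset.sum_congr rfl fun i _ => ?_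
      rw [hd0]; congr 2; push_cast; ring
    rw [hconv, alt_sum_eq_fd, norm_smul]
    have h1 : ‖(-1 : ℝ) ^ p‖ = 1 := by simp
    rw [h1, one_mul]
    refine fd_iter_bound ((kb : ℝ) * h) h hh p ((k0 : ℝ) * h) σp d hderiv hσp ((k : ℝ) * h) ?_
    intro i hi
    have harg : (k : ℝ) * h - i * h = ((k - i : ℤ) : ℝ) * h := by push_cast; ring
    rw [harg]
    exact hmem _ (by omega) (by omega)
  have hstep : ‖xs ((k : ℝ) * h) - xs (((k - 1 : ℤ) : ℝ) * h)‖ ≤ σ1 * h := by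
    have := lip _ (hmem (k - 1) (by omega) (by omega)) _ (hmem k (by omega) hk2)
    have harg : (k : ℝ) * h - ((k - 1 : ℤ) : ℝ) * h = h := by push_cast; ring
    rwa [harg, Real.norm_eq_abs, abs_of_pos hh] at this
  -- index set decompositions
  have hIcc : Finset.Icc 1 p = insert 1 (Finset.Icc 2 p) := by
    ext x; simp only [Finset.mem_Icc, Finset.mem_insert]; omega
  have h1notin : (1 : ℕ) ∉ Finset.Icc 2 p := by simp
  have hrange : Finset.range (p + 1) = insert 0 (Finset.Icc 1 p) := by
    ext x
    simp only [Finset.mem_range, Finset.mem_insert, Finset.mem_Icc, Nat.lt_succ_iff]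
    omega
  have h0notin : (0 : ℕ) ∉ Finset.Icc 1 p := by simp
  have e2 : ∑ i ∈ Finset.range (p + 1),
      ((-1 : ℝ) ^ i * (p.choose i : ℝ)) • xs (((k - i : ℤ) : ℝ) * h)
      = xs ((k : ℝ) * h) - ∑ i ∈ Finset.Icc 1 p,
          ((-1 : ℝ) ^ (i - 1) * (p.choose i : ℝ)) • xs (((k - i : ℤ) : ℝ) * h) := by
    rw [hrange, Finset.sum_insert h0notin]
    have t0 : ((-1 : ℝ) ^ (0:ℕ) * (p.choose 0 : ℝ)) • xs (((k - (0:ℕ) : ℤ) : ℝ) * h)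
        = xs ((k : ℝ) * h) := by norm_num
    rw [t0, sub_eq_add_neg, ← Finset.sum_neg_distrib]
    congr 1
    refine Finset.sum_congr rfl fun i hi => ?_
    rw [Finset.mem_Icc] at hi
    rw [← neg_smul]
    congr 1
    have hpow : (-1 : ℝ) ^ i = -(-1 : ℝ) ^ (i - 1) := by
      conv_lhs => rw [show i = (i - 1) + 1 by omega]
      rw [pow_succ]; ring
    rw [hpow]; ring
  have split : ∑ i ∈ Finset.Icc 1 p, ((-1:ℝ)^(i-1) * (p.choose i : ℝ)) • xc (k - i)
      = ∑ i ∈ Finset.Icc 1 p,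
          ((-1:ℝ)^(i-1) * (p.choose i : ℝ)) • (xc (k - i) - xs (((k - i : ℤ):ℝ)*h))
        + ∑ i ∈ Finset.Icc 1 p,
          ((-1:ℝ)^(i-1) * (p.choose i : ℝ)) • xs (((k - i : ℤ):ℝ)*h) := by
    rw [← Finset.sum_add_distrib]
    refine Finset.sum_congr rfl fun i _ => ?_
    rw [← smul_add, sub_add_cancel]
  have hins : ∑ i ∈ Finset.Icc 1 p,
      ((-1:ℝ)^(i-1) * (p.choose i : ℝ)) • (xc (k - i) - xs (((k - i : ℤ):ℝ)*h))
      = (p : ℝ) • (xc (k - 1) - xs (((k - 1 : ℤ):ℝ)*h))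
        + ∑ i ∈ Finset.Icc 2 p,
          ((-1:ℝ)^(i-1) * (p.choose i : ℝ)) • (xc (k - i) - xs (((k - i : ℤ):ℝ)*h)) := by
    rw [hIcc, Finset.sum_insert h1notin]
    congr 1
    norm_num
  have key : (∑ i ∈ Finset.Icc 1 p, ((-1:ℝ)^(i-1) * (p.choose i : ℝ)) • xc (k - i)) - xc (k - 1)
      = (((p : ℝ) - 1) • (xc (k - 1) - xs (((k - 1 : ℤ):ℝ)*h))
          + ∑ i ∈ Finset.Icc 2 p,
            ((-1:ℝ)^(i-1) * (p.choose i : ℝ)) • (xc (k - i) - xs (((k - i : ℤ):ℝ)*h)))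
        + ((xs ((k : ℝ) * h) - xs (((k - 1 : ℤ):ℝ)*h))
          - ∑ i ∈ Finset.range (p + 1),
            ((-1:ℝ)^i * (p.choose i : ℝ)) • xs (((k - i : ℤ):ℝ)*h)) := by
    rw [split, hins, e2, sub_smul, one_smul]
    module
  -- norm bounds
  have hp1 : (2 : ℝ) ≤ (p : ℝ) := by exact_mod_cast hp
  have hb1 : ‖((p : ℝ) - 1) • (xc (k - 1) - xs (((k - 1 : ℤ):ℝ)*h))‖
      ≤ ((p : ℝ) - 1) * (γ * (S + γ ^ N * E0)) := by
    rw [norm_smul, Real.norm_eq_abs, abs_of_nonneg (by linarith)]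
    refine mul_le_mul_of_nonneg_left ?_ (by linarith)
    have := hu 1 le_rfl (by omega)
    simpa using this
  have hchoose : ∑ i ∈ Finset.Icc 2 p, (p.choose i : ℝ) = 2 ^ p - 1 - p := by
    have h0 : ∑ i ∈ Finset.range (p + 1), (p.choose i : ℝ) = 2 ^ p := by
      exact_mod_cast Nat.sum_range_choose p
    have hr2 : Finset.range (p + 1) = insert 0 (insert 1 (Finset.Icc 2 p)) := by
      ext x
      simp only [Finset.mem_range, Finset.mem_insert, Finset.mem_Icc, Nat.lt_succ_iff]
      omega
    rw [hr2, Finset.sum_insert (by simp), Finset.sum_insert (by simp)] at h0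
    simp only [Nat.choose_zero_right, Nat.choose_one_right, Nat.cast_one] at h0
    linarith
  have hb2 : ‖∑ i ∈ Finset.Icc 2 p,
      ((-1:ℝ)^(i-1) * (p.choose i : ℝ)) • (xc (k - i) - xs (((k - i : ℤ):ℝ)*h))‖
      ≤ (2 ^ p - 1 - p) * (γ * (S + γ ^ N * E0)) := by
    refine (norm_sum_le _ _).trans ?_
    have step : ∀ i ∈ Finset.Icc 2 p,
        ‖((-1:ℝ)^(i-1) * (p.choose i : ℝ)) • (xc (k - i) - xs (((k - i : ℤ):ℝ)*h))‖
        ≤ (p.choose i : ℝ) * (γ * (S + γ ^ N * E0)) := by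
      intro i hi
      rw [Finset.mem_Icc] at hi
      rw [norm_smul, Real.norm_eq_abs, abs_mul, abs_pow, abs_neg, abs_one, one_pow, one_mul,
        abs_of_nonneg (Nat.cast_nonneg _)]
      exact mul_le_mul_of_nonneg_left (hu i (by omega) hi.2) (Nat.cast_nonneg _)
    refine (Finset.sum_le_sum step).trans ?_
    rw [← Finset.sum_mul, hchoose]
  have main : ‖(∑ i ∈ Finset.Icc 1 p,
      ((-1:ℝ)^(i-1) * (p.choose i : ℝ)) • xc (k - i)) - xc (k - 1)‖
      ≤ (2 ^ p - 2) * γ * (S + E0 * γ ^ N) + σ1 * h + σp * h ^ p := by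
    rw [key]
    calc ‖_ + _‖ ≤ _ := norm_add_le _ _
      _ ≤ (‖((p : ℝ) - 1) • (xc (k - 1) - xs (((k - 1 : ℤ):ℝ)*h))‖
            + ‖∑ i ∈ Finset.Icc 2 p,
              ((-1:ℝ)^(i-1) * (p.choose i : ℝ)) • (xc (k - i) - xs (((k - i : ℤ):ℝ)*h))‖)
          + (‖xs ((k : ℝ) * h) - xs (((k - 1 : ℤ):ℝ)*h)‖
            + ‖∑ i ∈ Finset.range (p + 1),
              ((-1:ℝ)^i * (p.choose i : ℝ)) • xs (((k - i : ℤ):ℝ)*h)‖) :=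
        add_le_add (norm_add_le _ _) (norm_sub_le _ _)
      _ ≤ (((p : ℝ) - 1) * (γ * (S + γ ^ N * E0))
            + (2 ^ p - 1 - p) * (γ * (S + γ ^ N * E0))) + (σ1 * h + σp * h ^ p) :=
        add_le_add (add_le_add hb1 hb2) (add_le_add hstep hΔ)
      _ = (2 ^ p - 2) * γ * (S + E0 * γ ^ N) + σ1 * h + σp * h ^ p := by ring
  exact ⟨main, fun hle => main.trans hle⟩
end

section
/- Let P ≥ 1 be an integer, 0 < γ < 1/(2^P − 1), b ≥ 0, and let k1 ≥ 0 be an integer. Let (e_k)_{k ≥ k1} be a sequence of nonnegative reals satisfying e_k ≤ γ·Σ_{i=1}^{P} binom(P,i)·e_{k−i} + b for all k ≥ k1 + P. Then there exists a constant M ≥ 0 such that for all k ≥ k1: e_k ≤ b/(1 − (2^P − 1)γ) + M·( (1 + γ^{−1})^{1/P} − 1 )^{−k}. -/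
lemma sharp_aux_binom (P : ℕ) (x : ℝ) :
    ∑ i ∈ Finset.Icc 1 P, (P.choose i : ℝ) * x ^ (P - i) = (x + 1) ^ P - x ^ P := by
  have h := add_pow (1 : ℝ) x P
  simp only [one_pow, one_mul] at h
  rw [Finset.sum_range_succ'] at h
  have hIcc : ∑ i ∈ Finset.Icc 1 P, (P.choose i : ℝ) * x ^ (P - i)
      = ∑ i ∈ Finset.range P, (P.choose (1 + i) : ℝ) * x ^ (P - (1 + i)) := by
    rw [← Finset.Ico_add_one_right_eq_Icc, Finset.sum_Ico_eq_sum_range]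
    simp
  rw [hIcc]
  have hc : ∀ i ∈ Finset.range P,
      (P.choose (1 + i) : ℝ) * x ^ (P - (1 + i)) = x ^ (P - (i + 1)) * (P.choose (i + 1) : ℝ) := by
    intro i _
    rw [add_comm 1 i, mul_comm]
  rw [Finset.sum_congr rfl hc]
  have hx1 : (1 + x) ^ P = (x + 1) ^ P := by ring
  simp only [Nat.sub_zero, Nat.choose_zero_right, Nat.cast_one, mul_one] at h
  linarith [h]

/-- Solution of the SHARP tracking-error recursion: if
`e_k ≤ γ·Σ_{i=1}^P binom(P,i)·e_{k−i} + b` for `k ≥ k1 + P` with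
`γ < 1/(2^P − 1)`, then `e_k ≤ b/(1 − (2^P − 1)γ) + M·((1+γ⁻¹)^{1/P} − 1)^{−k}`
for some constant `M ≥ 0`. -/
theorem sharp_recursion_solution
    (P : ℕ) (hP : 1 ≤ P) (γ b : ℝ) (hγ0 : 0 < γ)
    (hγ1 : γ < 1 / (2 ^ P - 1)) (hb : 0 ≤ b)
    (k1 : ℕ) (e : ℕ → ℝ) (he0 : ∀ k, k1 ≤ k → 0 ≤ e k)
    (hrec : ∀ k, k1 + P ≤ k →
      e k ≤ γ * ∑ i ∈ Finset.Icc 1 P, (P.choose i : ℝ) * e (k - i) + b) :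
    ∃ M : ℝ, 0 ≤ M ∧ ∀ k, k1 ≤ k →
      e k ≤ b / (1 - (2 ^ P - 1) * γ)
        + M * (((1 + γ⁻¹) ^ ((1 : ℝ) / P) - 1)⁻¹) ^ k := by
  have hPR : (0:ℝ) < P := by exact_mod_cast hP
  have h2 : (1:ℝ) < 2 ^ P := by
    exact one_lt_pow₀ one_lt_two (by omega)
  have h2' : (0:ℝ) < 2 ^ P - 1 := by linarith
  have hγ2 : γ * (2 ^ P - 1) < 1 := (lt_div_iff₀ h2').mp hγ1
  have hγγ : γ * γ⁻¹ = 1 := mul_inv_cancel₀ hγ0.ne'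
  have hγinv : (2:ℝ) ^ P - 1 < γ⁻¹ := by nlinarith
  have h1γ : (0:ℝ) < 1 + γ⁻¹ := by nlinarith
  set s : ℝ := (1 + γ⁻¹) ^ ((1 : ℝ) / P) with hs
  have hs0 : 0 < s := Real.rpow_pos_of_pos h1γ _
  have hsP : s ^ P = 1 + γ⁻¹ := by
    rw [hs, ← Real.rpow_natCast ((1 + γ⁻¹) ^ ((1 : ℝ) / P)) P, ← Real.rpow_mul h1γ.le]
    rw [one_div, inv_mul_cancel₀ (by exact_mod_cast hP.trans_lt' Nat.zero_lt_one |>.ne' : (P:ℝ) ≠ 0), Real.rpow_one]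
  have hs1 : 1 < s := by
    by_contra hcon
    push_neg at hcon
    have : s ^ P ≤ 1 := pow_le_one₀ hs0.le hcon
    rw [hsP] at this
    nlinarith
  set r : ℝ := (s - 1)⁻¹ with hr
  have hr0 : 0 < r := inv_pos.mpr (by linarith)
  -- characteristic identity
  have hne : s - 1 ≠ 0 := sub_ne_zero.mpr hs1.ne'
  have hr1 : r * (s - 1) = 1 := inv_mul_cancel₀ hne
  have h1r : 1 + r = s * r := by linear_combination -hr1
  have hsrP : (r + 1) ^ P = (1 + γ⁻¹) * r ^ P := by
    have h1 : r + 1 = s * r := by linarith [h1r]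
    calc (r + 1) ^ P = (s * r) ^ P := by rw [h1]
      _ = s ^ P * r ^ P := mul_pow s r P
      _ = (1 + γ⁻¹) * r ^ P := by rw [hsP]
  have hchar : γ * ∑ i ∈ Finset.Icc 1 P, (P.choose i : ℝ) * r ^ (P - i) = r ^ P := by
    rw [sharp_aux_binom, hsrP]
    have : γ * ((1 + γ⁻¹) * r ^ P - r ^ P) = (γ * (1 + γ⁻¹) - γ) * r ^ P := by ring
    rw [this]
    have h3 : γ * (1 + γ⁻¹) - γ = 1 := by
      field_simp
      ring
    rw [h3, one_mul]
  -- sum of binomials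
  have hsum2 : ∑ i ∈ Finset.Icc 1 P, (P.choose i : ℝ) = (2:ℝ) ^ P - 1 := by
    have h := sharp_aux_binom P 1
    simp only [one_pow, mul_one] at h
    rw [h]
    norm_num
  set A : ℝ := b / (1 - (2 ^ P - 1) * γ) with hA
  have hden : 0 < 1 - (2 ^ P - 1) * γ := by nlinarith
  have hA0 : 0 ≤ A := div_nonneg hb hden.le
  have hAeq : γ * ((2:ℝ) ^ P - 1) * A + b = A := by
    have : A * (1 - (2 ^ P - 1) * γ) = b := by
      rw [hA]; field_simp
    nlinarith [this]
  set M : ℝ := ∑ j ∈ Finset.Ico k1 (k1 + P), e j * (r⁻¹) ^ j with hM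
  have hM0 : 0 ≤ M := by
    apply Finset.sum_nonneg
    intro j hj
    have := (Finset.mem_Ico.mp hj).1
    exact mul_nonneg (he0 j this) (pow_nonneg (inv_nonneg.mpr hr0.le) j)
  refine ⟨M, hM0, ?_⟩
  intro k
  induction k using Nat.strong_induction_on with
  | _ k ih =>
    intro hk
    show e k ≤ A + M * r ^ k
    by_cases hcase : k < k1 + P
    · -- base case
      have hmem : k ∈ Finset.Ico k1 (k1 + P) := Finset.mem_Ico.mpr ⟨hk, hcase⟩
      have hle : e k * (r⁻¹) ^ k ≤ M := by
        apply Finset.single_le_sum (f := fun j => e j * (r⁻¹) ^ j) _ hmem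
        intro j hj
        exact mul_nonneg (he0 j (Finset.mem_Ico.mp hj).1) (pow_nonneg (inv_nonneg.mpr hr0.le) j)
      have hrk : (0:ℝ) < r ^ k := pow_pos hr0 k
      have : e k ≤ M * r ^ k := by
        have h4 := mul_le_mul_of_nonneg_right hle hrk.le
        have h5 : e k * (r⁻¹) ^ k * r ^ k = e k := by
          rw [mul_assoc, ← mul_pow, inv_mul_cancel₀ hr0.ne', one_pow, mul_one]
        linarith [h4, h5 ▸ h4]
      linarith
    · push_neg at hcase
      have hPk : P ≤ k := by omega
      have hrec' := hrec k hcase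
      have hstep : ∑ i ∈ Finset.Icc 1 P, (P.choose i : ℝ) * e (k - i)
          ≤ ∑ i ∈ Finset.Icc 1 P, (P.choose i : ℝ) * (A + M * r ^ (k - i)) := by
        apply Finset.sum_le_sum
        intro i hi
        obtain ⟨hi1, hi2⟩ := Finset.mem_Icc.mp hi
        have hki : k - i < k := by omega
        have hk1i : k1 ≤ k - i := by omega
        exact mul_le_mul_of_nonneg_left (ih (k - i) hki hk1i) (by positivity)
      have hsplit : ∑ i ∈ Finset.Icc 1 P, (P.choose i : ℝ) * (A + M * r ^ (k - i))
          = ((2:ℝ) ^ P - 1) * A + M * r ^ (k - P) *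
            ∑ i ∈ Finset.Icc 1 P, (P.choose i : ℝ) * r ^ (P - i) := by
        rw [Finset.mul_sum, ← hsum2, Finset.sum_mul, ← Finset.sum_add_distrib]
        apply Finset.sum_congr rfl
        intro i hi
        obtain ⟨hi1, hi2⟩ := Finset.mem_Icc.mp hi
        have hpow : r ^ (k - i) = r ^ (k - P) * r ^ (P - i) := by
          rw [← pow_add]; congr 1; omega
        rw [hpow]; ring
      have hrk : r ^ (k - P) * r ^ P = r ^ k := by
        rw [← pow_add]; congr 1; omega
      have hX : γ * (M * r ^ (k - P) * ∑ i ∈ Finset.Icc 1 P, (P.choose i : ℝ) * r ^ (P - i))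
          = M * r ^ k := by
        calc γ * (M * r ^ (k - P) * ∑ i ∈ Finset.Icc 1 P, (P.choose i : ℝ) * r ^ (P - i))
            = M * r ^ (k - P) * (γ * ∑ i ∈ Finset.Icc 1 P, (P.choose i : ℝ) * r ^ (P - i)) := by
              ring
          _ = M * r ^ (k - P) * r ^ P := by rw [hchar]
          _ = M * (r ^ (k - P) * r ^ P) := by ring
          _ = M * r ^ k := by rw [hrk]
      have hfin : γ * (((2:ℝ) ^ P - 1) * A + M * r ^ (k - P) *
            ∑ i ∈ Finset.Icc 1 P, (P.choose i : ℝ) * r ^ (P - i)) + b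
          = A + M * r ^ k := by
        linear_combination hX + hAeq
      calc e k ≤ γ * ∑ i ∈ Finset.Icc 1 P, (P.choose i : ℝ) * e (k - i) + b := hrec'
        _ ≤ γ * ∑ i ∈ Finset.Icc 1 P, (P.choose i : ℝ) * (A + M * r ^ (k - i)) + b := by
            have := mul_le_mul_of_nonneg_left hstep hγ0.le
            linarith
        _ = A + M * r ^ k := by rw [hsplit, hfin]
end

section
/- Let P ≥ 1 be an integer, 0 ≤ γ < 1/(2^P − 1), b ≥ 0, and let k1 ≥ 0 be an integer. Let (e_k)_{k ≥ k1} be a sequence of nonnegative reals satisfying e_k ≤ γ·Σ_{i=1}^{P} binom(P,i)·e_{k−i} + b for all k ≥ k1 + P. Then limsup_{k→∞} e_k ≤ b/(1 − (2^P − 1)γ). -/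
/-- Asymptotic form of the SHARP tracking-error recursion: if
`e_k ≤ γ·Σ_{i=1}^P binom(P,i)·e_{k−i} + b` for all `k ≥ k1 + P` with
`γ < 1/(2^P − 1)`, then `limsup_k e_k ≤ b/(1 − (2^P − 1)γ)`. -/
theorem sharp_recursion_limsup
    (P : ℕ) (hP : 1 ≤ P) (γ b : ℝ) (hγ0 : 0 ≤ γ)
    (hγ1 : γ < 1 / (2 ^ P - 1)) (hb : 0 ≤ b)
    (k1 : ℕ) (e : ℕ → ℝ) (he0 : ∀ k, k1 ≤ k → 0 ≤ e k)
    (hrec : ∀ k, k1 + P ≤ k →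
      e k ≤ γ * ∑ i ∈ Finset.Icc 1 P, (P.choose i : ℝ) * e (k - i) + b) :
    Filter.limsup e Filter.atTop ≤ b / (1 - (2 ^ P - 1) * γ) := by
  have hc1 : (1:ℝ) ≤ 2 ^ P - 1 := by
    have : (2:ℝ) ≤ 2 ^ P := by
      calc (2:ℝ) = 2 ^ 1 := by ring
      _ ≤ 2 ^ P := by exact pow_le_pow_right₀ (by norm_num) hP
    linarith
  have hc0 : (0:ℝ) < 2 ^ P - 1 := by linarith
  have hγc : (2 ^ P - 1) * γ < 1 := by
    have := (lt_div_iff₀ hc0).mp hγ1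
    linarith
  have hden : (0:ℝ) < 1 - (2 ^ P - 1) * γ := by linarith
  set M : ℝ := b / (1 - (2 ^ P - 1) * γ) with hMdef
  have hM0 : 0 ≤ M := div_nonneg hb (le_of_lt hden)
  have hM : M * (1 - (2 ^ P - 1) * γ) = b := div_mul_cancel₀ b (ne_of_gt hden)
  -- sum of binomials
  have hins : Finset.range (P+1) = insert 0 (Finset.Icc 1 P) := by
    ext x
    simp only [Finset.mem_range, Finset.mem_insert, Finset.mem_Icc, Nat.lt_succ_iff]
    omega
  have hsum : ∑ i ∈ Finset.Icc 1 P, (P.choose i : ℝ) = 2 ^ P - 1 := by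
    have h := Nat.sum_range_choose P
    have h2 : ∑ i ∈ Finset.range (P+1), (P.choose i : ℝ) = 2 ^ P := by
      exact_mod_cast congrArg (Nat.cast : ℕ → ℝ) h
    rw [hins, Finset.sum_insert (by simp)] at h2
    simp only [Nat.choose_zero_right, Nat.cast_one] at h2
    linarith
  -- a generic bound for the recursion
  have hstep : ∀ (k : ℕ) (X : ℝ), k1 + P ≤ k →
      (∀ i ∈ Finset.Icc 1 P, e (k - i) ≤ X) →
      e k ≤ γ * ((2 ^ P - 1) * X) + b := by
    intro k X hk hX
    have h1 := hrec k hk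
    have h2 : ∑ i ∈ Finset.Icc 1 P, (P.choose i : ℝ) * e (k - i)
        ≤ ∑ i ∈ Finset.Icc 1 P, (P.choose i : ℝ) * X := by
      apply Finset.sum_le_sum
      intro i hi
      exact mul_le_mul_of_nonneg_left (hX i hi) (Nat.cast_nonneg _)
    rw [← Finset.sum_mul, hsum] at h2
    have := mul_le_mul_of_nonneg_left h2 hγ0
    linarith
  -- boundedness
  set S : ℝ := ∑ j ∈ Finset.Ico k1 (k1 + P), e j with hSdef
  have hS0 : 0 ≤ S := Finset.sum_nonneg (fun j hj => he0 j (Finset.mem_Ico.mp hj).1)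
  set B : ℝ := M + S with hBdef
  have hMB : M ≤ B := by simp [hBdef]; linarith
  have hbd : ∀ k, k1 ≤ k → e k ≤ B := by
    intro k
    induction k using Nat.strong_induction_on with
    | _ k ih =>
      intro hk
      by_cases hkP : k1 + P ≤ k
      · have h := hstep k B hkP ?_
        · nlinarith
        · intro i hi
          obtain ⟨hi1, hi2⟩ := Finset.mem_Icc.mp hi
          exact ih (k - i) (by omega) (by omega)
      · have hmem : k ∈ Finset.Ico k1 (k1 + P) := Finset.mem_Ico.mpr ⟨hk, by omega⟩
        have : e k ≤ S :=
          Finset.single_le_sum (fun j hj => he0 j (Finset.mem_Ico.mp hj).1) hmem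
        linarith
  have hbdd : Filter.IsBoundedUnder (· ≤ ·) Filter.atTop e := by
    refine ⟨B, ?_⟩
    rw [Filter.eventually_map]
    filter_upwards [Filter.eventually_ge_atTop k1] with k hk using hbd k hk
  have hcob : Filter.IsCoboundedUnder (· ≤ ·) Filter.atTop e := by
    apply Filter.isCoboundedUnder_le_of_eventually_le Filter.atTop (x := (0:ℝ))
    filter_upwards [Filter.eventually_ge_atTop k1] with k hk using he0 k hk
  set L : ℝ := Filter.limsup e Filter.atTop with hLdef
  have hL : ∀ ε > (0:ℝ), L ≤ γ * ((2 ^ P - 1) * (L + ε)) + b := by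
    intro ε hε
    have hlt : ∀ᶠ k in Filter.atTop, e k < L + ε :=
      Filter.eventually_lt_of_limsup_lt (by linarith) hbdd
    obtain ⟨N, hN⟩ := Filter.eventually_atTop.mp hlt
    apply Filter.limsup_le_of_le hcob
    filter_upwards [Filter.eventually_ge_atTop (max (N + P) (k1 + P))] with k hk
    have hk1 : k1 + P ≤ k := le_trans (le_max_right _ _) hk
    have hk2 : N + P ≤ k := le_trans (le_max_left _ _) hk
    apply hstep k (L + ε) hk1
    intro i hi
    obtain ⟨hi1, hi2⟩ := Finset.mem_Icc.mp hi
    exact le_of_lt (hN (k - i) (by omega))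
  have hLfix : L ≤ γ * ((2 ^ P - 1) * L) + b := by
    apply le_of_forall_pos_le_add
    intro ε hε
    have hpos : (0:ℝ) < γ * (2 ^ P - 1) + 1 := by positivity
    have hδ : (0:ℝ) < ε / (γ * (2 ^ P - 1) + 1) := by positivity
    have := hL _ hδ
    have hle : γ * (2 ^ P - 1) * (ε / (γ * (2 ^ P - 1) + 1)) ≤ ε := by
      rw [mul_comm, div_mul_eq_mul_div, div_le_iff₀ hpos]
      nlinarith [mul_nonneg hγ0 (le_of_lt hc0)]
    nlinarith
  rw [hLdef, ← hMdef] at *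
  nlinarith
end

section
/- Let P ≥ 1 be an integer and γ > 0 a real number. Consider the complex polynomial q(z) = (1 + γ)·z^P − γ·(z + 1)^P, which equals z^P − γ·Σ_{i=1}^{P} binom(P,i)·z^{P−i}. Then the roots of q in ℂ are exactly the P numbers z_j = ( (1 + γ^{−1})^{1/P}·exp(2πi·j/P) − 1 )^{−1} for j = 0, 1, …, P−1 (where (1+γ^{−1})^{1/P} denotes the positive real P-th root), these P roots are pairwise distinct, and every root z of q satisfies |z| ≤ ( (1 + γ^{−1})^{1/P} − 1 )^{−1}, with equality attained at j = 0. Moreover ((1 + γ^{−1})^{1/P} − 1)^{−1} < 1 if and only if γ < 1/(2^P − 1). -/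
/-- The `j`-th root `((1+γ⁻¹)^{1/P}·exp(2πij/P) − 1)⁻¹` of the characteristic
polynomial `(1+γ)z^P − γ(z+1)^P` of the SHARP error recursion. -/
noncomputable def sharpCharRoot (P : ℕ) (γ : ℝ) (j : ℕ) : ℂ :=
  ((((1 + γ⁻¹) ^ ((1 : ℝ) / P) : ℝ) : ℂ)
      * Complex.exp (2 * Real.pi * Complex.I * j / P) - 1)⁻¹

/-- Characterization of the roots of the characteristic polynomial
`q(z) = (1+γ)z^P − γ(z+1)^P = z^P − γΣ_{i=1}^P binom(P,i)z^{P−i}`: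
they are exactly `sharpCharRoot P γ j` for `j = 0,…,P−1`, pairwise distinct,
with maximal modulus `((1+γ⁻¹)^{1/P} − 1)⁻¹` attained at `j = 0`, and this
modulus is `< 1` iff `γ < 1/(2^P − 1)`. -/
theorem sharp_characteristic_polynomial_roots
    (P : ℕ) (hP : 1 ≤ P) (γ : ℝ) (hγ : 0 < γ) :
    (∀ z : ℂ, (1 + (γ : ℂ)) * z ^ P - (γ : ℂ) * (z + 1) ^ P
        = z ^ P - (γ : ℂ) * ∑ i ∈ Finset.Icc 1 P, (P.choose i : ℂ) * z ^ (P - i)) ∧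
    (∀ z : ℂ, (1 + (γ : ℂ)) * z ^ P - (γ : ℂ) * (z + 1) ^ P = 0 ↔
        ∃ j < P, z = sharpCharRoot P γ j) ∧
    (∀ j1 < P, ∀ j2 < P, sharpCharRoot P γ j1 = sharpCharRoot P γ j2 → j1 = j2) ∧
    (∀ z : ℂ, (1 + (γ : ℂ)) * z ^ P - (γ : ℂ) * (z + 1) ^ P = 0 →
        ‖z‖ ≤ ((1 + γ⁻¹) ^ ((1 : ℝ) / P) - 1)⁻¹) ∧
    (‖sharpCharRoot P γ 0‖ = ((1 + γ⁻¹) ^ ((1 : ℝ) / P) - 1)⁻¹) ∧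
    (((1 + γ⁻¹) ^ ((1 : ℝ) / P) - 1)⁻¹ < 1 ↔ γ < 1 / (2 ^ P - 1)) := by
  have hPne : P ≠ 0 := by omega
  haveI : NeZero P := ⟨hPne⟩
  have hPR : (0:ℝ) < P := by positivity
  have hγc : (γ:ℂ) ≠ 0 := by exact_mod_cast ne_of_gt hγ
  have hc1 : (1:ℝ) < 1 + γ⁻¹ := by have := inv_pos.mpr hγ; linarith
  have hc0 : (0:ℝ) ≤ 1 + γ⁻¹ := by linarith
  set r : ℝ := (1 + γ⁻¹) ^ ((1:ℝ)/P) with hrdef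
  have hr1 : 1 < r :=
    Real.one_lt_rpow_iff_of_pos (by linarith) |>.mpr (Or.inl ⟨hc1, by positivity⟩)
  have hrP : r ^ P = 1 + γ⁻¹ := by
    rw [hrdef, ← Real.rpow_natCast ((1+γ⁻¹) ^ ((1:ℝ)/P)) P, ← Real.rpow_mul hc0,
      one_div_mul_cancel (ne_of_gt hPR), Real.rpow_one]
  have hr0 : ((r:ℂ)) ≠ 0 := by
    simp only [ne_eq, Complex.ofReal_eq_zero]; intro h; rw [h] at hr1; linarith
  set ζ : ℂ := Complex.exp (2 * Real.pi * Complex.I / P) with hζdef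
  have hζ : IsPrimitiveRoot ζ P := Complex.isPrimitiveRoot_exp P hPne
  have hω : ∀ j : ℕ, ζ ^ j = Complex.exp (2 * Real.pi * Complex.I * j / P) := by
    intro j
    rw [hζdef, ← Complex.exp_nat_mul]
    ring_nf
  have hroot : ∀ j : ℕ, sharpCharRoot P γ j = ((r:ℂ) * ζ ^ j - 1)⁻¹ := by
    intro j; rw [sharpCharRoot, hω]
  have hωabs : ∀ j : ℕ, ‖ζ ^ j‖ = 1 := by
    intro j
    have h1 : ‖ζ‖ = 1 := by
      exact hζ.norm'_eq_one hPne
    rw [norm_pow, h1, one_pow]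
  have key : ∀ j : ℕ, r - 1 ≤ ‖(r:ℂ) * ζ ^ j - 1‖ := by
    intro j
    have habs : ‖(r:ℂ) * ζ ^ j‖ = r := by
      rw [norm_mul, hωabs, mul_one, Complex.norm_real, Real.norm_eq_abs, abs_of_pos (by linarith)]
    have := norm_sub_norm_le ((r:ℂ) * ζ ^ j) 1
    rwa [habs, norm_one] at this
  have keyne : ∀ j : ℕ, ((r:ℂ) * ζ ^ j - 1) ≠ 0 := by
    intro j h
    have := key j
    rw [h, norm_zero] at this
    linarith
  have hrc : ((r:ℂ)) ^ P = ((1 + γ⁻¹ : ℝ) : ℂ) := by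
    rw [← hrP]; norm_cast
  have main : ∀ z : ℂ, (1 + (γ : ℂ)) * z ^ P - (γ : ℂ) * (z + 1) ^ P = 0 ↔
      ∃ j < P, z = sharpCharRoot P γ j := by
    intro z
    constructor
    · intro hz
      rw [sub_eq_zero] at hz
      have hz0 : z ≠ 0 := by
        rintro rfl
        rw [zero_pow hPne, mul_zero, zero_add, one_pow, mul_one] at hz
        exact hγc hz.symm
      set w : ℂ := (z + 1) / z with hwdef
      have hwP : w ^ P = ((1 + γ⁻¹ : ℝ) : ℂ) := by
        rw [hwdef, div_pow]
        rw [div_eq_iff (pow_ne_zero P hz0)]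
        push_cast
        field_simp
        linear_combination (-1 : ℂ) * hz
      have hrcne : ((1 + γ⁻¹ : ℝ) : ℂ) ≠ 0 := by
        simp only [ne_eq, Complex.ofReal_eq_zero]; linarith
      have hwr : (w / (r:ℂ)) ^ P = 1 := by
        rw [div_pow, hwP, hrc, div_self hrcne]
      obtain ⟨j, hj, hjw⟩ := hζ.eq_pow_of_pow_eq_one hwr
      refine ⟨j, hj, ?_⟩
      rw [eq_div_iff hr0] at hjw
      have hwval : w = (r:ℂ) * ζ ^ j := by rw [← hjw]; ring
      have hzinv : z⁻¹ = w - 1 := by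
        rw [hwdef]; field_simp; ring
      rw [hroot, ← hwval, ← hzinv, inv_inv]
    · rintro ⟨j, hj, rfl⟩
      rw [hroot]
      set w : ℂ := (r:ℂ) * ζ ^ j with hwdef
      have hw1 : w - 1 ≠ 0 := keyne j
      have hz1 : (w - 1)⁻¹ + 1 = w * (w - 1)⁻¹ := by field_simp; ring
      have hwP : w ^ P = 1 + (γ:ℂ)⁻¹ := by
        rw [hwdef, mul_pow, ← pow_mul, mul_comm j P, pow_mul, hζ.pow_eq_one, one_pow,
          mul_one, hrc]
        push_cast
        ring
      have hγinv : (γ:ℂ) * (1 + (γ:ℂ)⁻¹) = 1 + γ := by field_simp; ring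
      rw [hz1, mul_pow, hwP]
      linear_combination (-((w - 1)⁻¹ ^ P)) * hγinv
  refine ⟨?_, main, ?_, ?_, ?_, ?_⟩
  · -- expansion
    intro z
    have h1 : (z + 1 : ℂ)^P
        = z ^ P + ∑ i ∈ Finset.Icc 1 P, (P.choose i : ℂ) * z ^ (P - i) := by
      rw [add_comm, add_pow, Finset.sum_range_succ']
      have : ∑ i ∈ Finset.Icc 1 P, (P.choose i : ℂ) * z ^ (P - i)
          = ∑ k ∈ Finset.range P, (P.choose (k+1) : ℂ) * z ^ (P - (k+1)) := by
        rw [← Finset.Ico_add_one_right_eq_Icc, Finset.sum_Ico_eq_sum_range]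
        simp [add_comm]
      rw [this]
      simp [mul_comm, add_comm]
    rw [h1]
    ring
  · -- distinctness
    intro j1 hj1 j2 hj2 heq
    rw [hroot, hroot] at heq
    have := inv_injective heq
    have h2 : ζ ^ j1 = ζ ^ j2 := by
      have h3 : (r:ℂ) * ζ ^ j1 = (r:ℂ) * ζ ^ j2 := by
        have := sub_left_injective this
        linear_combination this
      exact mul_left_cancel₀ hr0 h3
    exact hζ.pow_inj hj1 hj2 h2
  · -- bound
    intro z hz
    obtain ⟨j, hj, rfl⟩ := (main z).mp hz
    rw [hroot, norm_inv]
    have h1 : (0:ℝ) < r - 1 := by linarith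
    exact inv_anti₀ h1 (key j)
  · -- value at 0
    rw [hroot, pow_zero, mul_one, norm_inv]
    have : ((r:ℂ)) - 1 = ((r - 1 : ℝ) : ℂ) := by push_cast; ring
    rw [this, Complex.norm_real, Real.norm_eq_abs, abs_of_pos (by linarith)]
  · -- final iff
    have h2P : (0:ℝ) < 2 ^ P - 1 := by
      have : (2:ℝ) ^ 1 ≤ 2 ^ P := pow_le_pow_right₀ (by norm_num) hP
      simp at this; linarith
    constructor
    · intro h
      have h1 : (0:ℝ) < r - 1 := by linarith
      have h2 : 1 < r - 1 := by
        by_contra hcon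
        push_neg at hcon
        have := (inv_lt_one_iff₀).mp h
        rcases this with h' | h'
        · linarith
        · linarith
      have h3 : (2:ℝ) < r := by linarith
      have h4 : (2:ℝ) ^ P < r ^ P :=
        pow_lt_pow_left₀ h3 (by norm_num) hPne
      rw [hrP] at h4
      have h5 : (2:ℝ) ^ P - 1 < γ⁻¹ := by linarith
      rw [one_div]
      have := inv_strictAnti₀ h2P h5
      rwa [inv_inv] at this
    · intro h
      rw [one_div] at h
      have h5 : (2:ℝ) ^ P - 1 < γ⁻¹ := by
        have := inv_strictAnti₀ hγ h
        rwa [inv_inv] at this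
      have h4 : (2:ℝ) ^ P < r ^ P := by rw [hrP]; linarith
      have h3 : (2:ℝ) < r := by
        have := (pow_lt_pow_iff_left₀ (by norm_num) (by linarith) hPne).mp h4
        exact this
      have h1 : (0:ℝ) < r - 1 := by linarith
      rw [inv_lt_one_iff₀]
      right; linarith
end

section
/- Let E be a finite-dimensional real inner product space, h > 0, t_k = k·h, and let f : E × ℝ → ℝ be differentiable in x. Assume: (i) (smoothness) ‖∇_x f(x;t) − ∇_x f(y;t)‖ ≤ L·‖x − y‖ for all x,y and t ≥ 0; (ii) (strong convexity) ⟨∇_x f(x;t) − ∇_x f(y;t), x − y⟩ ≥ μ·‖x − y‖² for all x,y and t ≥ 0, with 0 < μ ≤ L; (iii) x* : ℝ → E, with ∇_x f(x*(t); t) = 0 for all t ≥ 0, is P-times differentiable with σ_P := sup_{t ≥ 0}‖(x*)^{(P)}(t)‖ < ∞, where P ≥ 1. Fix a step size α ∈ (0, 2/L), set θ := max{|1 − αμ|, |1 − αL|} < 1, and let C be an integer with C > log(2^P − 1)/log(1/θ). Define sequences by: x_{−P+1} = ⋯ = x_{−1} = x_0 ∈ E arbitrary; for k ≥ 1, x̂_k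 := Σ_{i=1}^{P} (−1)^{i−1} binom(P,i) x_{k−i}, and x_k := G^C(x̂_k) where G(y) := y − α∇_x f(y; t_k) is one gradient-descent step on f(·; t_k). Then limsup_{k→∞} ‖x̂_k − x*(t_k)‖ ≤ σ_P·h^P / (1 − (2^P − 1)·θ^C). -/
open Set Finset Filter

section Aux
variable {E : Type*} [NormedAddCommGroup E] [InnerProductSpace ℝ E]



lemma line_deriv {F : E → ℝ} {G : E → E}
    (hG : ∀ x, HasFDerivAt F (innerSL ℝ (G x)) x) (y dd : E) (s : ℝ) :
    HasDerivAt (fun s : ℝ => F (y + s • dd)) ((inner ℝ (G (y + s • dd)) dd : ℝ)) s := by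
  have h1 : HasDerivAt (fun s : ℝ => y + s • dd) dd s := by
    simpa using ((hasDerivAt_id s).smul_const dd).const_add y
  simpa [Function.comp_def] using (hG (y + s • dd)).comp_hasDerivAt s h1

lemma lower_bd2 {F : E → ℝ} {G : E → E}
    (hG : ∀ x, HasFDerivAt F (innerSL ℝ (G x)) x)
    (hmono : ∀ a b : E, (0:ℝ) ≤ inner ℝ (G a - G b) (a - b)) (x y : E) :
    F y + (inner ℝ (G y) (x - y) : ℝ) ≤ F x := by
  rcases eq_or_ne x y with rfl | hxy
  · simp
  set dd := x - y with hdd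
  have hψ := fun s => line_deriv hG y dd s
  have hcont : ContinuousOn (fun s : ℝ => F (y + s • dd)) (Icc 0 1) :=
    fun s _ => (hψ s).continuousAt.continuousWithinAt
  obtain ⟨c, hc, hceq⟩ := exists_hasDerivAt_eq_slope (fun s : ℝ => F (y + s • dd))
    (fun s => (inner ℝ (G (y + s • dd)) dd : ℝ)) one_pos hcont (fun s _ => hψ s)
  have h1 : y + (1:ℝ) • dd = x := by simp [hdd]
  have h0 : y + (0:ℝ) • dd = y := by simp
  have hkey : (inner ℝ (G y) dd : ℝ) ≤ inner ℝ (G (y + c • dd)) dd := by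
    have := hmono (y + c • dd) y
    have he : (y + c • dd) - y = c • dd := by abel
    rw [he, real_inner_smul_right] at this
    have h2 : (0:ℝ) ≤ (inner ℝ (G (y + c • dd) - G y) dd : ℝ) :=
      nonneg_of_mul_nonneg_right (by linarith [this]) hc.1
    rw [inner_sub_left] at h2
    linarith
  have : (inner ℝ (G (y + c • dd)) dd : ℝ) = F x - F y := by
    rw [hceq, h1, h0]; ring
  linarith [hkey.trans_eq this]

lemma descent_bd2 {F : E → ℝ} {G : E → E} {K : ℝ} (hK : 0 ≤ K)
    (hG : ∀ x, HasFDerivAt F (innerSL ℝ (G x)) x)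
    (hlip : ∀ a b : E, ‖G a - G b‖ ≤ K * ‖a - b‖) (x z : E) :
    F z ≤ F x + (inner ℝ (G x) (z - x) : ℝ) + K / 2 * ‖z - x‖ ^ 2 := by
  set dd := z - x with hdd
  set cc : ℝ := (inner ℝ (G x) dd : ℝ) with hcc
  set nn : ℝ := ‖dd‖ ^ 2 with hnn
  set w : ℝ → ℝ := fun s => F (x + s • dd) - s * cc - K / 2 * s ^ 2 * nn with hw
  have hw' : ∀ s : ℝ, HasDerivAt w
      ((inner ℝ (G (x + s • dd)) dd : ℝ) - cc - K * s * nn) s := by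
    intro s
    have h1 := line_deriv hG x dd s
    have h2 : HasDerivAt (fun s : ℝ => s * cc) cc s := by
      simpa using (hasDerivAt_id s).mul_const cc
    have h3 : HasDerivAt (fun s : ℝ => K / 2 * s ^ 2 * nn) (K / 2 * (2 * s) * nn) s := by
      have := ((hasDerivAt_pow 2 s).const_mul (K / 2)).mul_const nn
      simpa using this
    have := (h1.sub h2).sub h3
    rw [show K * s * nn = K / 2 * (2 * s) * nn by ring]
    exact this
  have hcont : ContinuousOn w (Icc 0 1) := fun s _ => (hw' s).continuousAt.continuousWithinAt
  obtain ⟨c, hc, hceq⟩ := exists_hasDerivAt_eq_slope w _ one_pos hcont (fun s _ => hw' s)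
  have hder_nonpos : (inner ℝ (G (x + c • dd)) dd : ℝ) - cc - K * c * nn ≤ 0 := by
    have hCS : (inner ℝ (G (x + c • dd) - G x) dd : ℝ) ≤ ‖G (x + c • dd) - G x‖ * ‖dd‖ :=
      real_inner_le_norm _ _
    have hl := hlip (x + c • dd) x
    have he : (x + c • dd) - x = c • dd := by abel
    rw [he] at hl
    have hnc : ‖c • dd‖ = c * ‖dd‖ := by
      rw [norm_smul, Real.norm_of_nonneg hc.1.le]
    rw [hnc] at hl
    have : (inner ℝ (G (x + c • dd) - G x) dd : ℝ) ≤ K * c * nn := by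
      calc (inner ℝ (G (x + c • dd) - G x) dd : ℝ) ≤ ‖G (x + c • dd) - G x‖ * ‖dd‖ := hCS
        _ ≤ K * (c * ‖dd‖) * ‖dd‖ := by
            apply mul_le_mul_of_nonneg_right hl (norm_nonneg _)
        _ = K * c * nn := by rw [hnn]; ring
    rw [inner_sub_left] at this
    linarith
  have hw1 : w 1 = F z - cc - K / 2 * nn := by simp [hw, hdd]
  have hw0 : w 0 = F x := by simp [hw]
  rw [hw1, hw0] at hceq
  have : F z - cc - K / 2 * nn - F x ≤ 0 := by
    have := hceq ▸ hder_nonpos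
    -- hceq : f' c = (w 1 - w 0)/(1-0)
    nlinarith [hceq, hder_nonpos]
  linarith


lemma coco_bd2 {F : E → ℝ} {G : E → E} {K : ℝ} (hK : 0 < K)
    (hB : ∀ x y : E, F y + (inner ℝ (G y) (x - y) : ℝ) ≤ F x)
    (hC : ∀ x z : E, F z ≤ F x + (inner ℝ (G x) (z - x) : ℝ) + K / 2 * ‖z - x‖ ^ 2)
    (x y : E) :
    ‖G x - G y‖ ^ 2 ≤ K * (inner ℝ (G x - G y) (x - y) : ℝ) := by
  have key : ∀ a b : E, F b + (inner ℝ (G b) (a - b) : ℝ)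
      + K⁻¹ / 2 * ‖G a - G b‖ ^ 2 ≤ F a := by
    intro a b
    set Δ : E := G a - G b with hΔ
    set z : E := a - K⁻¹ • Δ with hz
    have h1 := hB z b
    have h2 := hC a z
    have hza : z - a = -(K⁻¹ • Δ) := by rw [hz]; abel
    have hzb : z - b = (a - b) - K⁻¹ • Δ := by rw [hz]; abel
    rw [hzb, inner_sub_right, real_inner_smul_right] at h1
    rw [hza, inner_neg_right, real_inner_smul_right, norm_neg, norm_smul,
      Real.norm_of_nonneg (inv_nonneg.2 hK.le), mul_pow] at h2
    have hΔΔ : (inner ℝ (G a) Δ : ℝ) - (inner ℝ (G b) Δ : ℝ) = ‖Δ‖ ^ 2 := by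
      rw [← inner_sub_left, ← hΔ, real_inner_self_eq_norm_sq]
    have hKne : K ≠ 0 := hK.ne'
    have e1 : K / 2 * ((K⁻¹) ^ 2 * ‖Δ‖ ^ 2) = K⁻¹ / 2 * ‖Δ‖ ^ 2 := by
      field_simp
    have hm : K⁻¹ * (inner ℝ (G a) Δ : ℝ) - K⁻¹ * (inner ℝ (G b) Δ : ℝ) = K⁻¹ * ‖Δ‖ ^ 2 := by
      rw [← mul_sub, hΔΔ]
    linarith [h1, h2, e1, hm]
  have k1 := key x y
  have k2 := key y x
  have hnn : ‖G y - G x‖ = ‖G x - G y‖ := by rw [← norm_neg]; congr 1; abel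
  have hi : (inner ℝ (G y) (x - y) : ℝ) + (inner ℝ (G x) (y - x) : ℝ)
      = -(inner ℝ (G x - G y) (x - y) : ℝ) := by
    rw [inner_sub_left]
    have : (y - x : E) = -(x - y) := by abel
    rw [this, inner_neg_right]
    ring
  rw [hnn] at k2
  have : K⁻¹ * ‖G x - G y‖ ^ 2 ≤ (inner ℝ (G x - G y) (x - y) : ℝ) := by
    linarith [k1, k2, hi]
  calc ‖G x - G y‖ ^ 2 = K * (K⁻¹ * ‖G x - G y‖ ^ 2) := by field_simp
    _ ≤ K * (inner ℝ (G x - G y) (x - y) : ℝ) := by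
        exact mul_le_mul_of_nonneg_left this hK.le


lemma half_sq_deriv (μ : ℝ) (x : E) :
    HasFDerivAt (fun y : E => μ / 2 * ‖y‖ ^ 2) (innerSL ℝ (μ • x)) x := by
  have h := ((hasFDerivAt_id x).inner ℝ (hasFDerivAt_id x)).const_smul (μ / 2)
  have h2 : HasFDerivAt (fun y : E => μ / 2 * ‖y‖ ^ 2)
      ((μ / 2) • (fderivInnerCLM ℝ ((id x : E), (id x : E))).comp
        ((ContinuousLinearMap.id ℝ E).prod (ContinuousLinearMap.id ℝ E))) x := by
    apply h.congr_of_eventuallyEq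
    filter_upwards with y
    simp only [id_eq, real_inner_self_eq_norm_sq, smul_eq_mul, Pi.smul_apply]
  have e : innerSL ℝ (μ • x) = (μ / 2) • (fderivInnerCLM ℝ ((id x : E), (id x : E))).comp
        ((ContinuousLinearMap.id ℝ E).prod (ContinuousLinearMap.id ℝ E)) := by
    ext v
    simp [fderivInnerCLM_apply, real_inner_smul_left, real_inner_comm]
    ring
  rw [e]
  exact h2

section
variable {f : E → ℝ → ℝ} {g : E → ℝ → E} {μ L t : ℝ}

lemma strong_coco
    (hgrad : ∀ (x : E), HasFDerivAt (fun y => f y t) (innerSL ℝ (g x t)) x)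
    (hμ : 0 < μ) (hμL : μ ≤ L)
    (hlip : ∀ x y : E, ‖g x t - g y t‖ ≤ L * ‖x - y‖)
    (hmono : ∀ x y : E, μ * ‖x - y‖ ^ 2 ≤ (inner ℝ (g x t - g y t) (x - y) : ℝ))
    (x y : E) :
    ‖g x t - g y t‖ ^ 2 + μ * L * ‖x - y‖ ^ 2
      ≤ (μ + L) * (inner ℝ (g x t - g y t) (x - y) : ℝ) := by
  set A := ‖x - y‖
  set B := ‖g x t - g y t‖
  set I : ℝ := inner ℝ (g x t - g y t) (x - y)
  have e1 : ‖(g x t - g y t) - μ • (x - y)‖ ^ 2 = B ^ 2 - 2 * (μ * I) + μ ^ 2 * A ^ 2 := by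
    rw [norm_sub_sq_real, real_inner_smul_right, norm_smul, Real.norm_of_nonneg hμ.le, mul_pow]
  rcases eq_or_lt_of_le hμL with rfl | hlt
  · -- μ = L
    have h1 := hmono x y
    have h2 := hlip x y
    have h3 : ‖(g x t - g y t) - μ • (x - y)‖ ^ 2 ≤ 0 := by
      rw [e1]
      nlinarith [norm_nonneg (g x t - g y t), norm_nonneg (x - y)]
    nlinarith [e1, sq_nonneg ‖(g x t - g y t) - μ • (x - y)‖]
  · -- μ < L
    set Ft : E → ℝ := fun z => f z t - μ / 2 * ‖z‖ ^ 2 with hFt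
    set Gt : E → E := fun z => g z t - μ • z with hGt
    have hG : ∀ z, HasFDerivAt Ft (innerSL ℝ (Gt z)) z := by
      intro z
      have := (hgrad z).sub (half_sq_deriv μ z)
      simpa [hGt, hFt, map_sub, Pi.sub_def] using this
    have hGsub : ∀ a b : E, Gt a - Gt b = (g a t - g b t) - μ • (a - b) := by
      intro a b; simp only [hGt, smul_sub]; abel
    have hIG : ∀ a b : E, (inner ℝ (Gt a - Gt b) (a - b) : ℝ)
        = (inner ℝ (g a t - g b t) (a - b) : ℝ) - μ * ‖a - b‖ ^ 2 := by
      intro a b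
      rw [hGsub, inner_sub_left, real_inner_smul_left, real_inner_self_eq_norm_sq]
    have hB : ∀ a b : E, Ft b + (inner ℝ (Gt b) (a - b) : ℝ) ≤ Ft a :=
      lower_bd2 hG (fun a b => by rw [hIG]; linarith [hmono a b])
    have hCf : ∀ a z : E, f z t ≤ f a t + (inner ℝ (g a t) (z - a) : ℝ) + L / 2 * ‖z - a‖ ^ 2 :=
      descent_bd2 (hμ.trans_le hμL).le (fun z => hgrad z) hlip
    have hC : ∀ a z : E, Ft z ≤ Ft a + (inner ℝ (Gt a) (z - a) : ℝ)
        + (L - μ) / 2 * ‖z - a‖ ^ 2 := by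
      intro a z
      have hid : ‖z‖ ^ 2 - ‖a‖ ^ 2 - 2 * (inner ℝ a (z - a) : ℝ) = ‖z - a‖ ^ 2 := by
        rw [inner_sub_right, norm_sub_sq_real, real_inner_self_eq_norm_sq, real_inner_comm]
        ring
      have hGa : (inner ℝ (Gt a) (z - a) : ℝ)
          = (inner ℝ (g a t) (z - a) : ℝ) - μ * (inner ℝ a (z - a) : ℝ) := by
        simp only [hGt, inner_sub_left, real_inner_smul_left]
      have h5 := hCf a z
      have hid2 : μ / 2 * (‖z‖ ^ 2 - ‖a‖ ^ 2 - 2 * (inner ℝ a (z - a) : ℝ))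
          = μ / 2 * ‖z - a‖ ^ 2 := by rw [hid]
      simp only [hFt]
      rw [hGa]
      linarith [h5, hid2]
    have hcoco := coco_bd2 (K := L - μ) (by linarith) hB hC x y
    rw [hIG, hGsub] at hcoco
    rw [e1] at hcoco
    linarith [hcoco]

lemma grad_step_contract {xstar : E} {θ α : ℝ}
    (hgrad : ∀ (x : E), HasFDerivAt (fun y => f y t) (innerSL ℝ (g x t)) x)
    (hμ : 0 < μ) (hμL : μ ≤ L)
    (hlip : ∀ x y : E, ‖g x t - g y t‖ ≤ L * ‖x - y‖)
    (hmono : ∀ x y : E, μ * ‖x - y‖ ^ 2 ≤ (inner ℝ (g x t - g y t) (x - y) : ℝ))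
    (hstat : g xstar t = 0)
    (hα0 : 0 < α)
    (hθ : θ = max |1 - α * μ| |1 - α * L|) (y : E) :
    ‖(y - α • g y t) - xstar‖ ≤ θ * ‖y - xstar‖ := by
  have hθ0 : 0 ≤ θ := le_trans (abs_nonneg _) (hθ ▸ le_max_left _ _)
  have hθμ : (1 - α * μ) ^ 2 ≤ θ ^ 2 := by
    rw [← sq_abs (1 - α * μ)]
    exact pow_le_pow_left₀ (abs_nonneg _) (hθ ▸ le_max_left _ _) 2
  have hθL : (1 - α * L) ^ 2 ≤ θ ^ 2 := by
    rw [← sq_abs (1 - α * L)]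
    exact pow_le_pow_left₀ (abs_nonneg _) (hθ ▸ le_max_right _ _) 2
  set A := ‖y - xstar‖ with hA
  set B := ‖g y t - g xstar t‖ with hBdef
  set I : ℝ := inner ℝ (g y t - g xstar t) (y - xstar) with hI
  have hA0 : 0 ≤ A := norm_nonneg _
  have hB0 : 0 ≤ B := norm_nonneg _
  have hm := hmono y xstar
  have hl := hlip y xstar
  have hCS : I ≤ B * A := real_inner_le_norm _ _
  have hsc := strong_coco hgrad hμ hμL hlip hmono y xstar
  have hμAB : μ * A ≤ B := by
    rcases eq_or_lt_of_le hA0 with hA0' | hA0'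
    · have : B ≤ L * A := hl
      nlinarith
    · have : μ * A * A ≤ B * A := by nlinarith
      exact le_of_mul_le_mul_right this hA0'
  have hBμ2 : μ ^ 2 * A ^ 2 ≤ B ^ 2 := by nlinarith
  have hBL2 : B ^ 2 ≤ L ^ 2 * A ^ 2 := by nlinarith
  have hexp : ‖(y - α • g y t) - xstar‖ ^ 2 = A ^ 2 - 2 * α * I + α ^ 2 * B ^ 2 := by
    have harr : (y - α • g y t) - xstar = (y - xstar) - α • (g y t - g xstar t) := by
      rw [hstat]; simp; abel
    rw [harr, norm_sub_sq_real, real_inner_smul_right, norm_smul,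
      Real.norm_of_nonneg hα0.le, mul_pow, real_inner_comm]
    ring
  have hs : 0 < μ + L := by linarith
  have hsq : ‖(y - α • g y t) - xstar‖ ^ 2 ≤ θ ^ 2 * A ^ 2 := by
    rw [hexp]
    have hX1 : 0 ≤ 2 * α * ((μ + L) * I - B ^ 2 - μ * L * A ^ 2) := by nlinarith
    rcases le_or_gt (α * (μ + L)) 2 with hcase | hcase
    · have hX2 : 0 ≤ α * (2 - α * (μ + L)) * (B ^ 2 - μ ^ 2 * A ^ 2) := by
        apply mul_nonneg (mul_nonneg hα0.le (by linarith)) (by linarith)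
      have hid : (μ + L) * ((1 - α * μ) ^ 2 * A ^ 2)
          - (μ + L) * (A ^ 2 - 2 * α * I + α ^ 2 * B ^ 2)
          = 2 * α * ((μ + L) * I - B ^ 2 - μ * L * A ^ 2)
            + α * (2 - α * (μ + L)) * (B ^ 2 - μ ^ 2 * A ^ 2) := by ring
      have hkey : (μ + L) * (A ^ 2 - 2 * α * I + α ^ 2 * B ^ 2)
          ≤ (μ + L) * ((1 - α * μ) ^ 2 * A ^ 2) := by linarith [hX1, hX2, hid]
      have h2 := le_of_mul_le_mul_left hkey hs
      have h3 : (1 - α * μ) ^ 2 * A ^ 2 ≤ θ ^ 2 * A ^ 2 :=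
        mul_le_mul_of_nonneg_right hθμ (sq_nonneg A)
      linarith [h2, h3]
    · have hX2 : 0 ≤ α * (α * (μ + L) - 2) * (L ^ 2 * A ^ 2 - B ^ 2) := by
        apply mul_nonneg (mul_nonneg hα0.le (by linarith)) (by linarith)
      have hid : (μ + L) * ((1 - α * L) ^ 2 * A ^ 2)
          - (μ + L) * (A ^ 2 - 2 * α * I + α ^ 2 * B ^ 2)
          = 2 * α * ((μ + L) * I - B ^ 2 - μ * L * A ^ 2)
            + α * (α * (μ + L) - 2) * (L ^ 2 * A ^ 2 - B ^ 2) := by ring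
      have hkey : (μ + L) * (A ^ 2 - 2 * α * I + α ^ 2 * B ^ 2)
          ≤ (μ + L) * ((1 - α * L) ^ 2 * A ^ 2) := by linarith [hX1, hX2, hid]
      have h2 := le_of_mul_le_mul_left hkey hs
      have h3 : (1 - α * L) ^ 2 * A ^ 2 ≤ θ ^ 2 * A ^ 2 :=
        mul_le_mul_of_nonneg_right hθL (sq_nonneg A)
      linarith [h2, h3]
  have := Real.sqrt_le_sqrt hsq
  rwa [Real.sqrt_sq (norm_nonneg _),
    show θ ^ 2 * A ^ 2 = (θ * A) ^ 2 by ring,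
    Real.sqrt_sq (mul_nonneg hθ0 hA0)] at this

end

end Aux

section Aux2
variable {E : Type*} [NormedAddCommGroup E] [NormedSpace ℝ E]


lemma findiff_shift (m : ℕ) (u : ℝ → E) (h t : ℝ) :
    ∑ i ∈ Finset.range (m + 2), ((-1 : ℝ) ^ i * ((m + 1).choose i : ℝ)) • u (t - i * h)
      = ∑ i ∈ Finset.range (m + 1), ((-1 : ℝ) ^ i * (m.choose i : ℝ)) •
          (u (t - i * h) - u (t - i * h - h)) := by
  set F1 : ℕ → E := fun i => ((-1 : ℝ) ^ i * ((m + 1).choose i : ℝ)) • u (t - i * h) with hF1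
  set G1 : ℕ → E := fun i => ((-1 : ℝ) ^ i * (m.choose i : ℝ)) • u (t - i * h) with hG1
  set H1 : ℕ → E := fun i => ((-1 : ℝ) ^ i * (m.choose i : ℝ)) • u (t - i * h - h) with hH1
  have hA : ∑ i ∈ Finset.range (m + 1), G1 i = ∑ i ∈ Finset.range (m + 2), G1 i := by
    rw [Finset.sum_range_succ (f := G1) (n := m + 1)]
    simp [hG1, Nat.choose_succ_self]
  have hFG : ∀ i, F1 (i + 1) = G1 (i + 1) - H1 i := by
    intro i
    have hc : (((m + 1).choose (i + 1) : ℝ)) = (m.choose (i + 1) : ℝ) + (m.choose i : ℝ) := by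
      rw [Nat.choose_succ_succ]; push_cast; ring
    have harg : t - (↑(i + 1) : ℝ) * h = t - i * h - h := by push_cast; ring
    simp only [hF1, hG1, hH1, hc, harg]
    rw [← sub_smul]
    congr 1
    push_cast
    ring
  have hF0 : F1 0 = G1 0 := by simp [hF1, hG1]
  calc ∑ i ∈ Finset.range (m + 2), F1 i
      = ∑ i ∈ Finset.range (m + 1), F1 (i + 1) + F1 0 := Finset.sum_range_succ' F1 (m + 1)
    _ = ∑ i ∈ Finset.range (m + 1), (G1 (i + 1) - H1 i) + G1 0 := by
        rw [hF0]; congr 1; exact Finset.sum_congr rfl fun i _ => hFG i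
    _ = (∑ i ∈ Finset.range (m + 1), G1 (i + 1) + G1 0)
        - ∑ i ∈ Finset.range (m + 1), H1 i := by
        rw [Finset.sum_sub_distrib]; abel
    _ = ∑ i ∈ Finset.range (m + 2), G1 i - ∑ i ∈ Finset.range (m + 1), H1 i := by
        rw [← Finset.sum_range_succ' G1 (m + 1)]
    _ = ∑ i ∈ Finset.range (m + 1), G1 i - ∑ i ∈ Finset.range (m + 1), H1 i := by rw [hA]
    _ = ∑ i ∈ Finset.range (m + 1), (G1 i - H1 i) := (Finset.sum_sub_distrib _ _).symm
    _ = ∑ i ∈ Finset.range (m + 1), ((-1 : ℝ) ^ i * (m.choose i : ℝ)) •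
          (u (t - i * h) - u (t - i * h - h)) :=
        Finset.sum_congr rfl fun i _ => by simp only [hG1, hH1]; rw [← smul_sub]

lemma findiff_bound (h : ℝ) (hh : 0 ≤ h) :
    ∀ (m : ℕ) (u : ℝ → E) (ds : ℕ → ℝ → E), ds 0 = u →
      (∀ i < m, ∀ s : ℝ, HasDerivAt (ds i) (ds (i + 1) s) s) →
      ∀ (B : ℝ) (t : ℝ), (∀ s : ℝ, t - m * h ≤ s → s ≤ t → ‖ds m s‖ ≤ B) →
      ‖∑ i ∈ Finset.range (m + 1), ((-1 : ℝ) ^ i * (m.choose i : ℝ)) • u (t - i * h)‖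
        ≤ B * h ^ m := by
  intro m
  induction m with
  | zero =>
    intro u ds hds0 _ B t hbd
    simpa [← hds0] using hbd t (by simp) le_rfl
  | succ m ih =>
    intro u ds hds0 hder B t hbd
    rw [findiff_shift m u h t]
    have hder' : ∀ i < m, ∀ s : ℝ,
        HasDerivAt (fun r => ds i r - ds i (r - h)) (ds (i + 1) s - ds (i + 1) (s - h)) s := by
      intro i hi s
      have h1 := hder i (by omega) s
      have h2 : HasDerivAt (fun r : ℝ => ds i (r - h)) (ds (i + 1) (s - h)) s := by
        have hc : HasDerivAt (fun r : ℝ => r - h) 1 s := (hasDerivAt_id s).sub_const h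
        simpa [Function.comp_def] using (hder i (by omega) (s - h)).scomp s hc
      exact h1.sub h2
    have hbd' : ∀ s : ℝ, t - m * h ≤ s → s ≤ t → ‖ds m s - ds m (s - h)‖ ≤ B * h := by
      intro s hs1 hs2
      have hmem : ∀ r ∈ Icc (s - h) s, HasDerivWithinAt (ds m) (ds (m + 1) r) (Icc (s - h) s) r :=
        fun r _ => (hder m (by omega) r).hasDerivWithinAt
      have hnorm : ∀ r ∈ Icc (s - h) s, ‖ds (m + 1) r‖ ≤ B := by
        intro r hr
        apply hbd r (by push_cast; linarith [hr.1]) (by linarith [hr.2])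
      have := Convex.norm_image_sub_le_of_norm_hasDerivWithin_le hmem hnorm (convex_Icc _ _)
        (left_mem_Icc.2 (by linarith)) (right_mem_Icc.2 (by linarith))
      calc ‖ds m s - ds m (s - h)‖ ≤ B * ‖s - (s - h)‖ := this
        _ = B * h := by rw [show s - (s - h) = h by ring, Real.norm_of_nonneg hh]
    have := ih (fun r => u r - u (r - h)) (fun i r => ds i r - ds i (r - h))
      (by funext r; simp [hds0]) hder' (B * h) t
      (by intro s hs1 hs2; exact hbd' s (by push_cast at hs1 ⊢; linarith) hs2)
    calc ‖∑ i ∈ Finset.range (m + 1), ((-1 : ℝ) ^ i * (m.choose i : ℝ)) •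
            (u (t - i * h) - u (t - i * h - h))‖ ≤ B * h * h ^ m := this
      _ = B * h ^ (m + 1) := by ring

end Aux2

open Set Filter


set_option maxHeartbeats 2000000 in
/-- Asymptotic tracking error of the SHARP algorithm (strongly convex case,
acceptance threshold `v = ∞`): with order-`P` Lagrange extrapolation as
prediction and `C` gradient-descent correction steps with step size
`α ∈ (0, 2/L)`, where `C > log(2^P−1)/log(1/θ)` and
`θ = max{|1−αμ|, |1−αL|}`, one has
`limsup_k ‖x̂_k − x*(t_k)‖ ≤ σ_P h^P / (1 − (2^P−1)θ^C)`. -/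
theorem sharp_tracking_error_strongly_convex
    {E : Type*} [NormedAddCommGroup E] [InnerProductSpace ℝ E]
    [FiniteDimensional ℝ E]
    (h : ℝ) (hh : 0 < h)
    (f : E → ℝ → ℝ) (g : E → ℝ → E)
    (hgrad : ∀ (x : E) (t : ℝ), HasFDerivAt (fun y => f y t) (innerSL ℝ (g x t)) x)
    (μ L : ℝ) (hμ : 0 < μ) (hμL : μ ≤ L)
    (hlip : ∀ (x y : E) (t : ℝ), 0 ≤ t → ‖g x t - g y t‖ ≤ L * ‖x - y‖)
    (hmono : ∀ (x y : E) (t : ℝ), 0 ≤ t →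
      μ * ‖x - y‖ ^ 2 ≤ (inner ℝ (g x t - g y t) (x - y) : ℝ))
    (P : ℕ) (hP : 1 ≤ P)
    (xs : ℝ → E) (d : ℕ → ℝ → E) (hd0 : d 0 = xs)
    (hderiv : ∀ i < P, ∀ t : ℝ, HasDerivAt (d i) (d (i + 1) t) t)
    (hstat : ∀ t : ℝ, 0 ≤ t → g (xs t) t = 0)
    (σP : ℝ) (hσP : ∀ t : ℝ, 0 ≤ t → ‖d P t‖ ≤ σP)
    (α : ℝ) (hα0 : 0 < α) (hα2 : α < 2 / L)
    (θ : ℝ) (hθ : θ = max |1 - α * μ| |1 - α * L|)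
    (C : ℕ) (hC : Real.log (2 ^ P - 1) / Real.log (1 / θ) < C)
    (xc xhat : ℤ → E)
    (hinit : ∀ k : ℤ, k ≤ 0 → xc k = xc 0)
    (hpred : ∀ k : ℤ, 1 ≤ k → xhat k = ∑ i ∈ Finset.Icc 1 P,
      ((-1 : ℝ) ^ (i - 1) * (P.choose i : ℝ)) • xc (k - i))
    (hcorr : ∀ k : ℤ, 1 ≤ k →
      xc k = (fun y => y - α • g y ((k : ℝ) * h))^[C] (xhat k)) :
    Filter.limsup (fun k : ℤ => ‖xhat k - xs ((k : ℝ) * h)‖) Filter.atTop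
      ≤ σP * h ^ P / (1 - (2 ^ P - 1) * θ ^ C) := by
  have hL : 0 < L := lt_of_lt_of_le hμ hμL
  have hαL2 : α * L < 2 := by
    have := (lt_div_iff₀ hL).1 hα2; linarith
  have hθ0 : 0 ≤ θ := le_trans (abs_nonneg _) (hθ ▸ le_max_left _ _)
  have hθ1 : θ < 1 := by
    rw [hθ, max_lt_iff]
    constructor <;> rw [abs_lt] <;> constructor <;> nlinarith [mul_pos hα0 hμ, mul_pos hα0 hL]
  have h2P : (1:ℝ) ≤ 2 ^ P - 1 := by
    have h1 : (2:ℝ) ^ 1 ≤ 2 ^ P := pow_le_pow_right₀ one_le_two hP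
    norm_num at h1; linarith
  set γ : ℝ := θ ^ C with hγdef
  have hγ0 : 0 ≤ γ := pow_nonneg hθ0 C
  set q : ℝ := (2 ^ P - 1) * γ with hqdef
  have hq0 : 0 ≤ q := mul_nonneg (by linarith) hγ0
  have hq1 : q < 1 := by
    rcases eq_or_lt_of_le hθ0 with h0 | hθpos
    · have hC1 : 1 ≤ C := by
        rcases Nat.eq_zero_or_pos C with rfl | hc
        · exfalso
          rw [← h0] at hC
          simp [Real.log_zero] at hC
        · exact hc
      rw [hqdef, hγdef, ← h0, zero_pow (by omega), mul_zero]
      norm_num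
    · have hlog : 0 < Real.log (1 / θ) := Real.log_pos (by
        rw [lt_div_iff₀ hθpos]; linarith)
      have h1 : Real.log (2 ^ P - 1) < C * Real.log (1 / θ) := (div_lt_iff₀ hlog).1 hC
      have h2 : Real.log (2 ^ P - 1) < Real.log ((1 / θ) ^ C) := by
        rw [Real.log_pow]; push_cast; linarith
      have h3 : (2 ^ P - 1 : ℝ) < (1 / θ) ^ C := by
        have hpos : (0:ℝ) < 2 ^ P - 1 := by linarith
        have hpos2 : (0:ℝ) < (1/θ) ^ C := pow_pos (by positivity) C
        exact (Real.log_lt_log_iff hpos hpos2).1 h2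
      have h4 : (2 ^ P - 1 : ℝ) * θ ^ C < (1 / θ) ^ C * θ ^ C :=
        mul_lt_mul_of_pos_right h3 (pow_pos hθpos C)
      rw [one_div, inv_pow, inv_mul_cancel₀ (pow_ne_zero C hθpos.ne')] at h4
      exact h4
  have hden : 0 < 1 - q := by linarith
  have hσ0 : 0 ≤ σP := le_trans (norm_nonneg _) (hσP 0 le_rfl)
  set S : ℝ := σP * h ^ P with hSdef
  have hS0 : 0 ≤ S := mul_nonneg hσ0 (pow_nonneg hh.le P)
  set ee : ℤ → ℝ := fun k => ‖xc k - xs ((k:ℝ) * h)‖ with hee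
  set eh : ℤ → ℝ := fun k => ‖xhat k - xs ((k:ℝ) * h)‖ with heh
  -- contraction
  have hcontr : ∀ k : ℤ, 1 ≤ k → ee k ≤ γ * eh k := by
    intro k hk
    have hk0 : (0:ℝ) ≤ (k:ℝ) * h := by
      have : (1:ℝ) ≤ (k:ℝ) := by exact_mod_cast hk
      positivity
    have hstep := grad_step_contract (t := (k:ℝ) * h) (fun x => hgrad x _) hμ hμL
      (fun x y => hlip x y _ hk0) (fun x y => hmono x y _ hk0) (hstat _ hk0) hα0 hθ
    have hiter : ∀ (n : ℕ) (z : E),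
        ‖(fun y => y - α • g y ((k:ℝ) * h))^[n] z - xs ((k:ℝ) * h)‖
          ≤ θ ^ n * ‖z - xs ((k:ℝ) * h)‖ := by
      intro n
      induction n with
      | zero => intro z; simp
      | succ n ihn =>
        intro z
        rw [Function.iterate_succ_apply']
        calc ‖(fun y => y - α • g y ((k:ℝ) * h)) ((fun y => y - α • g y ((k:ℝ) * h))^[n] z)
              - xs ((k:ℝ) * h)‖
            ≤ θ * ‖(fun y => y - α • g y ((k:ℝ) * h))^[n] z - xs ((k:ℝ) * h)‖ := hstep _
          _ ≤ θ * (θ ^ n * ‖z - xs ((k:ℝ) * h)‖) := mul_le_mul_of_nonneg_left (ihn z) hθ0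
          _ = θ ^ (n + 1) * ‖z - xs ((k:ℝ) * h)‖ := by ring
    simp only [hee, heh]
    rw [hcorr k hk]
    exact hiter C (xhat k)
  -- choose sum facts
  have hins : Finset.range (P + 1) = insert 0 (Finset.Icc 1 P) := by
    ext i; simp [Finset.mem_range, Finset.mem_Icc, Finset.mem_insert]; omega
  have hsum_choose : ∑ i ∈ Finset.Icc 1 P, (P.choose i : ℝ) = 2 ^ P - 1 := by
    have h1 : ∑ i ∈ Finset.range (P + 1), (P.choose i : ℝ) = 2 ^ P := by
      exact_mod_cast congrArg (Nat.cast : ℕ → ℝ) (Nat.sum_range_choose P)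
    rw [hins, Finset.sum_insert (by simp)] at h1
    simp at h1
    linarith
  -- prediction bound
  have hpredbd : ∀ k : ℤ, (P:ℤ) + 1 ≤ k →
      eh k ≤ ∑ i ∈ Finset.Icc 1 P, (P.choose i : ℝ) * ee (k - i) + S := by
    intro k hk
    have hk1 : (1:ℤ) ≤ k := by
      have : (1:ℤ) ≤ (P:ℤ) := by exact_mod_cast hP
      omega
    set t : ℝ := (k:ℝ) * h with htdef
    have hD : ‖∑ i ∈ Finset.range (P + 1), ((-1:ℝ) ^ i * (P.choose i : ℝ)) • xs (t - i * h)‖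
        ≤ S := by
      have := findiff_bound h hh.le P xs d hd0 hderiv σP t (by
        intro s hs1 hs2
        apply hσP s
        have hkP : ((P:ℝ)) ≤ (k:ℝ) := by exact_mod_cast (by omega : (P:ℤ) ≤ k)
        have : (0:ℝ) ≤ t - (P:ℝ) * h := by
          rw [htdef]; nlinarith [hh.le]
        linarith)
      calc ‖∑ i ∈ Finset.range (P + 1), ((-1:ℝ) ^ i * (P.choose i : ℝ)) • xs (t - i * h)‖
          ≤ σP * h ^ P := this
        _ = S := rfl
    have hDsplit : ∑ i ∈ Finset.range (P + 1), ((-1:ℝ) ^ i * (P.choose i : ℝ)) • xs (t - i * h)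
        = xs t - ∑ i ∈ Finset.Icc 1 P, ((-1:ℝ) ^ (i - 1) * (P.choose i : ℝ)) • xs (t - i * h) := by
      rw [hins, Finset.sum_insert (by simp)]
      simp only [pow_zero, Nat.choose_zero_right, Nat.cast_one, mul_one, one_smul,
        Nat.cast_zero, zero_mul, sub_zero]
      rw [sub_eq_add_neg, ← Finset.sum_neg_distrib]
      congr 1
      apply Finset.sum_congr rfl
      intro i hi
      rw [Finset.mem_Icc] at hi
      obtain ⟨j, rfl⟩ : ∃ j, i = j + 1 := ⟨i - 1, by omega⟩
      rw [← neg_smul]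
      congr 1
      simp [pow_succ]
    have hcast : ∀ i : ℕ, (((k - (i:ℕ) : ℤ)):ℝ) * h = t - (i:ℕ) * h := by
      intro i; rw [htdef]; push_cast; ring
    have hid : xhat k - xs t
        = (∑ i ∈ Finset.Icc 1 P, ((-1:ℝ) ^ (i - 1) * (P.choose i : ℝ)) •
            (xc (k - i) - xs (t - i * h)))
          - ∑ i ∈ Finset.range (P + 1), ((-1:ℝ) ^ i * (P.choose i : ℝ)) • xs (t - i * h) := by
      rw [hpred k hk1, hDsplit]
      simp only [smul_sub]
      rw [Finset.sum_sub_distrib]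
      abel
    have hnorm1 : ‖∑ i ∈ Finset.Icc 1 P, ((-1:ℝ) ^ (i - 1) * (P.choose i : ℝ)) •
        (xc (k - i) - xs (t - i * h))‖ ≤ ∑ i ∈ Finset.Icc 1 P, (P.choose i : ℝ) * ee (k - i) := by
      refine le_trans (norm_sum_le _ _) (Finset.sum_le_sum fun i _ => ?_)
      rw [norm_smul]
      have habs : ‖(-1:ℝ) ^ (i - 1) * (P.choose i : ℝ)‖ = (P.choose i : ℝ) := by
        rw [norm_mul, norm_pow, norm_neg, norm_one, one_pow, one_mul,
          Real.norm_of_nonneg (by positivity)]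
      rw [habs]
      apply mul_le_mul_of_nonneg_left _ (by positivity)
      rw [hee]
      simp only
      rw [hcast i]
    calc eh k = ‖xhat k - xs t‖ := rfl
      _ ≤ ‖∑ i ∈ Finset.Icc 1 P, ((-1:ℝ) ^ (i - 1) * (P.choose i : ℝ)) •
            (xc (k - i) - xs (t - i * h))‖
          + ‖∑ i ∈ Finset.range (P + 1), ((-1:ℝ) ^ i * (P.choose i : ℝ)) • xs (t - i * h)‖ := by
          rw [hid]; exact norm_sub_le _ _
      _ ≤ ∑ i ∈ Finset.Icc 1 P, (P.choose i : ℝ) * ee (k - i) + S := add_le_add hnorm1 hD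
  -- boundedness
  have hIccNe : (Finset.Icc (1:ℤ) (P:ℤ)).Nonempty :=
    Finset.nonempty_Icc.2 (by exact_mod_cast hP)
  set R0 : ℝ := (Finset.Icc (1:ℤ) (P:ℤ)).sup' hIccNe ee with hR0
  set R : ℝ := max R0 (γ * S / (1 - q)) with hR
  have hbound : ∀ k : ℤ, 1 ≤ k → ee k ≤ R := by
    have hclaim : ∀ n : ℕ, ∀ k : ℤ, 1 ≤ k → k ≤ (n:ℤ) → ee k ≤ R := by
      intro n
      induction n with
      | zero => intro k hk1 hk2; omega
      | succ n ihn =>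
        intro k hk1 hk2
        by_cases hkn : k ≤ (n:ℤ)
        · exact ihn k hk1 hkn
        · have hkeq : k = (n:ℤ) + 1 := by push_cast at hk2 ⊢; omega
          by_cases hkP : k ≤ (P:ℤ)
          · exact le_trans (Finset.le_sup' ee (Finset.mem_Icc.2 ⟨hk1, hkP⟩)) (le_max_left _ _)
          · have hkP1 : (P:ℤ) + 1 ≤ k := by omega
            have h1 := hcontr k hk1
            have h2 := hpredbd k hkP1
            have h3 : ∑ i ∈ Finset.Icc 1 P, (P.choose i : ℝ) * ee (k - i)
                ≤ (2 ^ P - 1) * R := by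
              rw [← hsum_choose, Finset.sum_mul]
              refine Finset.sum_le_sum fun i hi => ?_
              rw [Finset.mem_Icc] at hi
              have hle : ee (k - i) ≤ R := by
                apply ihn (k - i) (by omega) (by omega)
              exact mul_le_mul_of_nonneg_left hle (by positivity)
            have h4 : eh k ≤ (2 ^ P - 1) * R + S := by linarith
            have h5 : ee k ≤ γ * ((2 ^ P - 1) * R + S) :=
              le_trans h1 (mul_le_mul_of_nonneg_left h4 hγ0)
            have h6 : γ * S ≤ (1 - q) * R := by
              have h7 : γ * S / (1 - q) ≤ R := le_max_right _ _
              calc γ * S = (1 - q) * (γ * S / (1 - q)) := by field_simp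
                _ ≤ (1 - q) * R := mul_le_mul_of_nonneg_left h7 hden.le
            calc ee k ≤ γ * ((2 ^ P - 1) * R + S) := h5
              _ = q * R + γ * S := by rw [hqdef]; ring
              _ ≤ q * R + (1 - q) * R := by linarith
              _ = R := by ring
    intro k hk
    exact hclaim k.toNat k hk (by omega)
  -- limsup machinery
  have hbddU : Filter.IsBoundedUnder (· ≤ ·) Filter.atTop ee :=
    Filter.isBoundedUnder_of_eventually_le (a := R)
      (Filter.eventually_atTop.2 ⟨1, hbound⟩)
  have hcob_ee : Filter.IsCoboundedUnder (· ≤ ·) Filter.atTop ee :=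
    Filter.isCoboundedUnder_le_of_le Filter.atTop (x := 0) (fun k => norm_nonneg _)
  have hcob_eh : Filter.IsCoboundedUnder (· ≤ ·) Filter.atTop eh :=
    Filter.isCoboundedUnder_le_of_le Filter.atTop (x := 0) (fun k => norm_nonneg _)
  set β : ℝ := Filter.limsup ee Filter.atTop with hβdef
  have hevbound : ∀ ε : ℝ, 0 < ε →
      ∀ᶠ k in Filter.atTop, eh k ≤ (2 ^ P - 1) * (β + ε) + S := by
    intro ε hε
    have h1 : ∀ᶠ k in Filter.atTop, ee k < β + ε :=
      Filter.eventually_lt_of_limsup_lt (by linarith) hbddU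
    obtain ⟨N, hN⟩ := Filter.eventually_atTop.1 h1
    refine Filter.eventually_atTop.2 ⟨max (N + P) ((P:ℤ) + 1), fun k hk => ?_⟩
    have hk1 : (P:ℤ) + 1 ≤ k := le_trans (le_max_right _ _) hk
    have hk2 : N + (P:ℤ) ≤ k := le_trans (le_max_left _ _) hk
    have h2 := hpredbd k hk1
    have h3 : ∑ i ∈ Finset.Icc 1 P, (P.choose i : ℝ) * ee (k - i)
        ≤ (2 ^ P - 1) * (β + ε) := by
      rw [← hsum_choose, Finset.sum_mul]
      refine Finset.sum_le_sum fun i hi => ?_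
      rw [Finset.mem_Icc] at hi
      have : ee (k - i) < β + ε := hN (k - i) (by omega)
      exact mul_le_mul_of_nonneg_left this.le (by positivity)
    linarith
  have hβle : β ≤ γ * S / (1 - q) := by
    have hstep : ∀ ε : ℝ, 0 < ε → β ≤ (q * β + γ * S) + q * ε := by
      intro ε hε
      have h1 : β ≤ γ * ((2 ^ P - 1) * (β + ε) + S) := by
        apply Filter.limsup_le_of_le hcob_ee
        filter_upwards [hevbound ε hε, Filter.eventually_ge_atTop 1] with k h4 h5
        exact le_trans (hcontr k h5) (mul_le_mul_of_nonneg_left h4 hγ0)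
      calc β ≤ γ * ((2 ^ P - 1) * (β + ε) + S) := h1
        _ = (q * β + γ * S) + q * ε := by rw [hqdef]; ring
    have h2 : β ≤ q * β + γ * S := by
      apply le_of_forall_pos_le_add
      intro ε hε
      have := hstep (ε / (q + 1)) (div_pos hε (by linarith : (0:ℝ) < q + 1))
      have h0 : q / (q + 1) ≤ 1 := by
        rw [div_le_one (by linarith)]; linarith
      have hqe : q * (ε / (q + 1)) ≤ ε := by
        calc q * (ε / (q + 1)) = ε * (q / (q + 1)) := by ring
          _ ≤ ε * 1 := mul_le_mul_of_nonneg_left h0 hε.le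
          _ = ε := mul_one ε
      linarith
    rw [le_div_iff₀ hden]
    linarith
  have hfinal : ∀ ε : ℝ, 0 < ε →
      Filter.limsup eh Filter.atTop ≤ (2 ^ P - 1) * (β + ε) + S := fun ε hε =>
    Filter.limsup_le_of_le hcob_eh (hevbound ε hε)
  have h8 : Filter.limsup eh Filter.atTop ≤ (2 ^ P - 1) * β + S := by
    apply le_of_forall_pos_le_add
    intro ε hε
    have h5 := hfinal (ε / (2 ^ P - 1)) (div_pos hε (by linarith))
    have h6 : (2 ^ P - 1 : ℝ) * (ε / (2 ^ P - 1)) = ε := by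
      field_simp
    calc Filter.limsup eh Filter.atTop
        ≤ (2 ^ P - 1) * (β + ε / (2 ^ P - 1)) + S := h5
      _ = (2 ^ P - 1) * β + (2 ^ P - 1) * (ε / (2 ^ P - 1)) + S := by ring
      _ = (2 ^ P - 1) * β + S + ε := by rw [h6]; ring
  have h9 : (2 ^ P - 1) * (γ * S / (1 - q)) + S = S / (1 - q) := by
    field_simp
    rw [hqdef]; ring
  calc Filter.limsup eh Filter.atTop ≤ (2 ^ P - 1) * β + S := h8
    _ ≤ (2 ^ P - 1) * (γ * S / (1 - q)) + S := by
        have := mul_le_mul_of_nonneg_left hβle (by linarith : (0:ℝ) ≤ 2 ^ P - 1)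
        linarith
    _ = S / (1 - q) := h9
    _ = σP * h ^ P / (1 - (2 ^ P - 1) * θ ^ C) := by rw [hSdef, hqdef, hγdef]
end

section
/- Let E be a real inner product space (or ℝⁿ) and let f : E → ℝ be differentiable with gradient ∇f that is L-Lipschitz (‖∇f(x) − ∇f(y)‖ ≤ L‖x − y‖), with finite infimum f* := inf f, and μ-Polyak–Łojasiewicz: (1/(2μ))‖∇f(x)‖² ≥ f(x) − f* for all x, where 0 < μ ≤ L. Fix α ∈ (0, 2/L) and define gradient-descent iterates x^{i+1} = x^i − α∇f(x^i) from an arbitrary x^0. Set θ := 1 − αμ(2 − αL), so 0 ≤ θ < 1. Then for all i ≥ 0: ‖x^{i+1} − x^i‖² ≤ (2α/(2 − αL))·θ^i·(f(x^0) − f*), and consequently for every C ≥ 0 the tail sum satisfies Σ_{i=C}^{∞} ‖x^{i+1} − x^i‖ ≤ (1/(1 − √θ))·√(2α/(2 − αL))·θ^{C/2}·√(f(x^0) − f*); in particular the iterates form a Cauchy sequence. -/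
open Real

lemma gd_descent_aux {E : Type*} [NormedAddCommGroup E] [InnerProductSpace ℝ E]
    (f : E → ℝ) (g : E → E)
    (hgrad : ∀ x : E, HasFDerivAt f (innerSL ℝ (g x)) x)
    (L : ℝ) (hlip : ∀ x y : E, ‖g x - g y‖ ≤ L * ‖x - y‖)
    (x y : E) :
    f y ≤ f x + inner ℝ (g x) (y - x) + L / 2 * ‖y - x‖ ^ 2 := by
  set v := y - x with hv
  set ψ : ℝ → ℝ := fun t => f (x + t • v) - (t * inner ℝ (g x) v + L / 2 * ‖v‖ ^ 2 * t ^ 2) with hψdef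
  have hline : ∀ t : ℝ, HasDerivAt (fun t : ℝ => x + t • v) v t := by
    intro t
    simpa using ((hasDerivAt_id t).smul_const v).const_add x
  have hψ : ∀ t : ℝ, HasDerivAt ψ
      ((inner ℝ (g (x + t • v)) v : ℝ) - (inner ℝ (g x) v + L / 2 * ‖v‖ ^ 2 * (2 * t))) t := by
    intro t
    have h1 : HasDerivAt (fun t : ℝ => f (x + t • v)) ((inner ℝ (g (x + t • v)) v : ℝ)) t := by
      exact (hgrad (x + t • v)).comp_hasDerivAt t (hline t)
    have h2 : HasDerivAt (fun t : ℝ => t * (inner ℝ (g x) v : ℝ) + L / 2 * ‖v‖ ^ 2 * t ^ 2)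
        ((inner ℝ (g x) v : ℝ) + L / 2 * ‖v‖ ^ 2 * (2 * t)) t := by
      have h2a : HasDerivAt (fun t : ℝ => t * (inner ℝ (g x) v : ℝ)) ((inner ℝ (g x) v : ℝ)) t := by
        simpa using (hasDerivAt_id t).mul_const (inner ℝ (g x) v : ℝ)
      have h2b : HasDerivAt (fun t : ℝ => L / 2 * ‖v‖ ^ 2 * t ^ 2)
          (L / 2 * ‖v‖ ^ 2 * (2 * t)) t := by
        have := (hasDerivAt_pow 2 t).const_mul (L / 2 * ‖v‖ ^ 2)
        exact this.congr_deriv (by ring)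
      exact h2a.add h2b
    exact h1.sub h2
  have hanti : AntitoneOn ψ (Set.Icc (0:ℝ) 1) := by
    apply antitoneOn_of_deriv_nonpos (convex_Icc 0 1)
    · exact fun t _ => (hψ t).differentiableAt.continuousAt.continuousWithinAt
    · exact fun t _ => ((hψ t).differentiableAt).differentiableWithinAt
    · intro t ht
      rw [interior_Icc] at ht
      rw [(hψ t).deriv]
      have hb : (inner ℝ (g (x + t • v)) v : ℝ) - inner ℝ (g x) v ≤ L * t * ‖v‖ ^ 2 := by
        have h1 : (inner ℝ (g (x + t • v)) v : ℝ) - inner ℝ (g x) v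
            = inner ℝ (g (x + t • v) - g x) v := by rw [inner_sub_left]
        rw [h1]
        calc (inner ℝ (g (x + t • v) - g x) v : ℝ) ≤ ‖g (x + t • v) - g x‖ * ‖v‖ :=
              real_inner_le_norm _ _
          _ ≤ (L * ‖(x + t • v) - x‖) * ‖v‖ := by
              apply mul_le_mul_of_nonneg_right (hlip _ _) (norm_nonneg _)
          _ = L * t * ‖v‖ ^ 2 := by
              rw [add_sub_cancel_left, norm_smul, Real.norm_eq_abs, abs_of_pos ht.1]; ring
      nlinarith [hb]
  have h01 : ψ 1 ≤ ψ 0 := hanti (Set.mem_Icc.2 ⟨le_refl 0, zero_le_one⟩)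
    (Set.mem_Icc.2 ⟨zero_le_one, le_refl 1⟩) zero_le_one
  simp only [hψdef, one_smul, zero_smul, add_zero] at h01
  have hxy : x + v = y := by rw [hv]; abel
  rw [hxy] at h01
  nlinarith [h01]

/-- Gradient descent on an `L`-smooth `μ`-PL function: step norms decay
geometrically, `‖x^{i+1} − x^i‖² ≤ (2α/(2−αL))θ^i(f(x⁰) − f*)` with
`θ = 1 − αμ(2−αL)`, the tail sums satisfy
`Σ_{i≥C}‖x^{i+1} − x^i‖ ≤ (1/(1−√θ))√(2α/(2−αL))·θ^{C/2}·√(f(x⁰) − f*)`,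
and the iterates form a Cauchy sequence. -/
theorem gd_pl_step_norm_decay_and_cauchy
    {E : Type*} [NormedAddCommGroup E] [InnerProductSpace ℝ E]
    (f : E → ℝ) (g : E → E)
    (hgrad : ∀ x : E, HasFDerivAt f (innerSL ℝ (g x)) x)
    (L μ : ℝ) (hμ : 0 < μ) (hμL : μ ≤ L)
    (hlip : ∀ x y : E, ‖g x - g y‖ ≤ L * ‖x - y‖)
    (fstar : ℝ) (hfstar : IsGLB (Set.range f) fstar)
    (hpl : ∀ x : E, f x - fstar ≤ 1 / (2 * μ) * ‖g x‖ ^ 2)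
    (α : ℝ) (hα0 : 0 < α) (hα2 : α < 2 / L)
    (x : ℕ → E) (hiter : ∀ i : ℕ, x (i + 1) = x i - α • g (x i)) :
    (∀ i : ℕ, ‖x (i + 1) - x i‖ ^ 2
        ≤ 2 * α / (2 - α * L) * (1 - α * μ * (2 - α * L)) ^ i * (f (x 0) - fstar)) ∧
    (∀ C : ℕ, ∑' i : ℕ, ‖x (C + i + 1) - x (C + i)‖
        ≤ 1 / (1 - Real.sqrt (1 - α * μ * (2 - α * L)))
          * Real.sqrt (2 * α / (2 - α * L))
          * Real.sqrt (1 - α * μ * (2 - α * L)) ^ C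
          * Real.sqrt (f (x 0) - fstar)) ∧
    CauchySeq x := by
  have hL : 0 < L := lt_of_lt_of_le hμ hμL
  have hαL : α * L < 2 := by
    have := (lt_div_iff₀ hL).mp hα2
    linarith
  set θ : ℝ := 1 - α * μ * (2 - α * L) with hθdef
  set c : ℝ := α * (2 - α * L) / 2 with hcdef
  have hc0 : 0 < c := by
    apply div_pos (mul_pos hα0 (by linarith)) two_pos
  have hθ0 : 0 ≤ θ := by nlinarith [sq_nonneg (α * L - 1), mul_pos hα0 hμ, mul_pos hα0 hL]
  have hθ1 : θ < 1 := by nlinarith [mul_pos (mul_pos hα0 hμ) (show (0:ℝ) < 2 - α * L by linarith)]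
  -- lower bound by fstar
  have hlb : ∀ z : E, fstar ≤ f z := fun z => hfstar.1 ⟨z, rfl⟩
  -- descent inequality at each step
  have hdesc : ∀ i : ℕ, f (x (i + 1)) ≤ f (x i) - c * ‖g (x i)‖ ^ 2 := by
    intro i
    have := gd_descent_aux f g hgrad L hlip (x i) (x (i + 1))
    rw [hiter i] at this ⊢
    have hsub : x i - α • g (x i) - x i = -(α • g (x i)) := by abel
    rw [hsub] at this
    rw [inner_neg_right, real_inner_smul_right, real_inner_self_eq_norm_sq, norm_neg,
      norm_smul, Real.norm_eq_abs, abs_of_pos hα0] at this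
    have hcle : c * ‖g (x i)‖ ^ 2 ≤ α * ‖g (x i)‖ ^ 2 - L / 2 * (α * ‖g (x i)‖) ^ 2 := by
      rw [hcdef]; nlinarith [sq_nonneg (‖g (x i)‖)]
    linarith [this]
  -- geometric decay of function gap
  have hgap : ∀ i : ℕ, f (x i) - fstar ≤ θ ^ i * (f (x 0) - fstar) := by
    intro i
    induction i with
    | zero => simp
    | succ n ih =>
      have hg2 : 2 * μ * (f (x n) - fstar) ≤ ‖g (x n)‖ ^ 2 := by
        have := hpl (x n)
        have h2μ : (0:ℝ) < 2 * μ := by linarith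
        rw [div_mul_eq_mul_div, one_mul, le_div_iff₀ h2μ] at this
        linarith
      have hstep : f (x (n + 1)) - fstar ≤ θ * (f (x n) - fstar) := by
        have := hdesc n
        have hθexp : θ * (f (x n) - fstar) = (f (x n) - fstar) - 2 * μ * c * (f (x n) - fstar) := by
          rw [hθdef, hcdef]; ring
        rw [hθexp]
        nlinarith [mul_le_mul_of_nonneg_left hg2 hc0.le]
      calc f (x (n + 1)) - fstar ≤ θ * (f (x n) - fstar) := hstep
        _ ≤ θ * (θ ^ n * (f (x 0) - fstar)) := by
            exact mul_le_mul_of_nonneg_left ih hθ0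
        _ = θ ^ (n + 1) * (f (x 0) - fstar) := by ring
  -- part 1
  have part1 : ∀ i : ℕ, ‖x (i + 1) - x i‖ ^ 2
      ≤ 2 * α / (2 - α * L) * θ ^ i * (f (x 0) - fstar) := by
    intro i
    have hsq : ‖x (i + 1) - x i‖ ^ 2 = α ^ 2 * ‖g (x i)‖ ^ 2 := by
      rw [hiter i]
      have : x i - α • g (x i) - x i = -(α • g (x i)) := by abel
      rw [this, norm_neg, norm_smul, Real.norm_eq_abs, abs_of_pos hα0]
      ring
    have hub : c * ‖g (x i)‖ ^ 2 ≤ θ ^ i * (f (x 0) - fstar) := by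
      have h1 := hdesc i
      have h2 := hlb (x (i + 1))
      have h3 := hgap i
      linarith
    rw [hsq]
    have : ‖g (x i)‖ ^ 2 ≤ (θ ^ i * (f (x 0) - fstar)) / c := by
      rw [le_div_iff₀ hc0]; linarith [hub]
    have hαne : α ≠ 0 := ne_of_gt hα0
    have h2ne : (2:ℝ) - α * L ≠ 0 := by linarith
    have hkey : α ^ 2 / c = 2 * α / (2 - α * L) := by
      rw [hcdef]; field_simp
    calc α ^ 2 * ‖g (x i)‖ ^ 2 ≤ α ^ 2 * ((θ ^ i * (f (x 0) - fstar)) / c) := by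
          exact mul_le_mul_of_nonneg_left this (sq_nonneg α)
      _ = α ^ 2 / c * (θ ^ i * (f (x 0) - fstar)) := by ring
      _ = 2 * α / (2 - α * L) * θ ^ i * (f (x 0) - fstar) := by rw [hkey]; ring
  -- setup for parts 2 and 3
  have hΔ0 : 0 ≤ f (x 0) - fstar := by linarith [hlb (x 0)]
  set r : ℝ := Real.sqrt θ with hrdef
  have hr0 : 0 ≤ r := Real.sqrt_nonneg _
  have hr1 : r < 1 := by
    have := Real.sqrt_lt_sqrt hθ0 hθ1
    rwa [Real.sqrt_one] at this
  have hA0 : 0 ≤ 2 * α / (2 - α * L) := by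
    apply div_nonneg (by linarith) (by linarith)
  have hsqrtpow : ∀ i : ℕ, Real.sqrt (θ ^ i) = r ^ i := by
    intro i
    have h1 : (r ^ i) ^ 2 = θ ^ i := by
      rw [← pow_mul, mul_comm, pow_mul, hrdef, Real.sq_sqrt hθ0]
    rw [← h1, Real.sqrt_sq (pow_nonneg hr0 i)]
  have hbound : ∀ i : ℕ, ‖x (i + 1) - x i‖
      ≤ Real.sqrt (2 * α / (2 - α * L)) * Real.sqrt (f (x 0) - fstar) * r ^ i := by
    intro i
    calc ‖x (i + 1) - x i‖ = Real.sqrt (‖x (i + 1) - x i‖ ^ 2) :=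
          (Real.sqrt_sq (norm_nonneg _)).symm
      _ ≤ Real.sqrt (2 * α / (2 - α * L) * θ ^ i * (f (x 0) - fstar)) :=
          Real.sqrt_le_sqrt (part1 i)
      _ = Real.sqrt (2 * α / (2 - α * L)) * Real.sqrt (f (x 0) - fstar) * r ^ i := by
          rw [Real.sqrt_mul (mul_nonneg hA0 (pow_nonneg hθ0 i)),
            Real.sqrt_mul hA0, hsqrtpow i]
          ring
  have hsummable : ∀ C : ℕ, Summable (fun i : ℕ => ‖x (C + i + 1) - x (C + i)‖) := by
    intro C
    apply Summable.of_nonneg_of_le (fun i => norm_nonneg _)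
      (fun i => ?_) (((summable_geometric_of_lt_one hr0 hr1).mul_left
        (Real.sqrt (2 * α / (2 - α * L)) * Real.sqrt (f (x 0) - fstar) * r ^ C)))
    calc ‖x (C + i + 1) - x (C + i)‖
        ≤ Real.sqrt (2 * α / (2 - α * L)) * Real.sqrt (f (x 0) - fstar) * r ^ (C + i) :=
          hbound (C + i)
      _ = Real.sqrt (2 * α / (2 - α * L)) * Real.sqrt (f (x 0) - fstar) * r ^ C * r ^ i := by
          rw [pow_add]; ring
  refine ⟨part1, ?_, ?_⟩
  · intro C
    have hgeo := summable_geometric_of_lt_one hr0 hr1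
    have h1 : ∑' i : ℕ, ‖x (C + i + 1) - x (C + i)‖
        ≤ ∑' i : ℕ, (Real.sqrt (2 * α / (2 - α * L)) * Real.sqrt (f (x 0) - fstar) * r ^ C) * r ^ i := by
      apply Summable.tsum_le_tsum _ (hsummable C) (hgeo.mul_left _)
      intro i
      calc ‖x (C + i + 1) - x (C + i)‖
          ≤ Real.sqrt (2 * α / (2 - α * L)) * Real.sqrt (f (x 0) - fstar) * r ^ (C + i) :=
            hbound (C + i)
        _ = Real.sqrt (2 * α / (2 - α * L)) * Real.sqrt (f (x 0) - fstar) * r ^ C * r ^ i := by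
            rw [pow_add]; ring
    rw [tsum_mul_left, tsum_geometric_of_lt_one hr0 hr1] at h1
    calc ∑' i : ℕ, ‖x (C + i + 1) - x (C + i)‖
        ≤ Real.sqrt (2 * α / (2 - α * L)) * Real.sqrt (f (x 0) - fstar) * r ^ C * (1 - r)⁻¹ :=
          h1
      _ = 1 / (1 - r) * Real.sqrt (2 * α / (2 - α * L)) * r ^ C * Real.sqrt (f (x 0) - fstar) := by
          rw [one_div]; ring
  · apply cauchySeq_of_summable_dist
    have := hsummable 0
    simp only [Nat.zero_add] at this
    apply Summable.congr this
    intro i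
    rw [dist_eq_norm, norm_sub_rev]
end

section
/- Let E be ℝⁿ (a finite-dimensional real inner product space) and let f : E × ℝ → ℝ with f(·;t) differentiable for every t ≥ 0. Assume there exist μ > 0, L_{2,0} > 0, L_{1,1} ≥ 0 such that for all t, s ≥ 0 and all x, y ∈ E: (i) ‖∇_x f(x;t) − ∇_x f(y;t)‖ ≤ L_{2,0}‖x − y‖; (ii) f(·;t) is μ-PL on E, i.e., (1/(2μ))‖∇_x f(x;t)‖² ≥ f(x;t) − f*(t), where f*(t) := inf_y f(y;t); (iii) the solution set X*(t) := argmin_x f(x;t) is nonempty; (iv) ‖∇_x f(x;s) − ∇_x f(x;t)‖ ≤ L_{1,1}|s − t|. Then for all s, t ≥ 0, the Hausdorff distance satisfies d_H(X*(s), X*(t)) ≤ (L_{1,1}/μ)·|s − t|. -/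
section Aux

variable {E : Type*} [NormedAddCommGroup E] [InnerProductSpace ℝ E] [CompleteSpace E]

/-- Descent lemma (weak form): for a function with `L`-Lipschitz gradient,
`f (x - α • g x) ≤ f x - α ‖g x‖² + L α² ‖g x‖²`. -/
lemma descent_lemma (f : E → ℝ) (g : E → E)
    (hgrad : ∀ x, HasFDerivAt f (innerSL ℝ (g x)) x)
    (L : ℝ) (hL : 0 ≤ L) (hlip : ∀ x y, ‖g x - g y‖ ≤ L * ‖x - y‖)
    (x : E) (α : ℝ) (hα : 0 ≤ α) :
    f (x - α • g x) ≤ f x - α * ‖g x‖ ^ 2 + L * α ^ 2 * ‖g x‖ ^ 2 := by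
  set y := x - α • g x with hy
  have hyx : y - x = -(α • g x) := by rw [hy]; abel
  have hnyx : ‖y - x‖ = α * ‖g x‖ := by
    rw [hyx, norm_neg, norm_smul, Real.norm_eq_abs, abs_of_nonneg hα]
  have hxs : x ∈ Metric.closedBall x ‖y - x‖ :=
    Metric.mem_closedBall_self (norm_nonneg _)
  have hys : y ∈ Metric.closedBall x ‖y - x‖ := by
    simp [Metric.mem_closedBall, dist_eq_norm]
  have key : ‖f y - f x - (innerSL ℝ (g x)) (y - x)‖ ≤ (L * ‖y - x‖) * ‖y - x‖ := by
    apply (convex_closedBall x ‖y - x‖).norm_image_sub_le_of_norm_hasFDerivWithin_le'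
      (f' := fun z => innerSL ℝ (g z)) (φ := innerSL ℝ (g x))
      (fun z _ => (hgrad z).hasFDerivWithinAt) ?_ hxs hys
    intro z hz
    have h1 : innerSL ℝ (g z) - innerSL ℝ (g x) = innerSL ℝ (g z - g x) := by
      ext w; simp [inner_sub_left]
    rw [h1, innerSL_apply_norm]
    calc ‖g z - g x‖ ≤ L * ‖z - x‖ := hlip z x
      _ ≤ L * ‖y - x‖ := by
          apply mul_le_mul_of_nonneg_left _ hL
          rw [Metric.mem_closedBall, dist_eq_norm] at hz
          exact hz
  have hip : (innerSL ℝ (g x)) (y - x) = -(α * ‖g x‖ ^ 2) := by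
    rw [hyx]
    simp only [map_neg, innerSL_apply_apply]
    rw [real_inner_smul_right, real_inner_self_eq_norm_sq]
  rw [hip, hnyx] at key
  have h2 := (abs_le.mp (by rwa [Real.norm_eq_abs] at key)).2
  nlinarith [h2]

set_option maxHeartbeats 1600000 in
/-- Error-bound step: a gradient-descent based proof that
`infDist x₀ (argmin f) * ((1 - Lα) μ) ≤ ‖g x₀‖` for any step size `0 < α` with `Lα < 1`. -/
lemma pl_error_bound_aux (f : E → ℝ) (g : E → E)
    (hgrad : ∀ x, HasFDerivAt f (innerSL ℝ (g x)) x)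
    (μ L : ℝ) (hμ : 0 < μ) (hL : 0 < L)
    (hlip : ∀ x y, ‖g x - g y‖ ≤ L * ‖x - y‖)
    (hpl : ∀ x, f x - (⨅ y, f y) ≤ 1 / (2 * μ) * ‖g x‖ ^ 2)
    (xbar : E) (hxbar : ∀ y, f xbar ≤ f y)
    (x₀ : E) (α : ℝ) (hα0 : 0 < α) (hα1 : L * α < 1) :
    Metric.infDist x₀ {x | ∀ y, f x ≤ f y} * ((1 - L * α) * μ) ≤ ‖g x₀‖ := by
  set fstar := ⨅ y, f y with hfstar
  have hbdd : BddBelow (Set.range f) := ⟨f xbar, by rintro _ ⟨y, rfl⟩; exact hxbar y⟩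
  have hfs_le : ∀ x, fstar ≤ f x := fun x => ciInf_le hbdd x
  have hD : ∀ x, 0 ≤ f x - fstar := fun x => sub_nonneg.mpr (hfs_le x)
  have hsq : 0 < Real.sqrt (2 * μ) := Real.sqrt_pos.mpr (by linarith)
  -- PL in sqrt form
  have hPLs : ∀ x, Real.sqrt (f x - fstar) ≤ ‖g x‖ / Real.sqrt (2 * μ) := by
    intro x
    have h1 : f x - fstar ≤ ‖g x‖ ^ 2 / (2 * μ) := by
      have h0 := hpl x
      calc f x - fstar ≤ 1 / (2 * μ) * ‖g x‖ ^ 2 := h0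
        _ = ‖g x‖ ^ 2 / (2 * μ) := by ring
    calc Real.sqrt (f x - fstar) ≤ Real.sqrt (‖g x‖ ^ 2 / (2 * μ)) := Real.sqrt_le_sqrt h1
      _ = ‖g x‖ / Real.sqrt (2 * μ) := by
          rw [Real.sqrt_div (sq_nonneg _), Real.sqrt_sq (norm_nonneg _)]
  set c : ℝ := (1 - L * α) * Real.sqrt (2 * μ) / 2 with hc
  have hc0 : 0 < c := by
    apply div_pos _ two_pos
    exact mul_pos (by linarith) hsq
  -- the single-step decrease of √(f · - f*)
  have step : ∀ x : E,
      Real.sqrt (f (x - α • g x) - fstar) + c * (α * ‖g x‖) ≤ Real.sqrt (f x - fstar) := by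
    intro x
    by_cases hg0 : g x = 0
    · simp [hg0]
    have hG : 0 < ‖g x‖ := norm_pos_iff.mpr hg0
    set y := x - α • g x with hy
    have hdesc := descent_lemma f g hgrad L hL.le hlip x α hα0.le
    rw [← hy] at hdesc
    have hD0 : 0 ≤ f x - fstar := hD x
    have hD'0 : 0 ≤ f y - fstar := hD y
    have hgain : α * (1 - L * α) * ‖g x‖ ^ 2 ≤ (f x - fstar) - (f y - fstar) := by
      nlinarith
    have hgainpos : 0 < α * (1 - L * α) * ‖g x‖ ^ 2 :=
      mul_pos (mul_pos hα0 (by linarith)) (pow_pos hG 2)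
    have hDpos : 0 < f x - fstar := by linarith
    have hsD0 : 0 ≤ Real.sqrt (f x - fstar) := Real.sqrt_nonneg _
    have hsD'0 : 0 ≤ Real.sqrt (f y - fstar) := Real.sqrt_nonneg _
    have hsum : Real.sqrt (f x - fstar) + Real.sqrt (f y - fstar) ≤
        2 * (‖g x‖ / Real.sqrt (2 * μ)) := by
      have h1 := hPLs x
      have h2 : Real.sqrt (f y - fstar) ≤ Real.sqrt (f x - fstar) :=
        Real.sqrt_le_sqrt (by linarith [hgainpos])
      linarith
    have hprod : (Real.sqrt (f x - fstar) - Real.sqrt (f y - fstar)) *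
        (Real.sqrt (f x - fstar) + Real.sqrt (f y - fstar)) =
        (f x - fstar) - (f y - fstar) := by
      have e1 := Real.sq_sqrt hD0
      have e2 := Real.sq_sqrt hD'0
      nlinarith
    have hkey : c * (α * ‖g x‖) *
        (Real.sqrt (f x - fstar) + Real.sqrt (f y - fstar)) ≤
        (f x - fstar) - (f y - fstar) := by
      have h1 : c * (α * ‖g x‖) *
          (Real.sqrt (f x - fstar) + Real.sqrt (f y - fstar)) ≤
          c * (α * ‖g x‖) * (2 * (‖g x‖ / Real.sqrt (2 * μ))) := by
        apply mul_le_mul_of_nonneg_left hsum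
        positivity
      have h2 : c * (α * ‖g x‖) * (2 * (‖g x‖ / Real.sqrt (2 * μ))) =
          α * (1 - L * α) * ‖g x‖ ^ 2 := by
        rw [hc]
        field_simp
      linarith
    have hspos : 0 < Real.sqrt (f x - fstar) + Real.sqrt (f y - fstar) := by
      have := Real.sqrt_pos.mpr hDpos
      linarith
    have hcancel : c * (α * ‖g x‖) ≤
        Real.sqrt (f x - fstar) - Real.sqrt (f y - fstar) := by
      have h3 : c * (α * ‖g x‖) *
          (Real.sqrt (f x - fstar) + Real.sqrt (f y - fstar)) ≤
          (Real.sqrt (f x - fstar) - Real.sqrt (f y - fstar)) *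
          (Real.sqrt (f x - fstar) + Real.sqrt (f y - fstar)) := by
        rw [hprod]; exact hkey
      exact le_of_mul_le_mul_right h3 hspos
    linarith
  -- the gradient descent sequence
  set F : E → E := fun p => p - α • g p with hF
  set X : ℕ → E := fun k => F^[k] x₀ with hX
  have hX0 : X 0 = x₀ := rfl
  have hXsucc : ∀ k, X (k + 1) = X k - α • g (X k) := by
    intro k
    show F^[k + 1] x₀ = _
    rw [Function.iterate_succ_apply' F k x₀]
  have hstepX : ∀ k, Real.sqrt (f (X (k + 1)) - fstar) + c * (α * ‖g (X k)‖) ≤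
      Real.sqrt (f (X k) - fstar) := by
    intro k; rw [hXsucc k]; exact step (X k)
  have hanti : ∀ k, Real.sqrt (f (X (k + 1)) - fstar) ≤ Real.sqrt (f (X k) - fstar) := by
    intro k
    have h1 := hstepX k
    have h2 : 0 ≤ c * (α * ‖g (X k)‖) := by positivity
    linarith
  have hmono : Antitone fun k => Real.sqrt (f (X k) - fstar) :=
    antitone_nat_of_succ_le hanti
  -- telescoped bound
  have htel : ∀ n k : ℕ, c * ‖X (n + k) - X n‖ ≤
      Real.sqrt (f (X n) - fstar) - Real.sqrt (f (X (n + k)) - fstar) := by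
    intro n k
    induction k with
    | zero => simp
    | succ k ih =>
      have htri : ‖X (n + (k + 1)) - X n‖ ≤
          ‖X (n + k + 1) - X (n + k)‖ + ‖X (n + k) - X n‖ := by
        have he : X (n + (k + 1)) - X n = (X (n + k + 1) - X (n + k)) + (X (n + k) - X n) := by
          rw [show n + (k + 1) = n + k + 1 from rfl]; abel
        rw [he]; exact norm_add_le _ _
      have h1 : c * ‖X (n + (k + 1)) - X n‖ ≤
          c * ‖X (n + k + 1) - X (n + k)‖ + c * ‖X (n + k) - X n‖ := by
        rw [← mul_add]; exact mul_le_mul_of_nonneg_left htri hc0.le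
      have hdk : ‖X (n + k + 1) - X (n + k)‖ = α * ‖g (X (n + k))‖ := by
        rw [hXsucc (n + k)]
        have he : X (n + k) - α • g (X (n + k)) - X (n + k) = -(α • g (X (n + k))) := by abel
        rw [he, norm_neg, norm_smul, Real.norm_eq_abs, abs_of_nonneg hα0.le]
      have h2 : c * ‖X (n + k + 1) - X (n + k)‖ ≤
          Real.sqrt (f (X (n + k)) - fstar) - Real.sqrt (f (X (n + k + 1)) - fstar) := by
        rw [hdk]
        have := hstepX (n + k)
        linarith
      have he2 : n + (k + 1) = n + k + 1 := rfl
      rw [he2] at h1 ⊢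
      linarith
  -- the values √(f (X k) - f*) converge, hence X is Cauchy
  have hbddh : BddBelow (Set.range fun k => Real.sqrt (f (X k) - fstar)) := by
    refine ⟨0, ?_⟩
    rintro _ ⟨k, rfl⟩
    exact Real.sqrt_nonneg _
  obtain ⟨ℓ, hℓ⟩ : ∃ ℓ : ℝ, Filter.Tendsto (fun k => Real.sqrt (f (X k) - fstar))
      Filter.atTop (nhds ℓ) := ⟨_, tendsto_atTop_ciInf hmono hbddh⟩
  have hhcauchy : CauchySeq fun k => Real.sqrt (f (X k) - fstar) := hℓ.cauchySeq
  have hXcauchy : CauchySeq X := by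
    rw [Metric.cauchySeq_iff']
    intro ε hε
    obtain ⟨N, hN⟩ := Metric.cauchySeq_iff'.mp hhcauchy (c * ε) (by positivity)
    refine ⟨N, fun n hn => ?_⟩
    obtain ⟨k, rfl⟩ := Nat.exists_eq_add_of_le hn
    have h1 := htel N k
    have h2 := hN (N + k) (Nat.le_add_right N k)
    rw [Real.dist_eq] at h2
    have h3 : Real.sqrt (f (X N) - fstar) - Real.sqrt (f (X (N + k)) - fstar) < c * ε := by
      rw [abs_sub_comm] at h2
      calc Real.sqrt (f (X N) - fstar) - Real.sqrt (f (X (N + k)) - fstar)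
          ≤ |Real.sqrt (f (X N) - fstar) - Real.sqrt (f (X (N + k)) - fstar)| := le_abs_self _
        _ < c * ε := h2
    rw [dist_eq_norm]
    nlinarith [h1]
  obtain ⟨xinf, hxinf⟩ := cauchySeq_tendsto_of_complete hXcauchy
  -- the gradients tend to zero
  have hgto : Filter.Tendsto (fun k => ‖g (X k)‖) Filter.atTop (nhds 0) := by
    have hub : ∀ k, ‖g (X k)‖ ≤
        (Real.sqrt (f (X k) - fstar) - Real.sqrt (f (X (k + 1)) - fstar)) / (c * α) := by
      intro k
      rw [le_div_iff₀ (by positivity)]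
      have := hstepX k
      nlinarith
    have hto : Filter.Tendsto (fun k =>
        (Real.sqrt (f (X k) - fstar) - Real.sqrt (f (X (k + 1)) - fstar)) / (c * α))
        Filter.atTop (nhds 0) := by
      have h2 : Filter.Tendsto (fun k => Real.sqrt (f (X (k + 1)) - fstar))
          Filter.atTop (nhds ℓ) := hℓ.comp (Filter.tendsto_add_atTop_nat 1)
      have h3 : Filter.Tendsto (fun k =>
          Real.sqrt (f (X k) - fstar) - Real.sqrt (f (X (k + 1)) - fstar))
          Filter.atTop (nhds 0) := by
        have := hℓ.sub h2
        simpa using this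
      have := h3.div_const (c * α)
      simpa using this
    exact squeeze_zero (fun k => norm_nonneg _) hub hto
  have hgxinf : g xinf = 0 := by
    have hgc : Filter.Tendsto (fun k => g (X k)) Filter.atTop (nhds (g xinf)) := by
      rw [tendsto_iff_norm_sub_tendsto_zero]
      have hub : ∀ k, ‖g (X k) - g xinf‖ ≤ L * ‖X k - xinf‖ := fun k => hlip (X k) xinf
      have hXn : Filter.Tendsto (fun k => L * ‖X k - xinf‖) Filter.atTop (nhds 0) := by
        have h1 : Filter.Tendsto (fun k => ‖X k - xinf‖) Filter.atTop (nhds 0) := by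
          rw [← tendsto_iff_norm_sub_tendsto_zero]; exact hxinf
        have := h1.const_mul L
        simpa using this
      exact squeeze_zero (fun k => norm_nonneg _) hub hXn
    have h1 : Filter.Tendsto (fun k => ‖g (X k)‖) Filter.atTop (nhds ‖g xinf‖) := hgc.norm
    exact norm_eq_zero.mp (tendsto_nhds_unique h1 hgto)
  have hxinfmin : xinf ∈ {x | ∀ y, f x ≤ f y} := by
    intro y
    have h0 := hpl xinf
    rw [hgxinf] at h0
    simp only [norm_zero] at h0
    have h1 : f xinf ≤ fstar := by nlinarith
    exact h1.trans (hfs_le y)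
  -- distance bound
  have hdx : dist x₀ xinf ≤ Real.sqrt (f x₀ - fstar) / c := by
    have hdk : ∀ k, dist x₀ (X k) ≤ Real.sqrt (f x₀ - fstar) / c := by
      intro k
      have h1 := htel 0 k
      simp only [Nat.zero_add, hX0] at h1
      rw [dist_eq_norm, norm_sub_rev, le_div_iff₀ hc0]
      have h2 : 0 ≤ Real.sqrt (f (X k) - fstar) := Real.sqrt_nonneg _
      have h1' : c * ‖X k - x₀‖ ≤ Real.sqrt (f x₀ - fstar) - Real.sqrt (f (X k) - fstar) := by
        have hXk0 : X 0 = x₀ := hX0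
        simpa [hXk0] using htel 0 k
      nlinarith
    have hlim : Filter.Tendsto (fun k => dist x₀ (X k)) Filter.atTop (nhds (dist x₀ xinf)) :=
      tendsto_const_nhds.dist hxinf
    exact le_of_tendsto hlim (Filter.Eventually.of_forall hdk)
  have hinf : Metric.infDist x₀ {x | ∀ y, f x ≤ f y} ≤ Real.sqrt (f x₀ - fstar) / c :=
    (Metric.infDist_le_dist_of_mem hxinfmin).trans hdx
  -- final algebra
  have hq : 0 < (1 - L * α) * μ := by nlinarith
  have hfinal : Real.sqrt (f x₀ - fstar) / c ≤ ‖g x₀‖ / ((1 - L * α) * μ) := by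
    rw [div_le_div_iff₀ hc0 hq]
    have hs2 : Real.sqrt (2 * μ) * Real.sqrt (2 * μ) = 2 * μ :=
      Real.mul_self_sqrt (by linarith)
    have h2 : Real.sqrt (f x₀ - fstar) * Real.sqrt (2 * μ) ≤ ‖g x₀‖ := by
      rw [← le_div_iff₀ hsq]; exact hPLs x₀
    calc Real.sqrt (f x₀ - fstar) * ((1 - L * α) * μ)
        = (1 - L * α) / 2 * (Real.sqrt (f x₀ - fstar) * (2 * μ)) := by ring
      _ = (1 - L * α) / 2 *
          (Real.sqrt (f x₀ - fstar) * (Real.sqrt (2 * μ) * Real.sqrt (2 * μ))) := by rw [hs2]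
      _ = (Real.sqrt (f x₀ - fstar) * Real.sqrt (2 * μ)) *
          ((1 - L * α) * Real.sqrt (2 * μ) / 2) := by ring
      _ ≤ ‖g x₀‖ * ((1 - L * α) * Real.sqrt (2 * μ) / 2) := by
          apply mul_le_mul_of_nonneg_right h2
          positivity
      _ = ‖g x₀‖ * c := by rw [hc]
  rw [← le_div_iff₀ hq]
  exact hinf.trans hfinal

/-- PL error bound: `infDist x₀ (argmin f) ≤ ‖g x₀‖ / μ`. -/
lemma pl_error_bound (f : E → ℝ) (g : E → E)
    (hgrad : ∀ x, HasFDerivAt f (innerSL ℝ (g x)) x)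
    (μ L : ℝ) (hμ : 0 < μ) (hL : 0 < L)
    (hlip : ∀ x y, ‖g x - g y‖ ≤ L * ‖x - y‖)
    (hpl : ∀ x, f x - (⨅ y, f y) ≤ 1 / (2 * μ) * ‖g x‖ ^ 2)
    (xbar : E) (hxbar : ∀ y, f xbar ≤ f y)
    (x₀ : E) :
    Metric.infDist x₀ {x | ∀ y, f x ≤ f y} ≤ ‖g x₀‖ / μ := by
  set d := Metric.infDist x₀ {x | ∀ y, f x ≤ f y} with hd
  have haux : ∀ α : ℝ, α ∈ Set.Ioo (0 : ℝ) (1 / L) → d * ((1 - L * α) * μ) ≤ ‖g x₀‖ := by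
    intro α hα
    exact pl_error_bound_aux f g hgrad μ L hμ hL hlip hpl xbar hxbar x₀ α hα.1
      (by rw [mul_comm]; exact (lt_div_iff₀ hL).mp hα.2)
  have hlim : Filter.Tendsto (fun α : ℝ => d * ((1 - L * α) * μ))
      (nhdsWithin 0 (Set.Ioi 0)) (nhds (d * μ)) := by
    have hcont : Continuous fun α : ℝ => d * ((1 - L * α) * μ) := by continuity
    have := hcont.tendsto 0
    simp only [mul_zero, sub_zero, one_mul] at this
    exact this.mono_left nhdsWithin_le_nhds
  have hev : ∀ᶠ α in nhdsWithin (0 : ℝ) (Set.Ioi 0), d * ((1 - L * α) * μ) ≤ ‖g x₀‖ := by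
    filter_upwards [Ioo_mem_nhdsGT_of_mem
      (show (0:ℝ) ∈ Set.Ico (0:ℝ) (1 / L) from ⟨le_refl _, by positivity⟩)] with α hα
    exact haux α hα
  have hle : d * μ ≤ ‖g x₀‖ := le_of_tendsto hlim hev
  rw [le_div_iff₀ hμ]
  exact hle

end Aux

/-- For an `L₂₀`-smooth `μ`-PL time-varying function whose gradient is
`L₁₁`-Lipschitz in time, the solution sets `X*(t) = argmin f(·;t)` are
Lipschitz in the Hausdorff distance: `d_H(X*(s), X*(t)) ≤ (L₁₁/μ)|s−t|`. -/
theorem pl_solution_sets_hausdorff_lipschitz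
    (n : ℕ)
    (f : EuclideanSpace ℝ (Fin n) → ℝ → ℝ)
    (g : EuclideanSpace ℝ (Fin n) → ℝ → EuclideanSpace ℝ (Fin n))
    (hgrad : ∀ (x : EuclideanSpace ℝ (Fin n)) (t : ℝ), 0 ≤ t →
      HasFDerivAt (fun y => f y t) (innerSL ℝ (g x t)) x)
    (μ L20 L11 : ℝ) (hμ : 0 < μ) (hL20 : 0 < L20) (hL11 : 0 ≤ L11)
    (hlipx : ∀ (x y : EuclideanSpace ℝ (Fin n)) (t : ℝ), 0 ≤ t →
      ‖g x t - g y t‖ ≤ L20 * ‖x - y‖)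
    (hpl : ∀ (x : EuclideanSpace ℝ (Fin n)) (t : ℝ), 0 ≤ t →
      f x t - (⨅ y, f y t) ≤ 1 / (2 * μ) * ‖g x t‖ ^ 2)
    (hne : ∀ t : ℝ, 0 ≤ t → {x | ∀ y, f x t ≤ f y t}.Nonempty)
    (hlipt : ∀ (x : EuclideanSpace ℝ (Fin n)) (s t : ℝ), 0 ≤ s → 0 ≤ t →
      ‖g x s - g x t‖ ≤ L11 * |s - t|) :
    ∀ s t : ℝ, 0 ≤ s → 0 ≤ t →
      Metric.hausdorffDist {x | ∀ y, f x s ≤ f y s} {x | ∀ y, f x t ≤ f y t}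
        ≤ L11 / μ * |s - t| := by
  -- at a minimizer the gradient vanishes
  have hgzero : ∀ (t : ℝ), 0 ≤ t → ∀ x ∈ {x | ∀ y, f x t ≤ f y t}, g x t = 0 := by
    intro t ht x hx
    have hmin : IsLocalMin (fun y => f y t) x :=
      Filter.Eventually.of_forall fun y => hx y
    have h0 : innerSL ℝ (g x t) = 0 := hmin.hasFDerivAt_eq_zero (hgrad x t ht)
    have h1 : (innerSL ℝ (g x t)) (g x t) = 0 := by rw [h0]; rfl
    have h2 : (inner ℝ (g x t) (g x t) : ℝ) = 0 := by
      simpa [innerSL_apply_apply] using h1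
    exact inner_self_eq_zero.mp h2
  -- one-sided bound
  have hside : ∀ s t : ℝ, 0 ≤ s → 0 ≤ t → ∀ x ∈ {x | ∀ y, f x s ≤ f y s},
      Metric.infDist x {x | ∀ y, f x t ≤ f y t} ≤ L11 / μ * |s - t| := by
    intro s t hs ht x hx
    obtain ⟨xbar, hxbar⟩ := hne t ht
    have hbound := pl_error_bound (fun y => f y t) (fun y => g y t)
      (fun y => hgrad y t ht) μ L20 hμ hL20
      (fun a b => hlipx a b t ht) (fun a => hpl a t ht) xbar hxbar x
    have hg0 : g x s = 0 := hgzero s hs x hx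
    have hgt : ‖g x t‖ ≤ L11 * |s - t| := by
      have h1 := hlipt x s t hs ht
      rw [hg0] at h1
      simpa using h1
    calc Metric.infDist x {x | ∀ y, f x t ≤ f y t} ≤ ‖g x t‖ / μ := hbound
      _ ≤ L11 * |s - t| / μ := by gcongr
      _ = L11 / μ * |s - t| := by ring
  intro s t hs ht
  apply Metric.hausdorffDist_le_of_infDist
  · positivity
  · intro x hx
    exact hside s t hs ht x hx
  · intro x hx
    have := hside t s ht hs x hx
    rwa [abs_sub_comm t s] at this
end

section
/- Let E be ℝⁿ, h > 0, t_k = k·h, and let f : E × ℝ → ℝ with f(·;t) differentiable for each t. Assume: (i) ‖∇_x f(x;t) − ∇_x f(y;t)‖ ≤ L·‖x − y‖ for all x,y,t with L > 0; (ii) f(·;t) is μ-PL on E for all t, i.e., (1/(2μ))‖∇_x f(x;t)‖² ≥ f(x;t) − f*(t) with f*(t) := inf_y f(y;t) and 0 < μ ≤ L; (iii) X*(t) := argmin_x f(x;t) is nonempty for all t; (iv) ‖∇_x f(x;s) − ∇_x f(x;t)‖ ≤ L_{1,1}|s − t| for all x,s,t. Fix α ∈ (0, 2/L), C ≥ 1,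 v ≥ 0, and set κ := L/μ, θ := 1 − αμ(2 − αL) ∈ [0,1). Let sequences (x̂_k), (x_k) in E satisfy, for every k ≥ 1: ‖x̂_k − x_{k−1}‖ ≤ v·h, and x_k = G_k^C(x̂_k) where G_k(y) := y − α∇_x f(y; t_k). Then for all k ≥ 2: dist(x̂_k, X*(t_k)) ≤ √(κ·θ^C)·dist(x̂_{k−1}, X*(t_{k−1})) + (v + L_{1,1}/μ)·h. -/
open Metric

section SharpAux
variable {n : ℕ}
local notation "E" => EuclideanSpace ℝ (Fin n)




/-- Quadratic upper bound for an `L`-smooth function. -/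
lemma quad_upper (φ : E → ℝ) (G : E → E) (L : ℝ) (hL : 0 ≤ L)
    (hgrad : ∀ x, HasFDerivAt φ (innerSL ℝ (G x)) x)
    (hlip : ∀ x y, ‖G x - G y‖ ≤ L * ‖x - y‖) (x y : E) :
    φ y ≤ φ x + inner ℝ (G x) (y - x) + L / 2 * ‖y - x‖ ^ 2 := by
  set ψ : ℝ → ℝ := fun s =>
    φ (x + s • (y - x)) - s * inner ℝ (G x) (y - x) - L / 2 * s ^ 2 * ‖y - x‖ ^ 2 with hψ
  have hline : ∀ s : ℝ, HasDerivAt (fun s : ℝ => x + s • (y - x)) (y - x) s := by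
    intro s
    simpa using ((hasDerivAt_id s).smul_const (y - x)).const_add x
  have hder : ∀ s : ℝ, HasDerivAt ψ
      ((inner ℝ (G (x + s • (y - x))) (y - x) : ℝ) - inner ℝ (G x) (y - x)
        - L * s * ‖y - x‖ ^ 2) s := by
    intro s
    have h1 : HasDerivAt (fun s : ℝ => φ (x + s • (y - x)))
        ((innerSL ℝ (G (x + s • (y - x)))) (y - x)) s :=
      (hgrad (x + s • (y - x))).comp_hasDerivAt s (hline s)
    have h2 : HasDerivAt (fun s : ℝ => s * (inner ℝ (G x) (y - x) : ℝ))
        (inner ℝ (G x) (y - x)) s := by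
      simpa using (hasDerivAt_id s).mul_const (inner ℝ (G x) (y - x) : ℝ)
    have h3 : HasDerivAt (fun s : ℝ => L / 2 * s ^ 2 * ‖y - x‖ ^ 2)
        (L * s * ‖y - x‖ ^ 2) s := by
      have := ((hasDerivAt_pow 2 s).const_mul (L / 2)).mul_const (‖y - x‖ ^ 2)
      refine this.congr_deriv ?_
      ring
    have h4 := (h1.sub h2).sub h3
    simp only [innerSL_apply_apply] at h4
    exact h4
  have hnonpos : ∀ s ∈ Set.Ioo (0:ℝ) 1,
      ((inner ℝ (G (x + s • (y - x))) (y - x) : ℝ) - inner ℝ (G x) (y - x)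
        - L * s * ‖y - x‖ ^ 2) ≤ 0 := by
    intro s hs
    have h1 : (inner ℝ (G (x + s • (y - x))) (y - x) : ℝ) - inner ℝ (G x) (y - x)
        = inner ℝ (G (x + s • (y - x)) - G x) (y - x) := by
      rw [inner_sub_left]
    rw [h1]
    have h2 : (inner ℝ (G (x + s • (y - x)) - G x) (y - x) : ℝ)
        ≤ ‖G (x + s • (y - x)) - G x‖ * ‖y - x‖ := real_inner_le_norm _ _
    have h3 : ‖G (x + s • (y - x)) - G x‖ ≤ L * (s * ‖y - x‖) := by
      have := hlip (x + s • (y - x)) x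
      simpa [norm_smul, abs_of_nonneg hs.1.le] using this
    nlinarith [norm_nonneg (y - x), hs.1.le, mul_le_mul_of_nonneg_right h3 (norm_nonneg (y - x))]
  have hanti : AntitoneOn ψ (Set.Icc (0:ℝ) 1) := by
    apply antitoneOn_of_deriv_nonpos (convex_Icc 0 1)
    · exact fun s _ => ((hder s).continuousAt).continuousWithinAt
    · intro s _
      exact ((hder s).differentiableAt).differentiableWithinAt
    · intro s hs
      rw [interior_Icc] at hs
      rw [(hder s).deriv]
      exact hnonpos s hs
  have h10 : ψ 1 ≤ ψ 0 := hanti (by norm_num) (by norm_num) (by norm_num)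
  simp only [hψ, one_smul, zero_smul, add_zero, one_pow, add_sub_cancel] at h10
  nlinarith [h10]


lemma grad_zero_at_min (φ : E → ℝ) (G : E → E)
    (hgrad : ∀ x, HasFDerivAt φ (innerSL ℝ (G x)) x)
    {z : E} (hz : ∀ y, φ z ≤ φ y) : G z = 0 := by
  have hmin : IsLocalMin φ z := Filter.Eventually.of_forall hz
  have h0 : innerSL ℝ (G z) = 0 := hmin.hasFDerivAt_eq_zero (hgrad z)
  have : (inner ℝ (G z) (G z) : ℝ) = 0 := by
    have := congrArg (fun (T : _ →L[ℝ] ℝ) => T (G z)) h0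
    simpa using this
  exact inner_self_eq_zero.1 this

lemma iInf_eq_min (φ : E → ℝ) {z : E} (hz : ∀ y, φ z ≤ φ y) :
    (⨅ y, φ y) = φ z :=
  le_antisymm (ciInf_le ⟨φ z, Set.forall_mem_range.2 hz⟩ z) (le_ciInf hz)

lemma inf_le_self (φ : E → ℝ) {z : E} (hz : ∀ y, φ z ≤ φ y) (y : E) :
    (⨅ y, φ y) ≤ φ y := (iInf_eq_min φ hz) ▸ hz y


lemma gd_step (φ : E → ℝ) (G : E → E) (μ L : ℝ) (hμ : 0 < μ) (hμL : μ ≤ L)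
    (hgrad : ∀ x, HasFDerivAt φ (innerSL ℝ (G x)) x)
    (hlip : ∀ x y, ‖G x - G y‖ ≤ L * ‖x - y‖)
    (hpl : ∀ x, φ x - (⨅ y, φ y) ≤ 1 / (2 * μ) * ‖G x‖ ^ 2)
    (hinf : ∀ y, (⨅ y, φ y) ≤ φ y)
    (α : ℝ) (hα0 : 0 < α) (hα2 : α * L ≤ 2) (x : E) :
    φ (x - α • G x) - (⨅ y, φ y)
      ≤ (1 - α * μ * (2 - α * L)) * (φ x - (⨅ y, φ y)) := by
  have hL : 0 ≤ L := le_trans hμ.le hμL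
  have hq := quad_upper φ G L hL hgrad hlip x (x - α • G x)
  have h1 : x - α • G x - x = -(α • G x) := by abel
  rw [h1] at hq
  have h2 : (inner ℝ (G x) (-(α • G x)) : ℝ) = -(α * ‖G x‖ ^ 2) := by
    rw [inner_neg_right, real_inner_smul_right, real_inner_self_eq_norm_sq]
  have h3 : ‖-(α • G x)‖ ^ 2 = α ^ 2 * ‖G x‖ ^ 2 := by
    rw [norm_neg, norm_smul, mul_pow, Real.norm_eq_abs, sq_abs]
  rw [h2, h3] at hq
  have hgap : 0 ≤ φ x - (⨅ y, φ y) := sub_nonneg.2 (hinf x)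
  have hN : 2 * μ * (φ x - (⨅ y, φ y)) ≤ ‖G x‖ ^ 2 := by
    have := hpl x
    have h2μ : 0 < 2 * μ := by linarith
    rw [div_mul_eq_mul_div, one_mul, le_div_iff₀ h2μ] at this
    linarith [this]
  have hc : 0 ≤ α * (1 - α * L / 2) := by nlinarith
  nlinarith [mul_nonneg hc (sub_nonneg.2 hN)]


/-- scalar core of the sqrt-gap decrease along a gradient step -/
lemma sqrt_decrease (a b N β L μ : ℝ) (hβ0 : 0 < β) (hch : 0 < 1 - β * L / 2)
    (hμ : 0 < μ) (hdesc : a ≤ b - β * (1 - β * L / 2) * N ^ 2)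
    (hNb : 2 * μ * b ≤ N ^ 2) (ha0 : 0 ≤ a) (hb : 0 < b) (hN0 : 0 ≤ N) :
    (1 - β * L / 2) * Real.sqrt (μ / 2) * (β * N)
      ≤ Real.sqrt b - Real.sqrt a := by
  set sb := Real.sqrt b with hsb
  set sμ := Real.sqrt (μ / 2) with hsμdef
  have hsb0 : 0 < sb := Real.sqrt_pos.2 hb
  have hsμ : 0 < sμ := Real.sqrt_pos.2 (by linarith)
  have hsbsq : sb ^ 2 = b := Real.sq_sqrt hb.le
  have hsμsq : sμ ^ 2 = μ / 2 := Real.sq_sqrt (by linarith)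
  have hN2 : 2 * sμ * sb ≤ N := by
    nlinarith [hsμ.le, hsb0.le, hN0]
  have hNpos : 0 < N := lt_of_lt_of_le (by positivity) hN2
  have hA : β * (1 - β * L / 2) * N ^ 2 ≤ sb ^ 2 := by nlinarith [hdesc, ha0]
  have h5 : sμ * (β * (1 - β * L / 2) * N ^ 2) ≤ sμ * sb ^ 2 :=
    mul_le_mul_of_nonneg_left hA hsμ.le
  have h6 : sμ * sb ^ 2 ≤ sb * N := by
    have h61 : sμ * sb ≤ N := by nlinarith [mul_nonneg hsμ.le hsb0.le]
    nlinarith [mul_le_mul_of_nonneg_right h61 hsb0.le]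
  have hd1 : 0 ≤ sb - (1 - β * L / 2) * sμ * (β * N) := by
    have h7 : (1 - β * L / 2) * sμ * (β * N) * N ≤ sb * N := by nlinarith [h5, h6]
    have := le_of_mul_le_mul_right h7 hNpos
    linarith
  have h8 : 2 * ((1 - β * L / 2) * sμ) * (β * N) * sb ≤ β * (1 - β * L / 2) * N ^ 2 := by
    nlinarith [mul_le_mul_of_nonneg_left hN2
      (mul_nonneg (mul_nonneg hβ0.le hch.le) hN0)]
  have hd2 : a ≤ (sb - (1 - β * L / 2) * sμ * (β * N)) ^ 2 := by
    nlinarith [hdesc, sq_nonneg ((1 - β * L / 2) * sμ * (β * N)), h8]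
  have hsa : Real.sqrt a ≤ sb - (1 - β * L / 2) * sμ * (β * N) := by
    have := Real.sqrt_le_sqrt hd2
    rwa [Real.sqrt_sq hd1] at this
  linarith


lemma my_sqrt_pow {x : ℝ} (hx : 0 ≤ x) (j : ℕ) :
    Real.sqrt (x ^ j) = Real.sqrt x ^ j := by
  induction j with
  | zero => simp
  | succ j ih => rw [pow_succ, pow_succ, Real.sqrt_mul (pow_nonneg hx j), ih]

set_option maxHeartbeats 2000000 in
/-- quadratic growth with a `1/(1-βL/2)` loss, via a gradient-descent path
with step size `β`. -/
lemma pl_qg_beta (φ : E → ℝ) (G : E → E) (μ L : ℝ) (hμ : 0 < μ) (hμL : μ ≤ L)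
    (hgrad : ∀ x, HasFDerivAt φ (innerSL ℝ (G x)) x)
    (hlip : ∀ x y, ‖G x - G y‖ ≤ L * ‖x - y‖)
    (hpl : ∀ x, φ x - (⨅ y, φ y) ≤ 1 / (2 * μ) * ‖G x‖ ^ 2)
    (hne : {z : E | ∀ y, φ z ≤ φ y}.Nonempty)
    (β : ℝ) (hβ0 : 0 < β) (hβL : β * L < 2) (x : E) :
    infDist x {z : E | ∀ y, φ z ≤ φ y}
      ≤ Real.sqrt (φ x - ⨅ y, φ y) / ((1 - β * L / 2) * Real.sqrt (μ / 2)) := by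
  obtain ⟨z₀, hz₀⟩ := hne
  have hL : 0 < L := lt_of_lt_of_le hμ hμL
  have hIlow : ∀ w, (⨅ y, φ y) ≤ φ w := by
    intro w
    have : (⨅ y, φ y) = φ z₀ :=
      le_antisymm (ciInf_le ⟨φ z₀, Set.forall_mem_range.2 hz₀⟩ z₀) (le_ciInf hz₀)
    rw [this]; exact hz₀ w
  set I := ⨅ y, φ y with hI
  -- the gradient descent path
  set y : ℕ → E := fun j => (fun w => w - β • G w)^[j] x with hy
  have hy0 : y 0 = x := rfl
  have hysucc : ∀ j, y (j + 1) = y j - β • G (y j) := by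
    intro j
    simp [hy, Function.iterate_succ_apply']
  set gap : ℕ → ℝ := fun j => φ (y j) - I with hgap
  have hgap_nonneg : ∀ j, 0 ≤ gap j := fun j => sub_nonneg.2 (hIlow (y j))
  set θ : ℝ := 1 - β * μ * (2 - β * L) with hθ
  have h2L : 0 < 2 - β * L := by linarith
  have hθ0 : 0 ≤ θ := by
    nlinarith [sq_nonneg (1 - β * L),
      mul_le_mul_of_nonneg_right hμL (mul_nonneg hβ0.le h2L.le)]
  have hθ1 : θ < 1 := by nlinarith [mul_pos (mul_pos hβ0 hμ) h2L]
  have hcontract : ∀ j, gap (j + 1) ≤ θ * gap j := by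
    intro j
    show φ (y (j + 1)) - I ≤ θ * (φ (y j) - I)
    rw [hysucc j]
    exact gd_step φ G μ L hμ hμL hgrad hlip hpl hIlow β hβ0 hβL.le (y j)
  have hgap_geom : ∀ j, gap j ≤ θ ^ j * gap 0 := by
    intro j
    induction j with
    | zero => simp
    | succ j ih =>
      calc gap (j + 1) ≤ θ * gap j := hcontract j
        _ ≤ θ * (θ ^ j * gap 0) := by
            exact mul_le_mul_of_nonneg_left ih hθ0
        _ = θ ^ (j + 1) * gap 0 := by ring
  -- square roots
  set s : ℕ → ℝ := fun j => Real.sqrt (gap j) with hs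
  set c : ℝ := (1 - β * L / 2) * Real.sqrt (μ / 2) with hc
  have hch : 0 < 1 - β * L / 2 := by nlinarith
  have hsμ : 0 < Real.sqrt (μ / 2) := Real.sqrt_pos.2 (by linarith)
  have hc0 : 0 < c := mul_pos hch hsμ
  -- Key step inequality
  have hkey : ∀ j, c * ‖y (j + 1) - y j‖ ≤ s j - s (j + 1) := by
    intro j
    rcases eq_or_lt_of_le (hgap_nonneg j) with h0 | hpos
    · -- gap j = 0 : y j is a minimizer, gradient vanishes
      have hmin : ∀ w, φ (y j) ≤ φ w := by
        intro w
        have : φ (y j) = I := by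
          have := h0.symm
          simpa [hgap, sub_eq_zero] using this
        rw [this]; exact hIlow w
      have hGz : G (y j) = 0 := grad_zero_at_min φ G hgrad hmin
      have hyy : y (j + 1) = y j := by rw [hysucc j, hGz]; simp
      have hg : gap (j + 1) = gap j := by
        show φ (y (j + 1)) - I = φ (y j) - I
        rw [hyy]
      have hss : s (j + 1) = s j := by
        show Real.sqrt (gap (j + 1)) = Real.sqrt (gap j)
        rw [hg]
      rw [hyy, hss]
      simp
    · -- gap j > 0 : use sqrt_decrease
      set b := gap j with hbdef
      set a := gap (j + 1) with hadef
      set N := ‖G (y j)‖ with hN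
      have hN0 : 0 ≤ N := norm_nonneg _
      have hstep : ‖y (j + 1) - y j‖ = β * N := by
        rw [hysucc j]
        simp [norm_smul, abs_of_nonneg hβ0.le, hN]
      have hdesc : a ≤ b - β * (1 - β * L / 2) * N ^ 2 := by
        have hq := quad_upper φ G L hL.le hgrad hlip (y j) (y j - β • G (y j))
        have h1 : y j - β • G (y j) - y j = -(β • G (y j)) := by abel
        rw [h1] at hq
        have h2 : (inner ℝ (G (y j)) (-(β • G (y j))) : ℝ) = -(β * N ^ 2) := by
          rw [inner_neg_right, real_inner_smul_right, real_inner_self_eq_norm_sq]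
        have h3 : ‖-(β • G (y j))‖ ^ 2 = β ^ 2 * N ^ 2 := by
          rw [norm_neg, norm_smul, mul_pow, Real.norm_eq_abs, sq_abs]
        rw [h2, h3] at hq
        have ha' : a = φ (y j - β • G (y j)) - I := by
          rw [hadef]
          show φ (y (j + 1)) - I = _
          rw [hysucc j]
        have hb' : b = φ (y j) - I := rfl
        rw [ha', hb']
        nlinarith [hq]
      have hNb : 2 * μ * b ≤ N ^ 2 := by
        have hb' : b = φ (y j) - I := rfl
        have := hpl (y j)
        have h2μ : 0 < 2 * μ := by linarith
        rw [div_mul_eq_mul_div, one_mul, le_div_iff₀ h2μ] at this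
        nlinarith [this]
      have hres := sqrt_decrease a b N β L μ hβ0 hch hμ hdesc hNb
        (hgap_nonneg (j + 1)) hpos hN0
      have hsj : s j = Real.sqrt b := rfl
      have hsj1 : s (j + 1) = Real.sqrt a := rfl
      rw [hstep, hsj, hsj1, hc]
      linarith
  -- geometric decay of s
  have hs_nonneg : ∀ j, 0 ≤ s j := fun j => Real.sqrt_nonneg _
  have hsθ1 : Real.sqrt θ < 1 := by
    rw [show (1 : ℝ) = Real.sqrt 1 by simp]
    exact Real.sqrt_lt_sqrt hθ0 hθ1
  have hsθ0 : 0 ≤ Real.sqrt θ := Real.sqrt_nonneg _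
  have hs_geom : ∀ j, s j ≤ Real.sqrt (gap 0) * Real.sqrt θ ^ j := by
    intro j
    have h1 : s j ≤ Real.sqrt (θ ^ j * gap 0) := Real.sqrt_le_sqrt (hgap_geom j)
    rw [Real.sqrt_mul (pow_nonneg hθ0 j), my_sqrt_pow hθ0 j] at h1
    linarith [h1]
  -- Cauchy sequence
  have hcauchy : CauchySeq y := by
    apply cauchySeq_of_le_geometric (Real.sqrt θ) (Real.sqrt (gap 0) / c) hsθ1
    intro j
    rw [dist_eq_norm, norm_sub_rev]
    have hk := hkey j
    have h1 : ‖y (j + 1) - y j‖ ≤ s j / c := by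
      rw [le_div_iff₀ hc0]
      calc ‖y (j + 1) - y j‖ * c = c * ‖y (j + 1) - y j‖ := by ring
        _ ≤ s j - s (j + 1) := hk
        _ ≤ s j := by linarith [hs_nonneg (j + 1)]
    calc ‖y (j + 1) - y j‖ ≤ s j / c := h1
      _ ≤ Real.sqrt (gap 0) * Real.sqrt θ ^ j / c := by
          gcongr
          exact hs_geom j
      _ = Real.sqrt (gap 0) / c * Real.sqrt θ ^ j := by ring
  obtain ⟨z, hz⟩ := cauchySeq_tendsto_of_complete hcauchy
  -- partial length bound
  have hlen : ∀ j, dist x (y j) ≤ (s 0 - s j) / c := by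
    intro j
    induction j with
    | zero => rw [hy0]; simp
    | succ j ih =>
      have hk := hkey j
      have h1 : dist (y j) (y (j + 1)) ≤ (s j - s (j + 1)) / c := by
        rw [dist_eq_norm, norm_sub_rev, le_div_iff₀ hc0]
        calc ‖y (j + 1) - y j‖ * c = c * ‖y (j + 1) - y j‖ := by ring
          _ ≤ s j - s (j + 1) := hk
      calc dist x (y (j + 1)) ≤ dist x (y j) + dist (y j) (y (j + 1)) := dist_triangle _ _ _
        _ ≤ (s 0 - s j) / c + (s j - s (j + 1)) / c := add_le_add ih h1
        _ = (s 0 - s (j + 1)) / c := by ring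
  have hdxz : dist x z ≤ s 0 / c := by
    apply le_of_tendsto' (tendsto_const_nhds.dist hz)
    intro j
    calc dist x (y j) ≤ (s 0 - s j) / c := hlen j
      _ ≤ s 0 / c := by
          gcongr
          linarith [hs_nonneg j]
  -- the limit is a minimizer
  have hφcont : Continuous φ := by
    rw [continuous_iff_continuousAt]
    exact fun w => (hgrad w).continuousAt
  have hub : Filter.Tendsto (fun j => θ ^ j * gap 0) Filter.atTop (nhds 0) := by
    simpa using (tendsto_pow_atTop_nhds_zero_of_lt_one hθ0 hθ1).mul_const (gap 0)
  have hgap0 : Filter.Tendsto gap Filter.atTop (nhds 0) :=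
    squeeze_zero hgap_nonneg hgap_geom hub
  have hφy : Filter.Tendsto (fun j => φ (y j)) Filter.atTop (nhds I) := by
    have : (fun j => φ (y j)) = fun j => gap j + I := by
      funext j
      show φ (y j) = φ (y j) - I + I
      ring
    rw [this]
    simpa using hgap0.add (tendsto_const_nhds (x := I))

  have hφz : φ z = I :=
    tendsto_nhds_unique ((hφcont.tendsto z).comp hz) hφy
  have hzmem : z ∈ {w : E | ∀ y, φ w ≤ φ y} := by
    intro w
    rw [hφz]
    exact hIlow w
  have hs0 : s 0 = Real.sqrt (φ x - ⨅ y, φ y) := by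
    show Real.sqrt (gap 0) = _
    have : gap 0 = φ x - I := by
      show φ (y 0) - I = φ x - I
      rw [hy0]
    rw [this]
  calc infDist x {w : E | ∀ y, φ w ≤ φ y} ≤ dist x z := infDist_le_dist_of_mem hzmem
    _ ≤ s 0 / c := hdxz
    _ = Real.sqrt (φ x - ⨅ y, φ y) / ((1 - β * L / 2) * Real.sqrt (μ / 2)) := by
        rw [hs0, hc]



/-- PL implies quadratic growth: `dist(x, X*) ≤ √(2(φ(x) − φ*)/μ)`. -/
lemma pl_qg (φ : E → ℝ) (G : E → E) (μ L : ℝ) (hμ : 0 < μ) (hμL : μ ≤ L)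
    (hgrad : ∀ x, HasFDerivAt φ (innerSL ℝ (G x)) x)
    (hlip : ∀ x y, ‖G x - G y‖ ≤ L * ‖x - y‖)
    (hpl : ∀ x, φ x - (⨅ y, φ y) ≤ 1 / (2 * μ) * ‖G x‖ ^ 2)
    (hne : {z : E | ∀ y, φ z ≤ φ y}.Nonempty) (x : E) :
    infDist x {z : E | ∀ y, φ z ≤ φ y}
      ≤ Real.sqrt (2 * (φ x - ⨅ y, φ y) / μ) := by
  have hL : 0 < L := lt_of_lt_of_le hμ hμL
  obtain ⟨z₀, hz₀⟩ := hne
  have hgapx : 0 ≤ φ x - ⨅ y, φ y := by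
    have hI : (⨅ y, φ y) = φ z₀ :=
      le_antisymm (ciInf_le ⟨φ z₀, Set.forall_mem_range.2 hz₀⟩ z₀) (le_ciInf hz₀)
    rw [hI]
    linarith [hz₀ x]
  set K := Real.sqrt (φ x - ⨅ y, φ y) with hK
  have hKrw : Real.sqrt (2 * (φ x - ⨅ y, φ y) / μ) = K / ((1 - 0) * Real.sqrt (μ / 2)) := by
    rw [hK, show (2 * (φ x - ⨅ y, φ y) / μ) = (φ x - ⨅ y, φ y) / (μ / 2) by
      field_simp]
    rw [Real.sqrt_div hgapx]
    norm_num
  rw [hKrw]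
  -- bound for each m
  have hbound : ∀ m : ℕ, infDist x {z : E | ∀ y, φ z ≤ φ y}
      ≤ K / ((1 - 1/((m:ℝ)+2)) * Real.sqrt (μ / 2)) := by
    intro m
    have hm2 : (0:ℝ) < (m:ℝ) + 2 := by positivity
    have hβ0 : 0 < 2 / (L * ((m:ℝ)+2)) := by positivity
    have hβL : 2 / (L * ((m:ℝ)+2)) * L < 2 := by
      rw [div_mul_eq_mul_div, div_lt_iff₀ (by positivity)]
      nlinarith
    have := pl_qg_beta φ G μ L hμ hμL hgrad hlip hpl ⟨z₀, hz₀⟩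
      (2 / (L * ((m:ℝ)+2))) hβ0 hβL x
    have heq : 1 - 2 / (L * ((m:ℝ)+2)) * L / 2 = 1 - 1/((m:ℝ)+2) := by
      field_simp
    rwa [heq] at this
  -- take the limit m → ∞
  have h2 : Filter.Tendsto (fun m : ℕ => (1:ℝ)/((m:ℝ)+2)) Filter.atTop (nhds 0) := by
    have h0 := (tendsto_one_div_atTop_nhds_zero_nat (𝕜 := ℝ)).comp (Filter.tendsto_add_atTop_nat 2)
    have : (fun m : ℕ => (1:ℝ)/((m:ℝ)+2)) = (fun n : ℕ => 1/(n:ℝ)) ∘ (fun m => m + 2) := by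
      funext m
      simp [Function.comp]
    rw [this]
    exact h0
  have hμs : Real.sqrt (μ / 2) ≠ 0 := by positivity
  have hlim : Filter.Tendsto
      (fun m : ℕ => K / ((1 - 1/((m:ℝ)+2)) * Real.sqrt (μ / 2))) Filter.atTop
      (nhds (K / ((1 - 0) * Real.sqrt (μ / 2)))) := by
    apply Filter.Tendsto.div tendsto_const_nhds
    · exact (tendsto_const_nhds.sub h2).mul tendsto_const_nhds
    · have : 0 < (1 - 0) * Real.sqrt (μ / 2) := by positivity
      exact this.ne'
  exact ge_of_tendsto' hlim hbound


lemma le_infDist'' {s : Set E} (hs : s.Nonempty) {x : E} {a : ℝ}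
    (h : ∀ z ∈ s, a ≤ dist x z) : a ≤ infDist x s := by
  rw [infDist_eq_iInf]
  haveI := hs.to_subtype
  exact le_ciInf fun z => h z z.2

/-- `C` gradient steps contract the distance to the solution set. -/
lemma contraction (φ : E → ℝ) (G : E → E) (μ L : ℝ) (hμ : 0 < μ) (hμL : μ ≤ L)
    (hgrad : ∀ x, HasFDerivAt φ (innerSL ℝ (G x)) x)
    (hlip : ∀ x y, ‖G x - G y‖ ≤ L * ‖x - y‖)
    (hpl : ∀ x, φ x - (⨅ y, φ y) ≤ 1 / (2 * μ) * ‖G x‖ ^ 2)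
    (hne : {z : E | ∀ y, φ z ≤ φ y}.Nonempty)
    (α : ℝ) (hα0 : 0 < α) (hαL : α * L ≤ 2) (C : ℕ) (w : E) :
    infDist ((fun y => y - α • G y)^[C] w) {z : E | ∀ y, φ z ≤ φ y}
      ≤ Real.sqrt (L / μ * (1 - α * μ * (2 - α * L)) ^ C)
        * infDist w {z : E | ∀ y, φ z ≤ φ y} := by
  obtain ⟨z₀, hz₀⟩ := hne
  have hL : 0 < L := lt_of_lt_of_le hμ hμL
  have hI : (⨅ y, φ y) = φ z₀ :=
    le_antisymm (ciInf_le ⟨φ z₀, Set.forall_mem_range.2 hz₀⟩ z₀) (le_ciInf hz₀)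
  have hIlow : ∀ y, (⨅ y, φ y) ≤ φ y := fun y => hI ▸ hz₀ y
  set I := ⨅ y, φ y with hIdef
  set θ : ℝ := 1 - α * μ * (2 - α * L) with hθ
  have hθ0 : 0 ≤ θ := by
    nlinarith [sq_nonneg (1 - α * L),
      mul_le_mul_of_nonneg_right hμL (mul_nonneg hα0.le (by linarith : (0:ℝ) ≤ 2 - α * L))]
  -- gap after C iterations
  have hiter : ∀ m : ℕ, φ ((fun y => y - α • G y)^[m] w) - I ≤ θ ^ m * (φ w - I) := by
    intro m
    induction m with
    | zero => simp
    | succ m ih =>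
      rw [Function.iterate_succ_apply']
      calc φ ((fun y => y - α • G y) ((fun y => y - α • G y)^[m] w)) - I
          ≤ θ * (φ ((fun y => y - α • G y)^[m] w) - I) :=
            gd_step φ G μ L hμ hμL hgrad hlip hpl hIlow α hα0 hαL _
        _ ≤ θ * (θ ^ m * (φ w - I)) := mul_le_mul_of_nonneg_left ih hθ0
        _ = θ ^ (m + 1) * (φ w - I) := by ring
  -- smoothness upper bound at any minimizer
  have hsmooth : ∀ z ∈ {z : E | ∀ y, φ z ≤ φ y}, φ w - I ≤ L / 2 * dist w z ^ 2 := by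
    intro z hz
    have hGz : G z = 0 := grad_zero_at_min φ G hgrad hz
    have hq := quad_upper φ G L hL.le hgrad hlip z w
    rw [hGz] at hq
    simp only [inner_zero_left, add_zero] at hq
    have hIz : I = φ z :=
      le_antisymm (ciInf_le ⟨φ z₀, Set.forall_mem_range.2 hz₀⟩ z) (le_ciInf hz)
    rw [dist_eq_norm]
    nlinarith [hq]
  -- combine via quadratic growth
  have hmain : ∀ z ∈ {z : E | ∀ y, φ z ≤ φ y},
      infDist ((fun y => y - α • G y)^[C] w) {z : E | ∀ y, φ z ≤ φ y}
        ≤ Real.sqrt (L / μ * θ ^ C) * dist w z := by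
    intro z hz
    have h1 := pl_qg φ G μ L hμ hμL hgrad hlip hpl ⟨z₀, hz₀⟩ ((fun y => y - α • G y)^[C] w)
    have h2 : 2 * (φ ((fun y => y - α • G y)^[C] w) - I) / μ
        ≤ L / μ * θ ^ C * dist w z ^ 2 := by
      have h3 := hiter C
      have h4 := hsmooth z hz
      have h5 : φ ((fun y => y - α • G y)^[C] w) - I ≤ θ ^ C * (L / 2 * dist w z ^ 2) :=
        h3.trans (mul_le_mul_of_nonneg_left h4 (pow_nonneg hθ0 C))
      rw [div_le_iff₀ hμ]
      calc 2 * (φ ((fun y => y - α • G y)^[C] w) - I)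
          ≤ 2 * (θ ^ C * (L / 2 * dist w z ^ 2)) := by linarith
        _ = L * θ ^ C * dist w z ^ 2 := by ring
        _ = L / μ * θ ^ C * dist w z ^ 2 * μ := by field_simp
    calc infDist ((fun y => y - α • G y)^[C] w) {z : E | ∀ y, φ z ≤ φ y}
        ≤ Real.sqrt (2 * (φ ((fun y => y - α • G y)^[C] w) - I) / μ) := h1
      _ ≤ Real.sqrt (L / μ * θ ^ C * dist w z ^ 2) := Real.sqrt_le_sqrt h2
      _ = Real.sqrt (L / μ * θ ^ C) * dist w z := by
          rw [Real.sqrt_mul (by positivity) (dist w z ^ 2), Real.sqrt_sq dist_nonneg]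
  -- pass to the infimum over z
  set M := Real.sqrt (L / μ * θ ^ C) with hM
  have hM0 : 0 ≤ M := Real.sqrt_nonneg _
  rcases eq_or_lt_of_le hM0 with hM0' | hM0'
  · have h7 := hmain z₀ hz₀
    rw [← hM0'] at h7 ⊢
    rw [zero_mul] at h7 ⊢
    exact h7
  · have h6 : infDist ((fun y => y - α • G y)^[C] w) {z : E | ∀ y, φ z ≤ φ y} / M
        ≤ infDist w {z : E | ∀ y, φ z ≤ φ y} := by
      apply le_infDist'' ⟨z₀, hz₀⟩
      intro z hz
      rw [div_le_iff₀ hM0']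
      calc infDist ((fun y => y - α • G y)^[C] w) {z : E | ∀ y, φ z ≤ φ y}
          ≤ M * dist w z := hmain z hz
        _ = dist w z * M := by ring
    rw [← div_le_iff₀' hM0']
    exact h6

end SharpAux

/-- One-round recursion for the SHARP tracking error under the PL condition:
`dist(x̂_k, X*(t_k)) ≤ √(κθ^C)·dist(x̂_{k−1}, X*(t_{k−1})) + (v + L₁₁/μ)h`,
where `κ = L/μ` and `θ = 1 − αμ(2 − αL)`. -/
theorem sharp_pl_distance_recursion
    (n : ℕ) (h : ℝ) (hh : 0 < h)
    (f : EuclideanSpace ℝ (Fin n) → ℝ → ℝ)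
    (g : EuclideanSpace ℝ (Fin n) → ℝ → EuclideanSpace ℝ (Fin n))
    (hgrad : ∀ (x : EuclideanSpace ℝ (Fin n)) (t : ℝ),
      HasFDerivAt (fun y => f y t) (innerSL ℝ (g x t)) x)
    (μ L L11 : ℝ) (hμ : 0 < μ) (hμL : μ ≤ L) (hL11 : 0 ≤ L11)
    (hlipx : ∀ (x y : EuclideanSpace ℝ (Fin n)) (t : ℝ),
      ‖g x t - g y t‖ ≤ L * ‖x - y‖)
    (hpl : ∀ (x : EuclideanSpace ℝ (Fin n)) (t : ℝ),
      f x t - (⨅ y, f y t) ≤ 1 / (2 * μ) * ‖g x t‖ ^ 2)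
    (hne : ∀ t : ℝ, {x | ∀ y, f x t ≤ f y t}.Nonempty)
    (hlipt : ∀ (x : EuclideanSpace ℝ (Fin n)) (s t : ℝ),
      ‖g x s - g x t‖ ≤ L11 * |s - t|)
    (α : ℝ) (hα0 : 0 < α) (hα2 : α < 2 / L)
    (C : ℕ) (hC : 1 ≤ C) (v : ℝ) (hv : 0 ≤ v)
    (xhat xc : ℕ → EuclideanSpace ℝ (Fin n))
    (hacc : ∀ k : ℕ, 1 ≤ k → ‖xhat k - xc (k - 1)‖ ≤ v * h)
    (hcorr : ∀ k : ℕ, 1 ≤ k →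
      xc k = (fun y => y - α • g y ((k : ℝ) * h))^[C] (xhat k)) :
    ∀ k : ℕ, 2 ≤ k →
      Metric.infDist (xhat k) {x | ∀ y, f x ((k : ℝ) * h) ≤ f y ((k : ℝ) * h)}
        ≤ Real.sqrt (L / μ * (1 - α * μ * (2 - α * L)) ^ C)
            * Metric.infDist (xhat (k - 1))
                {x | ∀ y, f x (((k - 1 : ℕ) : ℝ) * h) ≤ f y (((k - 1 : ℕ) : ℝ) * h)}
          + (v + L11 / μ) * h := by
  intro k hk
  have hk1 : 1 ≤ k - 1 := by omega
  have hL : 0 < L := lt_of_lt_of_le hμ hμL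
  have hαL : α * L < 2 := by
    rw [lt_div_iff₀ hL] at hα2
    linarith
  set t : ℝ := (k : ℝ) * h with ht
  set s : ℝ := ((k - 1 : ℕ) : ℝ) * h with hs
  set Xt : Set (EuclideanSpace ℝ (Fin n)) := {x | ∀ y, f x t ≤ f y t} with hXt
  set Xs : Set (EuclideanSpace ℝ (Fin n)) := {x | ∀ y, f x s ≤ f y s} with hXs
  have hts : t - s = h := by
    rw [ht, hs]
    have : ((k - 1 : ℕ) : ℝ) = (k : ℝ) - 1 := by
      push_cast [Nat.cast_sub (by omega : 1 ≤ k)]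
      ring
    rw [this]
    ring
  -- Step A: acceptance
  have hA : infDist (xhat k) Xt ≤ infDist (xc (k - 1)) Xt + v * h := by
    calc infDist (xhat k) Xt ≤ infDist (xc (k - 1)) Xt + dist (xhat k) (xc (k - 1)) :=
          infDist_le_infDist_add_dist
      _ ≤ infDist (xc (k - 1)) Xt + v * h := by
          have := hacc k (by omega)
          rw [dist_eq_norm]
          linarith
  -- Step B: drift of the solution set
  have hB : ∀ z ∈ Xs, infDist z Xt ≤ L11 * h / μ := by
    intro z hz
    have hgz0 : g z s = 0 :=
      grad_zero_at_min (fun x => f x s) (fun x => g x s) (fun x => hgrad x s) hz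
    have hgzt : ‖g z t‖ ≤ L11 * h := by
      have h1 : ‖g z t - g z s‖ ≤ L11 * |t - s| := hlipt z t s
      rw [hgz0, sub_zero, hts, abs_of_pos hh] at h1
      exact h1
    have h2 := pl_qg (fun x => f x t) (fun x => g x t) μ L hμ hμL
      (fun x => hgrad x t) (fun x y => hlipx x y t) (fun x => hpl x t) (hne t) z
    have h3 : 2 * (f z t - ⨅ y, f y t) / μ ≤ (L11 * h / μ) ^ 2 := by
      have h4 : f z t - (⨅ y, f y t) ≤ 1 / (2 * μ) * (L11 * h) ^ 2 := by
        refine (hpl z t).trans ?_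
        have : ‖g z t‖ ^ 2 ≤ (L11 * h) ^ 2 := by
          nlinarith [norm_nonneg (g z t)]
        have h5 : 0 ≤ 1 / (2 * μ) := by positivity
        nlinarith
      calc 2 * (f z t - ⨅ y, f y t) / μ ≤ 2 * (1 / (2 * μ) * (L11 * h) ^ 2) / μ := by
            gcongr
        _ = (L11 * h / μ) ^ 2 := by
            field_simp
    calc infDist z Xt ≤ Real.sqrt (2 * (f z t - ⨅ y, f y t) / μ) := h2
      _ ≤ Real.sqrt ((L11 * h / μ) ^ 2) := Real.sqrt_le_sqrt h3
      _ = L11 * h / μ := Real.sqrt_sq (by positivity)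
  -- Step C: compare infDist at times t and s
  have hC : infDist (xc (k - 1)) Xt ≤ infDist (xc (k - 1)) Xs + L11 * h / μ := by
    have h6 : infDist (xc (k - 1)) Xt - L11 * h / μ ≤ infDist (xc (k - 1)) Xs := by
      apply le_infDist'' (hne s)
      intro z hz
      have h7 : infDist (xc (k - 1)) Xt ≤ infDist z Xt + dist (xc (k - 1)) z :=
        infDist_le_infDist_add_dist
      have h8 := hB z hz
      linarith
    linarith
  -- Step D: contraction of the correction steps
  have hD : infDist (xc (k - 1)) Xs
      ≤ Real.sqrt (L / μ * (1 - α * μ * (2 - α * L)) ^ C) * infDist (xhat (k - 1)) Xs := by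
    rw [hcorr (k - 1) hk1]
    exact contraction (fun x => f x s) (fun x => g x s) μ L hμ hμL
      (fun x => hgrad x s) (fun x y => hlipx x y s) (fun x => hpl x s) (hne s)
      α hα0 hαL.le C (xhat (k - 1))
  have hring : (v + L11 / μ) * h = v * h + L11 * h / μ := by ring
  calc infDist (xhat k) Xt ≤ infDist (xc (k - 1)) Xt + v * h := hA
    _ ≤ infDist (xc (k - 1)) Xs + L11 * h / μ + v * h := by linarith
    _ ≤ Real.sqrt (L / μ * (1 - α * μ * (2 - α * L)) ^ C) * infDist (xhat (k - 1)) Xs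
        + L11 * h / μ + v * h := by linarith
    _ = Real.sqrt (L / μ * (1 - α * μ * (2 - α * L)) ^ C) * infDist (xhat (k - 1)) Xs
        + (v + L11 / μ) * h := by rw [hring]; ring
end
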